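/- arXiv:1604.07523 — 14 statements merged into one kernel-verified Lean document; each statement's English description precedes it below -/
import Mathlib

section
/- Let X be a topological space, λ a nonzero ordinal, and (F_α)_{α ≤ λ} a transfinite sequence of closed subsets of X such that F_0 = X, F_λ = ∅, F_{α+1} ⊆ F_α for every α < λ, and F_α = ⋂_{β<α} F_β for every limit ordinal α ≤ λ. Let Y be the topological sum ⊕_{α<λ} (F_α ∖ F_{α+1}) of the subspaces F_α ∖ F_{α+1} of X. Then the natural map i : X → Y, sending each point x ∈ F_α ∖ F_{α+1} to the corresponding point of the α-th summand, is a well-defined bijection and is weakly discontinuous. -/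
open Set Function Topology

/-- A map `f : X → Y` is weakly discontinuous if every nonempty subset `A ⊆ X`
contains a nonempty subset `U`, open in the subspace topology of `A`, on which
`f` restricts to a continuous map. -/
def WeaklyDiscontinuous {X Y : Type*} [TopologicalSpace X] [TopologicalSpace Y]
    (f : X → Y) : Prop :=
  ∀ A : Set X, A.Nonempty → ∃ U : Set X, U ⊆ A ∧ U.Nonempty ∧
    (∃ V : Set X, IsOpen V ∧ U = A ∩ V) ∧ ContinuousOn f U

/-- Topological spaces `X` and `Y` are weakly homeomorphic if there is a bijection
`f : X → Y` such that both `f` and its inverse are weakly discontinuous. -/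
def WeaklyHomeomorphic (X : Type*) (Y : Type*) [TopologicalSpace X] [TopologicalSpace Y] :
    Prop :=
  ∃ (f : X → Y) (g : Y → X), Function.LeftInverse g f ∧ Function.RightInverse g f ∧
    WeaklyDiscontinuous f ∧ WeaklyDiscontinuous g

universe u v

theorem weaklyDiscontinuous_of_transfinite_decomposition
    {X : Type u} [TopologicalSpace X] (lam : Ordinal.{v}) (hlam : lam ≠ 0)
    (F : Ordinal.{v} → Set X)
    (hclosed : ∀ α ≤ lam, IsClosed (F α))
    (h0 : F 0 = Set.univ) (htop : F lam = ∅)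
    (hmono : ∀ α < lam, F (α + 1) ⊆ F α)
    (hlim : ∀ α ≤ lam, Order.IsSuccLimit α → F α = ⋂ β < α, F β) :
    ∃ i : X → (α : {a : Ordinal.{v} // a < lam}) × ↥(F α.1 \ F (α.1 + 1)),
      (∀ x : X, ((i x).2 : X) = x) ∧ Function.Bijective i ∧ WeaklyDiscontinuous i := by

  classical
  -- antitonicity on [0, lam]
  have hanti : ∀ γ ≤ lam, ∀ β ≤ γ, F γ ⊆ F β := by
    intro γ
    induction γ using Ordinal.limitRecOn with
    | zero =>
      intro _ β hβ
      simp [nonpos_iff_eq_zero.mp hβ]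
    | add_one δ ih =>
      intro hγ β hβ
      rcases eq_or_lt_of_le hβ with h | hlt
      · rw [h]
      · have hβδ : β ≤ δ := Order.lt_succ_iff.mp hlt
        have hδ : δ < lam := lt_of_lt_of_le (Order.lt_succ δ) hγ
        have h1 : F (δ + 1) ⊆ F δ := hmono δ hδ
        rw [Ordinal.add_one_eq_succ] at h1
        exact h1.trans (ih hδ.le β hβδ)
    | limit δ hδlim ihδ =>
      intro hγ β hβ
      rcases eq_or_lt_of_le hβ with h | hlt
      · rw [h]
      · rw [hlim δ hγ hδlim]
        intro x hx
        exact mem_iInter₂.mp hx β hlt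
  -- each point has a well-defined rank
  have key : ∀ x : X, ∃ δ, δ < lam ∧ x ∈ F δ ∧ x ∉ F (δ + 1) ∧
      ∀ γ ≤ lam, x ∉ F γ → δ + 1 ≤ γ := by
    intro x
    set S : Set Ordinal.{v} := {α | x ∉ F α} with hS
    have hSne : S.Nonempty := ⟨lam, by simp [hS, htop]⟩
    set μ := sInf S with hμ
    have hμS : x ∉ F μ := csInf_mem hSne
    have hμle : μ ≤ lam := csInf_le' (by simp [hS, htop] : lam ∈ S)
    have hlower : ∀ β < μ, x ∈ F β := by
      intro β hβ
      by_contra hxβ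
      have hm : β ∈ S := hxβ
      exact absurd (csInf_le' hm) (not_le.mpr hβ)
    rcases (Ordinal.zero_or_succ_or_isSuccLimit μ).imp_right
      (Or.imp_left fun ⟨a, h⟩ => (⟨a, h.symm⟩ : ∃ a, μ = Order.succ a)) with h0' | ⟨δ, hδ⟩ | hlimμ
    · exact absurd hμS (by rw [h0', h0]; exact fun h => h (mem_univ x))
    · refine ⟨δ, ?_, ?_, ?_, ?_⟩
      · have : δ < μ := by rw [hδ]; exact Order.lt_succ δ
        exact lt_of_lt_of_le this hμle
      · exact hlower δ (by rw [hδ]; exact Order.lt_succ δ)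
      · rw [Ordinal.add_one_eq_succ, ← hδ]; exact hμS
      · intro γ _ hγ
        rw [Ordinal.add_one_eq_succ, ← hδ]
        exact csInf_le' (hγ : γ ∈ S)
    · exfalso
      apply hμS
      rw [hlim μ hμle hlimμ]
      exact mem_iInter₂.mpr fun β hβ => hlower β hβ
  choose d hd1 hd2 hd3 hd4 using key
  -- uniqueness of the rank
  have huniq : ∀ (x : X) (α : Ordinal.{v}), α < lam → x ∈ F α → x ∉ F (α + 1) → d x = α := by
    intro x α hα h1 h2
    have hle : d x ≤ α := by
      have := hd4 x (α + 1) (by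
        rw [Ordinal.add_one_eq_succ]; exact Order.succ_le_of_lt hα) h2
      rw [Ordinal.add_one_eq_succ, Ordinal.add_one_eq_succ] at this
      exact Order.succ_le_succ_iff.mp this
    rcases eq_or_lt_of_le hle with h | hlt
    · exact h
    · exfalso
      apply hd3 x
      have hsub : F α ⊆ F (d x + 1) := by
        apply hanti α hα.le
        rw [Ordinal.add_one_eq_succ]
        exact Order.succ_le_of_lt hlt
      exact hsub h1
  refine ⟨fun x => ⟨⟨d x, hd1 x⟩, ⟨x, hd2 x, hd3 x⟩⟩, fun x => rfl, ⟨?_, ?_⟩, ?_⟩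
  · -- injective
    intro x y h
    have := congrArg (fun p : (α : {a : Ordinal.{v} // a < lam}) × ↥(F α.1 \ F (α.1 + 1)) =>
      (p.2 : X)) h
    simpa using this
  · -- surjective
    rintro ⟨⟨α, hα⟩, ⟨x, hx1, hx2⟩⟩
    refine ⟨x, ?_⟩
    obtain rfl := huniq x α hα hx1 hx2
    rfl
  · -- weakly discontinuous
    intro A hA
    set T : Set Ordinal.{v} := {α | ¬ A ⊆ F α} with hT
    have hTne : T.Nonempty := ⟨lam, by
      simp only [hT, mem_setOf_eq, htop]
      intro h
      exact absurd (h hA.choose_spec) (notMem_empty _)⟩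
    have hlamT : lam ∈ T := by
      simp only [hT, mem_setOf_eq, htop]
      intro h
      exact absurd (h hA.choose_spec) (notMem_empty _)
    set μ := sInf T with hμ
    have hμT : ¬ A ⊆ F μ := csInf_mem hTne
    have hμle : μ ≤ lam := csInf_le' hlamT
    have hlower : ∀ β < μ, A ⊆ F β := by
      intro β hβ
      by_contra hβT
      have hm : β ∈ T := hβT
      exact absurd (csInf_le' hm) (not_le.mpr hβ)
    rcases (Ordinal.zero_or_succ_or_isSuccLimit μ).imp_right
      (Or.imp_left fun ⟨a, h⟩ => (⟨a, h.symm⟩ : ∃ a, μ = Order.succ a)) with h0' | ⟨β, hβ⟩ | hlimμ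
    · exact absurd hμT (by rw [h0', h0]; exact fun h => h (subset_univ A))
    · -- μ = succ β
      have hβμ : β < μ := by rw [hβ]; exact Order.lt_succ β
      have hβlam : β < lam := lt_of_lt_of_le hβμ hμle
      have hAβ : A ⊆ F β := hlower β hβμ
      have hμeq : μ = β + 1 := by rw [hβ, Ordinal.add_one_eq_succ]
      have hnsub : ¬ A ⊆ F (β + 1) := by rw [← hμeq]; exact hμT
      have hβ1le : β + 1 ≤ lam := by rw [← hμeq]; exact hμle
      refine ⟨A ∩ (F (β + 1))ᶜ, inter_subset_left, ?_, ⟨(F (β + 1))ᶜ,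
        (hclosed (β + 1) hβ1le).isOpen_compl, rfl⟩, ?_⟩
      · obtain ⟨x, hxA, hxF⟩ := not_subset.mp hnsub
        exact ⟨x, hxA, hxF⟩
      · rw [continuousOn_iff_continuous_restrict]
        have hmem : ∀ u : (A ∩ (F (β + 1))ᶜ : Set X), (u : X) ∈ F β \ F (β + 1) :=
          fun u => ⟨hAβ u.2.1, u.2.2⟩
        have heq : (A ∩ (F (β + 1))ᶜ : Set X).restrict
              (fun x => (⟨⟨d x, hd1 x⟩, ⟨x, hd2 x, hd3 x⟩⟩ :
                (α : {a : Ordinal.{v} // a < lam}) × ↥(F α.1 \ F (α.1 + 1)))) =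
            (Sigma.mk (⟨β, hβlam⟩ : {a : Ordinal.{v} // a < lam})) ∘
              (fun u => (⟨u.1, hmem u⟩ : ↥(F β \ F (β + 1)))) := by
          funext u
          have hdu : d (u : X) = β := huniq u β hβlam (hmem u).1 (hmem u).2
          simp only [restrict, comp_apply]
          have hgen : ∀ (a b : {a : Ordinal.{v} // a < lam}) (x : X)
              (hx : x ∈ F a.1 \ F (a.1 + 1)) (hy : x ∈ F b.1 \ F (b.1 + 1)), a = b →
              (⟨a, ⟨x, hx⟩⟩ : (α : {a : Ordinal.{v} // a < lam}) × ↥(F α.1 \ F (α.1 + 1))) =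
                ⟨b, ⟨x, hy⟩⟩ := by
            rintro a b x hx hy rfl; rfl
          exact hgen _ _ _ _ _ (Subtype.ext hdu)
        have hc : Continuous ((Sigma.mk (⟨β, hβlam⟩ : {a : Ordinal.{v} // a < lam})) ∘
              (fun u => (⟨u.1, hmem u⟩ : ↥(F β \ F (β + 1))))) :=
          (continuous_sigmaMk (σ := fun α : {a : Ordinal.{v} // a < lam} => ↥(F α.1 \ F (α.1 + 1)))).comp
            (Continuous.subtype_mk continuous_subtype_val _)
        rw [← heq] at hc
        exact hc
    · exfalso
      apply hμT
      rw [hlim μ hμle hlimμ]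
      exact subset_iInter₂ fun β hβ => hlower β hβ
end

section
/- Let X be a Hausdorff paracompact topological space in which every open subset is an Fσ-set (i.e., X is perfectly paracompact), let Y be a topological space, and let f : X → Y be a weakly discontinuous map. Then there exists a countable cover of X by closed subsets C such that the restriction f|C : C → Y is continuous for every member C of the cover. -/
open Set Function Topology

/-- `Z` admits a countable cover by closed sets on which `f` is continuous. -/
def WDDecomp {X Y : Type*} [TopologicalSpace X] [TopologicalSpace Y]
    (f : X → Y) (Z : Set X) : Prop :=
  ∃ C : ℕ → Set X, (∀ n, IsClosed (C n)) ∧ (⋃ n, C n) = Z ∧ ∀ n, ContinuousOn f (C n)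

/-- If every closed subset of every member of a family `𝒪` of open sets has a countable
closed decomposition, then so does every closed subset of the union `⋃₀ 𝒪`. -/
lemma wdDecomp_sUnion {X Y : Type*} [TopologicalSpace X] [TopologicalSpace Y]
    [T2Space X] [ParacompactSpace X] (f : X → Y)
    (𝒪 : Set (Set X)) (hO : ∀ O ∈ 𝒪, IsOpen O)
    (hg : ∀ O ∈ 𝒪, ∀ Z : Set X, IsClosed Z → Z ⊆ O → WDDecomp f Z)
    {Z : Set X} (hZ : IsClosed Z) (hZ𝒪 : Z ⊆ ⋃₀ 𝒪) : WDDecomp f Z := by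
  classical
  -- index type: members of 𝒪
  set u : 𝒪 → Set X := fun O => (O : Set X) with hu
  have hZu : Z ⊆ ⋃ i, u i := by
    rwa [← sUnion_eq_iUnion]
  obtain ⟨v, hvo, hZv, hvlf, hvu⟩ :=
    precise_refinement_set hZ u (fun i => hO i i.2) hZu
  obtain ⟨w, hZw, hwo, hwv⟩ :=
    exists_subset_iUnion_closure_subset hZ hvo (fun x _ => hvlf.point_finite x) hZv
  set E : 𝒪 → Set X := fun i => Z ∩ closure (w i) with hE
  have hEcl : ∀ i, IsClosed (E i) := fun i => hZ.inter isClosed_closure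
  have hEv : ∀ i, E i ⊆ v i := fun i => inter_subset_right.trans (hwv i)
  have hElf : LocallyFinite E := hvlf.subset hEv
  have hEsub : ∀ i, E i ⊆ u i := fun i => (hEv i).trans (hvu i)
  have hEcover : Z = ⋃ i, E i := by
    apply Subset.antisymm
    · intro x hx
      obtain ⟨i, hi⟩ := mem_iUnion.1 (hZw hx)
      exact mem_iUnion.2 ⟨i, hx, subset_closure hi⟩
    · exact iUnion_subset fun i => inter_subset_left
  choose C hCcl hCun hCco using fun i : 𝒪 => hg i i.2 (E i) (hEcl i) (hEsub i)
  have hCE : ∀ i n, C i n ⊆ E i := fun i n => (hCun i) ▸ subset_iUnion (C i) n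
  refine ⟨fun n => ⋃ i, C i n, fun n => ?_, ?_, fun n => ?_⟩
  · exact (hElf.subset fun i => hCE i n).isClosed_iUnion fun i => hCcl i n
  · rw [iUnion_comm]
    rw [hEcover]
    exact iUnion_congr fun i => hCun i
  · exact (hElf.subset fun i => hCE i n).continuousOn_iUnion
      (fun i => hCcl i n) (fun i => hCco i n)

theorem weaklyDiscontinuous_countable_closed_cover
    {X Y : Type*} [TopologicalSpace X] [TopologicalSpace Y]
    [T2Space X] [ParacompactSpace X]
    (hFsigma : ∀ U : Set X, IsOpen U →
      ∃ C : ℕ → Set X, (∀ n, IsClosed (C n)) ∧ U = ⋃ n, C n)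
    (f : X → Y) (hf : WeaklyDiscontinuous f) :
    ∃ C : ℕ → Set X, (∀ n, IsClosed (C n)) ∧ (⋃ n, C n) = Set.univ ∧
      ∀ n, ContinuousOn f (C n) := by
  classical
  set 𝒪 : Set (Set X) :=
    {O | IsOpen O ∧ ∀ Z : Set X, IsClosed Z → Z ⊆ O → WDDecomp f Z} with h𝒪
  set Os : Set X := ⋃₀ 𝒪 with hOs
  have hOsopen : IsOpen Os := isOpen_sUnion fun O hO => hO.1
  have hgood : ∀ Z : Set X, IsClosed Z → Z ⊆ Os → WDDecomp f Z := fun Z hZ hZO =>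
    wdDecomp_sUnion f 𝒪 (fun O hO => hO.1) (fun O hO => hO.2) hZ hZO
  have huniv : Os = univ := by
    by_contra h
    have hne : (Osᶜ).Nonempty := nonempty_compl.2 h
    obtain ⟨U, hUsub, hUne, ⟨V, hVopen, hUV⟩, hUcont⟩ := hf Osᶜ hne
    have hmem : Os ∪ V ∈ 𝒪 := by
      refine ⟨hOsopen.union hVopen, ?_⟩
      intro Z hZ hZsub
      obtain ⟨K, hKcl, hKeq⟩ := hFsigma Os hOsopen
      have hKOs : ∀ n, K n ⊆ Os := fun n => hKeq ▸ subset_iUnion K n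
      have hpiece : ∀ n, WDDecomp f (Z ∩ K n) := fun n =>
        hgood _ (hZ.inter (hKcl n)) (inter_subset_right.trans (hKOs n))
      choose C hCcl hCun hCco using hpiece
      have hZU : Z ∩ Osᶜ ⊆ U := by
        rw [hUV]
        intro x hx
        rcases hZsub hx.1 with hx1 | hx1
        · exact absurd hx1 hx.2
        · exact ⟨hx.2, hx1⟩
      refine ⟨fun k => match k with
        | 0 => Z ∩ Osᶜ
        | (m + 1) => C (Nat.unpair m).1 (Nat.unpair m).2, fun k => ?_, ?_, fun k => ?_⟩
      · match k with
        | 0 => exact hZ.inter hOsopen.isClosed_compl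
        | (m + 1) => exact hCcl _ _
      · apply Subset.antisymm
        · apply iUnion_subset
          intro k
          match k with
          | 0 => exact inter_subset_left
          | (m + 1) =>
            refine (subset_iUnion (C (Nat.unpair m).1) (Nat.unpair m).2).trans ?_
            rw [hCun]
            exact inter_subset_left
        · intro x hx
          by_cases hxO : x ∈ Os
          · rw [hKeq] at hxO
            obtain ⟨n, hn⟩ := mem_iUnion.1 hxO
            have : x ∈ ⋃ m, C n m := by rw [hCun]; exact ⟨hx, hn⟩
            obtain ⟨m, hm⟩ := mem_iUnion.1 this
            refine mem_iUnion.2 ⟨Nat.pair n m + 1, ?_⟩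
            simpa [Nat.unpair_pair] using hm
          · exact mem_iUnion.2 ⟨0, hx, hxO⟩
      · match k with
        | 0 => exact hUcont.mono hZU
        | (m + 1) => exact hCco _ _
    have hsub : Os ∪ V ⊆ Os := subset_sUnion_of_mem hmem
    obtain ⟨x, hx⟩ := hUne
    have hx' := hUV ▸ hx
    exact hx'.1 (hsub (Or.inr hx'.2))
  obtain ⟨C, h1, h2, h3⟩ := hgood univ isClosed_univ (huniv ▸ subset_rfl)
  exact ⟨C, h1, h2, h3⟩
end

section
/- Let κ be a cardinal and let P be a property of topological spaces (in a fixed universe) that is closed-hereditary (every closed subspace and every finite subspace of a space with P has P), projective (the image of a space with P under a continuous surjection has P), and κ-summable (for every family (C_i)_{i∈I} of spaces with property P with |I| ≤ κ, the topological sum ⊕_{i∈I} C_i has P). Let f : X → Y be a surjective weakly discontinuous map between topological spaces, and assume there exists a cover 𝒞 of X with |𝒞| ≤ κ such that every member of 𝒞 is closed or finite and f|C is continuous for every C ∈ 𝒞. If X has property P, then Y has property P. -/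
open Set Function Topology

universe u

theorem image_of_weaklyDiscontinuous_has_property
    (κ : Cardinal.{u})
    (P : (Z : Type u) → [inst : TopologicalSpace Z] → Prop)
    (hclosedHer : ∀ (Z : Type u) [TopologicalSpace Z], P Z →
      ∀ A : Set Z, (IsClosed A ∨ A.Finite) → P ↥A)
    (hproj : ∀ (Z W : Type u) [TopologicalSpace Z] [TopologicalSpace W], P Z →
      ∀ g : Z → W, Continuous g → Function.Surjective g → P W)
    (hsum : ∀ (I : Type u) (C : I → Type u) [∀ i, TopologicalSpace (C i)],
      Cardinal.mk I ≤ κ → (∀ i, P (C i)) → P ((i : I) × C i))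
    {X Y : Type u} [TopologicalSpace X] [TopologicalSpace Y]
    (f : X → Y) (hsurj : Function.Surjective f) (hwd : WeaklyDiscontinuous f)
    (𝒞 : Set (Set X)) (hcard : Cardinal.mk ↥𝒞 ≤ κ)
    (hcf : ∀ C ∈ 𝒞, IsClosed C ∨ C.Finite)
    (hcover : ⋃₀ 𝒞 = Set.univ)
    (hcont : ∀ C ∈ 𝒞, ContinuousOn f C)
    (hX : P X) : P Y := by
  have hPsum : P ((C : ↥𝒞) × ↥(C : Set X)) :=
    hsum ↥𝒞 (fun C => ↥(C : Set X)) hcard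
      (fun C => hclosedHer X hX C (hcf C C.2))
  refine hproj _ Y hPsum (fun p => f p.2) ?_ ?_
  · refine continuous_sigma fun C => ?_
    exact (continuousOn_iff_continuous_restrict.mp (hcont C C.2))
  · intro y
    obtain ⟨x, rfl⟩ := hsurj y
    have hx : x ∈ ⋃₀ 𝒞 := hcover ▸ Set.mem_univ x
    obtain ⟨C, hC, hxC⟩ := hx
    exact ⟨⟨⟨C, hC⟩, ⟨x, hxC⟩⟩, rfl⟩
end

section
/- Let f : X → Y be a surjective weakly discontinuous map between topological spaces, where X is Hausdorff, hereditarily Lindelöf, and σ-compact. Then Y is hereditarily Lindelöf and σ-compact. -/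
open Set Function Topology

/- ### Auxiliary development -/

universe u v

section Aux

variable {X : Type u} {Y : Type v} [TopologicalSpace X] [TopologicalSpace Y]

open Classical in
/-- A choice of a nonempty relatively open piece of `A` on which `f` is continuous. -/
noncomputable def wdPiece (f : X → Y) (hwd : WeaklyDiscontinuous f) (A : Set X) : Set X :=
  if h : A.Nonempty then (hwd A h).choose else ∅

variable {f : X → Y} (hwd : WeaklyDiscontinuous f)

open Classical in
lemma wdPiece_subset (A : Set X) : wdPiece f hwd A ⊆ A := by
  unfold wdPiece
  split
  · exact (hwd A ‹_›).choose_spec.1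
  · simp

open Classical in
lemma wdPiece_nonempty {A : Set X} (h : A.Nonempty) : (wdPiece f hwd A).Nonempty := by
  rw [wdPiece, dif_pos h]; exact (hwd A h).choose_spec.2.1

open Classical in
lemma wdPiece_eq_inter (A : Set X) : ∃ V : Set X, IsOpen V ∧ wdPiece f hwd A = A ∩ V := by
  unfold wdPiece
  split
  · exact (hwd A ‹_›).choose_spec.2.2.1
  · exact ⟨∅, isOpen_empty, by simp⟩

open Classical in
lemma wdPiece_continuousOn (A : Set X) : ContinuousOn f (wdPiece f hwd A) := by
  unfold wdPiece
  split
  · exact (hwd A ‹_›).choose_spec.2.2.2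
  · simp

/-- Transfinite remainders: throw away a continuity piece at each step. -/
noncomputable def wdRem (f : X → Y) (hwd : WeaklyDiscontinuous f) : Ordinal.{u} → Set X :=
  fun α => univ \ ⋃ β : Iio α, wdPiece f hwd (wdRem f hwd β.1)
termination_by α => α
decreasing_by exact β.2

lemma mem_wdRem {x : X} {α : Ordinal.{u}} :
    x ∈ wdRem f hwd α ↔ ∀ β < α, x ∉ wdPiece f hwd (wdRem f hwd β) := by
  rw [wdRem]
  simp [mem_diff]

lemma wdRem_antitone {α γ : Ordinal.{u}} (h : α ≤ γ) : wdRem f hwd γ ⊆ wdRem f hwd α := by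
  intro x hx
  rw [mem_wdRem] at hx ⊢
  exact fun β hβ => hx β (lt_of_lt_of_le hβ h)

lemma wdRem_disjoint {β γ : Ordinal.{u}} (h : β < γ) :
    wdRem f hwd γ ⊆ (wdPiece f hwd (wdRem f hwd β))ᶜ := by
  intro x hx
  rw [mem_wdRem] at hx
  exact hx β h

lemma wdRem_isClosed (α : Ordinal.{u}) : IsClosed (wdRem f hwd α) := by
  induction α using Ordinal.induction with
  | h α IH =>
    have heq : wdRem f hwd α
        = ⋂ β : Iio α, (wdRem f hwd β.1 \ wdPiece f hwd (wdRem f hwd β.1)) := by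
      ext x
      simp only [mem_iInter, mem_diff, mem_wdRem (hwd := hwd), Subtype.forall, mem_Iio]
      constructor
      · intro hx β hβ
        exact ⟨fun δ hδ => hx δ (hδ.trans hβ), hx β hβ⟩
      · intro hx β hβ
        exact (hx β hβ).2
    rw [heq]
    refine isClosed_iInter fun β => ?_
    obtain ⟨V, hVo, hV⟩ := wdPiece_eq_inter hwd (wdRem f hwd β.1)
    have : wdRem f hwd β.1 \ wdPiece f hwd (wdRem f hwd β.1) = wdRem f hwd β.1 ∩ Vᶜ := by
      rw [hV]; ext x; simp only [mem_diff, mem_inter_iff, mem_compl_iff]; tauto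
    rw [this]
    exact (IH β.1 β.2).inter hVo.isClosed_compl

lemma wdRem_cover : (⋃ α : Ordinal.{u}, wdPiece f hwd (wdRem f hwd α)) = univ := by
  by_contra hne
  obtain ⟨x, -, hx⟩ : ∃ x, x ∈ (univ : Set X) ∧ x ∉ ⋃ α : Ordinal.{u}, wdPiece f hwd (wdRem f hwd α) := by
    rcases (ne_univ_iff_exists_notMem _).mp hne with ⟨x, hx⟩
    exact ⟨x, mem_univ x, hx⟩
  simp only [mem_iUnion, not_exists] at hx
  have hmem : ∀ α : Ordinal.{u}, x ∈ wdRem f hwd α := fun α => by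
    rw [mem_wdRem]; exact fun β _ => hx β
  have hne' : ∀ α : Ordinal.{u}, (wdPiece f hwd (wdRem f hwd α)).Nonempty :=
    fun α => wdPiece_nonempty hwd ⟨x, hmem α⟩
  choose y hy using hne'
  have hinj : Function.Injective y := by
    intro β γ hbg
    by_contra hne2
    rcases lt_or_gt_of_ne hne2 with h | h
    · exact wdRem_disjoint hwd h (wdPiece_subset hwd _ (hy γ)) (hbg ▸ hy β)
    · exact wdRem_disjoint hwd h (wdPiece_subset hwd _ (hy β)) (hbg ▸ hy γ)
  exact not_small_ordinal.{u, u} (small_of_injective hinj)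

/-- In a hereditarily Lindelöf space, a right-separated transfinite family of points
is countable. -/
lemma countable_of_rightSeparated {Z : Type u} [TopologicalSpace Z] [HereditarilyLindelofSpace Z]
    (T : Set Ordinal.{u}) (hb : BddAbove T) (x : Ordinal.{u} → Z) (V : Ordinal.{u} → Set Z)
    (hVo : ∀ β ∈ T, IsOpen (V β)) (hxV : ∀ β ∈ T, x β ∈ V β)
    (hsep : ∀ β ∈ T, ∀ γ ∈ T, β < γ → x γ ∉ V β) : T.Countable := by
  by_contra hT
  set S : Set Ordinal.{u} := {δ | ¬ (T ∩ Iio δ).Countable} with hS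
  have hSne : S.Nonempty := by
    obtain ⟨b, hbb⟩ := hb
    refine ⟨b + 1, ?_⟩
    have : T ∩ Iio (b + 1) = T := by
      apply inter_eq_left.mpr
      intro t ht
      exact lt_of_le_of_lt (hbb ht) (Order.lt_succ b)
    rw [hS, mem_setOf_eq, this]
    exact hT
  set δ := sInf S with hδ
  have hδS : δ ∈ S := csInf_mem hSne
  have hsmall : ∀ γ, γ < δ → (T ∩ Iio γ).Countable := by
    intro γ hγ
    by_contra hc
    exact notMem_of_lt_csInf' hγ hc
  set T₀ := T ∩ Iio δ with hT₀
  have hT₀unc : ¬ T₀.Countable := hδS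
  have hLin : IsLindelof (x '' T₀) := HereditarilyLindelof_LindelofSets _
  have hcov : x '' T₀ ⊆ ⋃ β ∈ T₀, V β := by
    rintro - ⟨β, hβ, rfl⟩
    exact mem_biUnion hβ (hxV β hβ.1)
  obtain ⟨C, hCsub, hCc, hCcov⟩ := hLin.elim_countable_subcover_image
    (fun β hβ => hVo β (hT₀ ▸ hβ).1) hcov
  have hDc : (⋃ β ∈ C, (T₀ ∩ Iic β)).Countable := by
    refine Countable.biUnion hCc fun β hβ => ?_
    have hβδ : β < δ := (hCsub hβ).2
    have : T₀ ∩ Iic β ⊆ (T ∩ Iio β) ∪ {β} := by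
      rintro γ ⟨⟨hγT, -⟩, hγβ⟩
      rcases lt_or_eq_of_le (mem_Iic.mp hγβ) with h | h
      · exact Or.inl ⟨hγT, h⟩
      · exact Or.inr (by simp [h])
    exact Countable.mono this ((hsmall β hβδ).union (countable_singleton β))
  obtain ⟨γ, hγT₀, hγD⟩ : ∃ γ ∈ T₀, γ ∉ ⋃ β ∈ C, (T₀ ∩ Iic β) := by
    by_contra hcon
    push_neg at hcon
    exact hT₀unc (hDc.mono fun γ hγ => hcon γ hγ)
  have : x γ ∈ ⋃ β ∈ C, V β := hCcov (mem_image_of_mem x hγT₀)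
  obtain ⟨β, hβC, hxγ⟩ := mem_iUnion₂.mp this
  have hβT₀ : β ∈ T₀ := hCsub hβC
  have hβγ : β < γ := by
    by_contra hle
    push_neg at hle
    exact hγD (mem_biUnion hβC ⟨hγT₀, hle⟩)
  exact hsep β hβT₀.1 γ hγT₀.1 hβγ hxγ

include hwd in
/-- A weakly discontinuous map on a hereditarily Lindelöf space admits a countable
decomposition of the domain into locally closed pieces on which it is continuous. -/
lemma wd_exists_decomposition [HereditarilyLindelofSpace X] :
    ∃ U : ℕ → Set X, (⋃ n, U n) = univ ∧ (∀ n, ContinuousOn f (U n)) ∧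
      (∀ n, ∃ F V : Set X, IsClosed F ∧ IsOpen V ∧ U n = F ∩ V) := by
  classical
  set T : Set Ordinal.{u} := {α | (wdPiece f hwd (wdRem f hwd α)).Nonempty} with hT
  rcases T.eq_empty_or_nonempty with hTe | hTne
  · -- all pieces empty, so X is empty
    refine ⟨fun _ => ∅, ?_, fun _ => by simp, fun _ => ⟨∅, ∅, isClosed_empty, isOpen_empty, by simp⟩⟩
    have := wdRem_cover (f := f) hwd
    have hXe : (univ : Set X) = ∅ := by
      rw [← this]
      apply eq_empty_of_forall_notMem
      intro x hx
      obtain ⟨α, hα⟩ := mem_iUnion.mp hx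
      exact (eq_empty_iff_forall_notMem.mp hTe) α ⟨x, hα⟩
    rw [hXe]
    simp
  · -- choose points and open sets
    obtain ⟨α₀, hα₀⟩ := id hTne
    obtain ⟨x₀, hx₀⟩ := hα₀
    have xsel : ∀ α : Ordinal.{u}, ∃ z : X,
        (wdPiece f hwd (wdRem f hwd α)).Nonempty → z ∈ wdPiece f hwd (wdRem f hwd α) := by
      intro α
      rcases (wdPiece f hwd (wdRem f hwd α)).eq_empty_or_nonempty with he | ⟨z, hz⟩
      · exact ⟨x₀, fun hn => absurd he hn.ne_empty⟩
      · exact ⟨z, fun _ => hz⟩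
    choose xp hxp using xsel
    have Vsel : ∀ α : Ordinal.{u}, ∃ V : Set X, IsOpen V ∧
        wdPiece f hwd (wdRem f hwd α) = wdRem f hwd α ∩ V :=
      fun α => wdPiece_eq_inter hwd _
    choose Vp hVpo hVpe using Vsel
    have hxpmem : ∀ α ∈ T, xp α ∈ wdPiece f hwd (wdRem f hwd α) := fun α hα => hxp α hα
    have hbdd : BddAbove T := by
      rw [Ordinal.bddAbove_iff_small]
      refine small_of_injective (f := fun β : T => xp β.1) ?_
      rintro ⟨β, hβ⟩ ⟨γ, hγ⟩ h
      have h' : xp β = xp γ := h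
      simp only [Subtype.mk.injEq]
      by_contra hne2
      rcases lt_or_gt_of_ne hne2 with hlt | hlt
      · exact wdRem_disjoint hwd hlt (wdPiece_subset hwd _ (hxpmem γ hγ)) (h' ▸ hxpmem β hβ)
      · exact wdRem_disjoint hwd hlt (wdPiece_subset hwd _ (hxpmem β hβ)) (h'.symm ▸ hxpmem γ hγ)
    have hTc : T.Countable := by
      refine countable_of_rightSeparated T hbdd xp Vp (fun β _ => hVpo β)
        (fun β hβ => ?_) (fun β hβ γ hγ hlt => ?_)
      · have := hxpmem β hβ
        rw [hVpe β] at this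
        exact this.2
      · intro hxV
        have h1 : xp γ ∈ wdRem f hwd γ := wdPiece_subset hwd _ (hxpmem γ hγ)
        have h2 : xp γ ∈ wdRem f hwd β := wdRem_antitone hwd hlt.le h1
        have h3 : xp γ ∉ wdPiece f hwd (wdRem f hwd β) := wdRem_disjoint hwd hlt h1
        exact h3 (by rw [hVpe β]; exact ⟨h2, hxV⟩)
    obtain ⟨e, he⟩ := hTc.exists_eq_range hTne
    refine ⟨fun n => wdPiece f hwd (wdRem f hwd (e n)), ?_, fun n => wdPiece_continuousOn hwd _,
      fun n => ⟨wdRem f hwd (e n), Vp (e n), wdRem_isClosed hwd _, hVpo _, hVpe _⟩⟩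
    apply eq_univ_of_univ_subset
    rw [← wdRem_cover (f := f) hwd]
    intro z hz
    obtain ⟨α, hα⟩ := mem_iUnion.mp hz
    have hαT : α ∈ T := ⟨z, hα⟩
    rw [he] at hαT
    obtain ⟨n, hn⟩ := hαT
    exact mem_iUnion.mpr ⟨n, hn ▸ hα⟩

/-- In a Hausdorff hereditarily Lindelöf space, the intersection of a compact set
with an open set is σ-compact. -/
lemma isSigmaCompact_compact_inter_open {Z : Type u} [TopologicalSpace Z] [T2Space Z]
    [HereditarilyLindelofSpace Z] {C V : Set Z} (hC : IsCompact C) (hV : IsOpen V) :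
    IsSigmaCompact (C ∩ V) := by
  haveI : CompactSpace ↥C := isCompact_iff_compactSpace.mp hC
  set S : Set ↥C := Subtype.val ⁻¹' V with hSdef
  have hSo : IsOpen S := hV.preimage continuous_subtype_val
  have hnbhd : ∀ z : ↥S, ∃ L : Set ↥C, IsCompact L ∧ (z : ↥C) ∈ interior L ∧ L ⊆ S := by
    intro z
    obtain ⟨L, hLc, hKL, hLS⟩ := exists_compact_between (isCompact_singleton (x := (z : ↥C)))
      hSo (singleton_subset_iff.mpr z.2)
    exact ⟨L, hLc, hKL rfl, hLS⟩
  choose L hLc hLint hLS using hnbhd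
  have hLinS : IsLindelof S := by
    rw [Subtype.isLindelof_iff]
    exact HereditarilyLindelof_LindelofSets _
  have hcov : S ⊆ ⋃ z : ↥S, interior (L z) := by
    intro w hw
    exact mem_iUnion.mpr ⟨⟨w, hw⟩, hLint ⟨w, hw⟩⟩
  obtain ⟨r, hrc, hrcov⟩ := hLinS.elim_countable_subcover (fun z => interior (L z))
    (fun _ => isOpen_interior) hcov
  have key : C ∩ V = ⋃ z ∈ r, Subtype.val '' (L z) := by
    apply Subset.antisymm
    · rintro w ⟨hwC, hwV⟩
      have hwS : (⟨w, hwC⟩ : ↥C) ∈ S := hwV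
      obtain ⟨z, hz, hmem⟩ := mem_iUnion₂.mp (hrcov hwS)
      exact mem_iUnion₂.mpr ⟨z, hz, mem_image_of_mem _ (interior_subset hmem)⟩
    · rintro w hw
      obtain ⟨z, -, ⟨u, hu, rfl⟩⟩ := mem_iUnion₂.mp hw
      exact ⟨u.2, hLS z hu⟩
  rw [key]
  haveI : Countable ↥r := hrc.to_subtype
  rw [biUnion_eq_iUnion]
  exact isSigmaCompact_iUnion_of_isCompact _
    (fun z => ((hLc z.1).image continuous_subtype_val))

end Aux

theorem hereditarilyLindelof_sigmaCompact_image
    {X Y : Type*} [TopologicalSpace X] [TopologicalSpace Y]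
    [T2Space X] [HereditarilyLindelofSpace X] [SigmaCompactSpace X]
    (f : X → Y) (hsurj : Function.Surjective f) (hwd : WeaklyDiscontinuous f) :
    HereditarilyLindelofSpace Y ∧ SigmaCompactSpace Y := by
  obtain ⟨U, hUcov, hUcont, hUlc⟩ := wd_exists_decomposition hwd
  constructor
  · -- hereditarily Lindelöf
    constructor
    intro t _
    have ht : t = ⋃ n, f '' (U n ∩ f ⁻¹' t) := by
      apply Subset.antisymm
      · intro y hy
        obtain ⟨x, rfl⟩ := hsurj y
        have hx : x ∈ ⋃ n, U n := hUcov ▸ mem_univ x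
        obtain ⟨n, hn⟩ := mem_iUnion.mp hx
        exact mem_iUnion.mpr ⟨n, ⟨x, ⟨hn, hy⟩, rfl⟩⟩
      · refine iUnion_subset fun n => ?_
        rintro y ⟨x, ⟨-, hx⟩, rfl⟩
        exact hx
    rw [ht]
    exact isLindelof_iUnion fun n =>
      (HereditarilyLindelof_LindelofSets _).image_of_continuousOn
        ((hUcont n).mono inter_subset_left)
  · -- σ-compact
    rw [← isSigmaCompact_univ_iff]
    have huniv : (univ : Set Y) = ⋃ (n : ℕ), ⋃ (m : ℕ), f '' (U n ∩ compactCovering X m) := by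
      apply Subset.antisymm _ (subset_univ _)
      intro y _
      obtain ⟨x, rfl⟩ := hsurj y
      obtain ⟨n, hn⟩ := mem_iUnion.mp (hUcov ▸ mem_univ x)
      have hxK : x ∈ ⋃ m, compactCovering X m := (iUnion_compactCovering X) ▸ mem_univ x
      obtain ⟨m, hm⟩ := mem_iUnion.mp hxK
      exact mem_iUnion.mpr ⟨n, mem_iUnion.mpr ⟨m, ⟨x, ⟨hn, hm⟩, rfl⟩⟩⟩
    rw [huniv]
    refine isSigmaCompact_iUnion _ fun n => isSigmaCompact_iUnion _ fun m => ?_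
    obtain ⟨F, V, hF, hV, hUFV⟩ := hUlc n
    have h1 : U n ∩ compactCovering X m = (F ∩ compactCovering X m) ∩ V := by
      rw [hUFV]; ext x
      simp only [mem_inter_iff]; tauto
    have h2 : IsSigmaCompact ((F ∩ compactCovering X m) ∩ V) :=
      isSigmaCompact_compact_inter_open ((isCompact_compactCovering X m).inter_left hF) hV
    rw [← h1] at h2
    exact h2.image_of_continuousOn ((hUcont n).mono inter_subset_left)
end

section
/- A topological space X is analytic (i.e., there exist a Polish space P and a continuous surjection P → X) if and only if there exist a Polish space P and a surjective weakly discontinuous map f : P → X. -/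
open Set Function Topology

universe u

/-- An open ∩ closed subset of a Polish space is Polish. -/
lemma polish_open_inter_closed {α : Type*} [TopologicalSpace α] [PolishSpace α]
    {V C : Set α} (hV : IsOpen V) (hC : IsClosed C) : PolishSpace ↥(V ∩ C) := by
  haveI : PolishSpace ↥V := hV.polishSpace
  have h : V ∩ C ⊆ V := inter_subset_left
  have hemb : Topology.IsClosedEmbedding (inclusion h) := by
    refine ⟨Topology.IsEmbedding.inclusion h, ?_⟩
    rw [Set.range_inclusion]
    have : {x : ↥V | (x : α) ∈ V ∩ C} = (Subtype.val : ↥V → α) ⁻¹' C := by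
      ext x; simp [x.2]
    rw [this]
    exact hC.preimage continuous_subtype_val
  exact hemb.polishSpace

theorem analytic_iff_weaklyDiscontinuous_image_of_polish
    {X : Type u} [TopologicalSpace X] :
    (∃ (P : Type u) (tP : TopologicalSpace P), PolishSpace P ∧
      ∃ g : P → X, Continuous g ∧ Function.Surjective g) ↔
    (∃ (P : Type u) (tP : TopologicalSpace P), PolishSpace P ∧
      ∃ f : P → X, WeaklyDiscontinuous f ∧ Function.Surjective f) := by
  constructor
  · rintro ⟨P, tP, hP, g, hg, hgs⟩
    refine ⟨P, tP, hP, g, ?_, hgs⟩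
    intro A hA
    exact ⟨A, Subset.rfl, hA, ⟨univ, isOpen_univ, (inter_univ A).symm⟩, hg.continuousOn⟩
  · rintro ⟨P, tP, hP, f, hwd, hfs⟩
    -- "good" sets: locally closed pieces on which `f` is continuous
    set Good : Set P → Prop := fun L =>
      ContinuousOn f L ∧ ∃ V C : Set P, IsOpen V ∧ IsClosed C ∧ L = V ∩ C with hGood
    set 𝒰 : Set (Set P) := {V | IsOpen V ∧ ∃ S : Set (Set P), S.Countable ∧
      (∀ L ∈ S, Good L) ∧ V = ⋃₀ S} with h𝒰
    set W : Set P := ⋃₀ 𝒰 with hW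
    have hWopen : IsOpen W := isOpen_sUnion fun V hV => hV.1
    -- W is itself a countable union of good sets
    obtain ⟨T, hTc, hT𝒰, hTW⟩ := TopologicalSpace.isOpen_sUnion_countable 𝒰 fun V hV => hV.1
    choose St hStc hStg hStu using fun (t : Set P) (ht : t ∈ T) => (hT𝒰 ht).2
    set SW : Set (Set P) := ⋃ t ∈ T, ⋃ (ht : t ∈ T), St t ht with hSW
    have hSWc : SW.Countable := hTc.biUnion fun t ht => countable_iUnion fun ht => hStc t ht
    have hSWg : ∀ L ∈ SW, Good L := by
      intro L hL
      simp only [hSW, mem_iUnion] at hL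
      obtain ⟨t, ht, ht', hL⟩ := hL
      exact hStg t ht' L hL
    have hSWu : ⋃₀ SW = W := by
      rw [hW, ← hTW]
      ext x
      simp only [hSW, mem_sUnion, mem_iUnion]
      constructor
      · rintro ⟨L, ⟨t, ht, ht', hL⟩, hx⟩
        exact ⟨t, ht, (hStu t ht') ▸ ⟨L, hL, hx⟩⟩
      · rintro ⟨t, ht, hx⟩
        rw [hStu t ht] at hx
        obtain ⟨L, hL, hx⟩ := hx
        exact ⟨L, ⟨t, ht, ht, hL⟩, hx⟩
    -- W = univ
    have hWuniv : W = univ := by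
      by_contra hne
      have hA : (Wᶜ : Set P).Nonempty := by
        rcases (Wᶜ : Set P).eq_empty_or_nonempty with h | h
        · exact absurd (compl_empty_iff.mp h) hne
        · exact h
      obtain ⟨U, hUA, hUne, ⟨V₀, hV₀, hUeq⟩, hUcont⟩ := hwd Wᶜ hA
      have hmem : W ∪ V₀ ∈ 𝒰 := by
        refine ⟨hWopen.union hV₀, insert U SW, hSWc.insert U, ?_, ?_⟩
        · intro L hL
          rcases hL with rfl | hL
          · exact ⟨hUcont, V₀, Wᶜ, hV₀, hWopen.isClosed_compl, by rw [hUeq, inter_comm]⟩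
          · exact hSWg L hL
        · rw [sUnion_insert, hSWu, hUeq]
          rw [union_comm]
          ext x
          by_cases hx : x ∈ W <;> simp [hx]
      have hsub : W ∪ V₀ ⊆ W := subset_sUnion_of_mem hmem
      obtain ⟨x, hx⟩ := hUne
      have hxW : x ∈ W := hsub (Or.inr ((hUeq ▸ hx).2))
      exact (hUA hx) hxW
    -- enumerate the good pieces
    set S' : Set (Set P) := insert ∅ SW with hS'
    have hS'c : S'.Countable := hSWc.insert ∅
    have hS'g : ∀ L ∈ S', Good L := by
      intro L hL
      rcases hL with rfl | hL
      · exact ⟨continuousOn_empty f, ∅, ∅, isOpen_empty, isClosed_empty, (empty_inter ∅).symm⟩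
      · exact hSWg L hL
    have hS'u : ⋃₀ S' = univ := by rw [hS', sUnion_insert, hSWu, hWuniv, empty_union]
    obtain ⟨L, hL⟩ := hS'c.exists_eq_range ⟨∅, mem_insert _ _⟩
    have hLg : ∀ n, Good (L n) := fun n => hS'g (L n) (hL ▸ mem_range_self n)
    have hLu : ⋃ n, L n = univ := by rw [← sUnion_range, ← hL, hS'u]
    -- the Polish sigma of the pieces
    haveI : ∀ n, PolishSpace ↥(L n) := by
      intro n
      obtain ⟨_, V, C, hV, hC, hVC⟩ := hLg n
      rw [hVC]
      exact polish_open_inter_closed hV hC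
    refine ⟨Σ n : ℕ, ↥(L n), inferInstance, inferInstance,
      fun q => f q.2.1, ?_, ?_⟩
    · apply continuous_sigma
      intro n
      exact continuousOn_iff_continuous_restrict.mp (hLg n).1
    · intro x
      obtain ⟨p, hp⟩ := hfs x
      have : p ∈ ⋃ n, L n := hLu ▸ mem_univ p
      obtain ⟨n, hn⟩ := mem_iUnion.mp this
      exact ⟨⟨n, ⟨p, hn⟩⟩, hp⟩
end

section
/- Let f : X → Y be a surjective weakly discontinuous map between topological spaces. Then nw(Y) ≤ nw(X), hl(Y) ≤ hl(X), and hd(Y) ≤ max{hd(X), hl(X)}, where all three cardinal invariants are taken as the corresponding infimum joined with ℵ₀ (so that each invariant is an infinite cardinal). -/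
open Set Function Topology

universe u

/-- Network weight of a space, joined with `ℵ₀`. -/
noncomputable def networkWeight (X : Type u) [TopologicalSpace X] : Cardinal.{u} :=
  sInf {c : Cardinal.{u} | ∃ N : Set (Set X), Cardinal.mk ↥N = c ∧
    ∀ (x : X) (U : Set X), IsOpen U → x ∈ U → ∃ n ∈ N, x ∈ n ∧ n ⊆ U} ⊔ Cardinal.aleph0

/-- Hereditary Lindelöf number of a space, joined with `ℵ₀`. -/
noncomputable def herLindelofNumber (X : Type u) [TopologicalSpace X] : Cardinal.{u} :=
  sInf {κ : Cardinal.{u} | ∀ (Y : Set X) (𝒰 : Set (Set X)), (∀ U ∈ 𝒰, IsOpen U) →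
    Y ⊆ ⋃₀ 𝒰 → ∃ 𝒱 ⊆ 𝒰, Y ⊆ ⋃₀ 𝒱 ∧ Cardinal.mk ↥𝒱 ≤ κ} ⊔ Cardinal.aleph0

/-- Hereditary density of a space, joined with `ℵ₀`. -/
noncomputable def herDensity (X : Type u) [TopologicalSpace X] : Cardinal.{u} :=
  sInf {κ : Cardinal.{u} | ∀ Y : Set X, ∃ D ⊆ Y, Cardinal.mk ↥D ≤ κ ∧ Y ⊆ closure D} ⊔
    Cardinal.aleph0

section AuxWD
open Cardinal

variable {X Y : Type u} [TopologicalSpace X] [TopologicalSpace Y]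

open scoped Classical in
noncomputable def pieceOf (f : X → Y) (hwd : WeaklyDiscontinuous f) (A : Set X) : Set X :=
  if h : A.Nonempty then (hwd A h).choose else ∅

lemma pieceOf_subset (f : X → Y) (hwd : WeaklyDiscontinuous f) (A : Set X) :
    pieceOf f hwd A ⊆ A := by
  unfold pieceOf
  split
  · exact (hwd A ‹_›).choose_spec.1
  · exact empty_subset A

lemma pieceOf_spec (f : X → Y) (hwd : WeaklyDiscontinuous f) {A : Set X} (h : A.Nonempty) :
    (pieceOf f hwd A).Nonempty ∧ (∃ V, IsOpen V ∧ pieceOf f hwd A = A ∩ V) ∧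
      ContinuousOn f (pieceOf f hwd A) := by
  unfold pieceOf
  rw [dif_pos h]
  exact ⟨(hwd A h).choose_spec.2.1, (hwd A h).choose_spec.2.2.1, (hwd A h).choose_spec.2.2.2⟩

lemma pieceOf_empty (f : X → Y) (hwd : WeaklyDiscontinuous f) {A : Set X}
    (h : ¬ A.Nonempty) : pieceOf f hwd A = ∅ := by
  unfold pieceOf; rw [dif_neg h]

noncomputable def pcs (f : X → Y) (hwd : WeaklyDiscontinuous f) (o : Ordinal.{u}) : Set X :=
  pieceOf f hwd {x | ∀ o' : Ordinal.{u}, o' < o → x ∉ pcs f hwd o'}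
termination_by o

def resid (f : X → Y) (hwd : WeaklyDiscontinuous f) (o : Ordinal.{u}) : Set X :=
  {x | ∀ o' : Ordinal.{u}, o' < o → x ∉ pcs f hwd o'}

lemma pcs_eq (f : X → Y) (hwd : WeaklyDiscontinuous f) (o : Ordinal.{u}) :
    pcs f hwd o = pieceOf f hwd (resid f hwd o) := by
  rw [pcs]; rfl

lemma pcs_subset_resid (f : X → Y) (hwd : WeaklyDiscontinuous f) (o : Ordinal.{u}) :
    pcs f hwd o ⊆ resid f hwd o := by
  rw [pcs_eq]; exact pieceOf_subset f hwd _

lemma resid_antitone (f : X → Y) (hwd : WeaklyDiscontinuous f) {o o' : Ordinal.{u}}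
    (h : o ≤ o') : resid f hwd o' ⊆ resid f hwd o :=
  fun x hx o'' ho'' => hx o'' (lt_of_lt_of_le ho'' h)

lemma pcs_spec (f : X → Y) (hwd : WeaklyDiscontinuous f) (o : Ordinal.{u})
    (h : (resid f hwd o).Nonempty) :
    (pcs f hwd o).Nonempty ∧ (∃ V, IsOpen V ∧ pcs f hwd o = resid f hwd o ∩ V) ∧
      ContinuousOn f (pcs f hwd o) := by
  rw [pcs_eq]; exact pieceOf_spec f hwd h

lemma pcs_continuousOn (f : X → Y) (hwd : WeaklyDiscontinuous f) (o : Ordinal.{u}) :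
    ContinuousOn f (pcs f hwd o) := by
  by_cases h : (resid f hwd o).Nonempty
  · exact (pcs_spec f hwd o h).2.2
  · rw [pcs_eq, pieceOf_empty f hwd h]; exact continuousOn_empty f

lemma pcs_cover (f : X → Y) (hwd : WeaklyDiscontinuous f) (x : X) :
    ∃ o : Ordinal.{u}, x ∈ pcs f hwd o := by
  by_contra h
  push_neg at h
  have hres : ∀ o : Ordinal.{u}, x ∈ resid f hwd o := fun o o' _ => h o'
  have hne : ∀ o : Ordinal.{u}, (pcs f hwd o).Nonempty :=
    fun o => (pcs_spec f hwd o ⟨x, hres o⟩).1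
  choose y hy using hne
  have hinj : Function.Injective y := by
    intro o o' heq
    by_contra hne'
    rcases Ne.lt_or_gt hne' with hlt | hlt
    · exact pcs_subset_resid f hwd o' (hy o') o hlt (heq ▸ hy o)
    · exact pcs_subset_resid f hwd o (hy o) o' hlt (heq ▸ hy o')
  set o₀ : Ordinal.{u} := (Order.succ (Cardinal.mk X)).ord with ho₀
  have hinj2 : Function.Injective (fun t : o₀.ToType => y ((Ordinal.ToType.mk (o := o₀)).symm t).1) := by
    intro a b hab
    have := hinj hab
    have := Subtype.ext this
    exact (Ordinal.ToType.mk (o := o₀)).symm.injective this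
  have hle : Cardinal.mk o₀.ToType ≤ Cardinal.mk X := Cardinal.mk_le_of_injective hinj2
  rw [Cardinal.mk_toType, ho₀, Cardinal.card_ord] at hle
  exact absurd hle (not_le.mpr (Order.lt_succ (Cardinal.mk X)))

end AuxWD

lemma csup_le_aux {ι : Type u} (g : ι → Cardinal.{u}) {κ : Cardinal.{u}}
    (h : ∀ i, g i ≤ κ) : (⨆ i, g i) ≤ κ := by
  rcases isEmpty_or_nonempty ι with h' | h'
  · rw [ciSup_of_empty]; exact bot_le
  · exact ciSup_le h

lemma rs_lemma {X : Type u} [TopologicalSpace X] {κ : Cardinal.{u}}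
    (hκ : Cardinal.aleph0 ≤ κ)
    (hhl : ∀ (S : Set X) (𝒰 : Set (Set X)), (∀ U ∈ 𝒰, IsOpen U) → S ⊆ ⋃₀ 𝒰 →
      ∃ 𝒱 ⊆ 𝒰, S ⊆ ⋃₀ 𝒱 ∧ Cardinal.mk ↥𝒱 ≤ κ)
    {ι : Type u} (v : ι → Ordinal.{u}) (hv : Function.Injective v)
    (x : ι → X) (V : ι → Set X) (hV : ∀ i, IsOpen (V i))
    (hmem : ∀ i, x i ∈ V i) (hsep : ∀ i j, v i < v j → x j ∉ V i) :
    Cardinal.mk ι ≤ κ := by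
  have stepA : ∀ s : Set ι, ∃ t : Set ι, t ⊆ s ∧ Cardinal.mk ↥t ≤ κ ∧
      ∀ i ∈ s, ∃ j ∈ t, v i ≤ v j := by
    intro s
    obtain ⟨𝒱, h𝒱sub, h𝒱cov, h𝒱card⟩ := hhl (x '' s) (V '' s)
      (by rintro _ ⟨i, _, rfl⟩; exact hV i)
      (by rintro _ ⟨i, hi, rfl⟩; exact ⟨V i, ⟨i, hi, rfl⟩, hmem i⟩)
    have hch : ∀ W : ↥𝒱, ∃ j, j ∈ s ∧ V j = W.1 := fun W => h𝒱sub W.2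
    choose j hjs hjV using hch
    refine ⟨range j, range_subset_iff.mpr hjs, (Cardinal.mk_range_le).trans h𝒱card, ?_⟩
    intro i hi
    obtain ⟨W, hW𝒱, hiW⟩ := h𝒱cov ⟨i, hi, rfl⟩
    refine ⟨j ⟨W, hW𝒱⟩, mem_range_self _, ?_⟩
    by_contra hlt
    exact hsep _ _ (not_le.mp hlt) (by rw [hjV ⟨W, hW𝒱⟩]; exact hiW)
  have key : ∀ (s : Set ι) (t : Set ι), Cardinal.mk ↥t ≤ κ →
      (∀ j ∈ t, Cardinal.mk ↥{i | v i ≤ v j} ≤ κ) →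
      (∀ i ∈ s, ∃ j ∈ t, v i ≤ v j) → Cardinal.mk ↥s ≤ κ := by
    intro s t htκ htb hcov
    have h1 : s ⊆ ⋃ j ∈ t, {i | v i ≤ v j} := by
      intro i hi
      obtain ⟨jj, hjt, hij⟩ := hcov i hi
      exact mem_biUnion hjt hij
    calc Cardinal.mk ↥s ≤ Cardinal.mk ↥(⋃ j ∈ t, {i | v i ≤ v j}) :=
          Cardinal.mk_le_mk_of_subset h1
      _ ≤ Cardinal.mk ↥t * ⨆ j : t, Cardinal.mk ↥{i | v i ≤ v j.1} :=
          Cardinal.mk_biUnion_le _ _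
      _ ≤ κ * κ := mul_le_mul' htκ (csup_le_aux _ (fun j => htb j.1 j.2))
      _ = κ := Cardinal.mul_eq_self hκ
  have stepB : ∀ o : Ordinal.{u}, Cardinal.mk ↥{i | v i ≤ o} ≤ κ := by
    intro o
    induction o using Ordinal.induction with
    | _ o IH =>
      obtain ⟨t, hts, htc, htcov⟩ := stepA {i | v i < o}
      have h2 : Cardinal.mk ↥{i | v i < o} ≤ κ :=
        key _ t htc (fun j hj => (IH (v j) (hts hj))) htcov
      have h3 : {i | v i ≤ o} ⊆ {i | v i < o} ∪ {i | v i = o} := by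
        intro i hi
        have hi' : v i ≤ o := hi
        rcases hi'.lt_or_eq with h | h
        · exact Or.inl h
        · exact Or.inr h
      have h4 : Cardinal.mk ↥{i | v i = o} ≤ 1 := by
        rw [Cardinal.mk_le_one_iff_set_subsingleton]
        intro a ha b hb
        exact hv (ha.trans hb.symm)
      calc Cardinal.mk ↥{i | v i ≤ o}
          ≤ Cardinal.mk ↥({i | v i < o} ∪ {i | v i = o}) := Cardinal.mk_le_mk_of_subset h3
        _ ≤ Cardinal.mk ↥{i | v i < o} + Cardinal.mk ↥{i | v i = o} := Cardinal.mk_union_le _ _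
        _ ≤ κ + κ := add_le_add h2 (h4.trans (le_trans Cardinal.one_le_aleph0 hκ))
        _ = κ := Cardinal.add_eq_self hκ
  obtain ⟨t, _, htc, htcov⟩ := stepA univ
  have := key univ t htc (fun j _ => stepB (v j)) htcov
  rwa [Cardinal.mk_univ] at this

section Fam
open Cardinal
variable {X Y : Type u} [TopologicalSpace X] [TopologicalSpace Y]

def pcsFam (f : X → Y) (hwd : WeaklyDiscontinuous f) : Set (Set X) :=
  {P | P.Nonempty ∧ ∃ o : Ordinal.{u}, pcs f hwd o = P}

lemma pcsFam_card (f : X → Y) (hwd : WeaklyDiscontinuous f) {κ : Cardinal.{u}}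
    (hκ : Cardinal.aleph0 ≤ κ)
    (hhl : ∀ (S : Set X) (𝒰 : Set (Set X)), (∀ U ∈ 𝒰, IsOpen U) → S ⊆ ⋃₀ 𝒰 →
      ∃ 𝒱 ⊆ 𝒰, S ⊆ ⋃₀ 𝒱 ∧ Cardinal.mk ↥𝒱 ≤ κ) :
    Cardinal.mk ↥(pcsFam f hwd) ≤ κ := by
  set v : ↥(pcsFam f hwd) → Ordinal.{u} := fun P => sInf {o | pcs f hwd o = P.1} with hvdef
  have hv0 : ∀ P : ↥(pcsFam f hwd), pcs f hwd (v P) = P.1 := fun P => csInf_mem P.2.2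
  have hvinj : Function.Injective v := by
    intro P Q h
    apply Subtype.ext
    rw [← hv0 P, ← hv0 Q, h]
  have hx : ∀ P : ↥(pcsFam f hwd), ∃ z, z ∈ P.1 := fun P => P.2.1
  choose x hxm using hx
  have hres : ∀ P : ↥(pcsFam f hwd), (resid f hwd (v P)).Nonempty := by
    intro P
    exact ⟨x P, pcs_subset_resid f hwd (v P) (by rw [hv0 P]; exact hxm P)⟩
  have hVs : ∀ P : ↥(pcsFam f hwd), ∃ V, IsOpen V ∧ pcs f hwd (v P) = resid f hwd (v P) ∩ V :=
    fun P => (pcs_spec f hwd (v P) (hres P)).2.1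
  choose V hVopen hVeq using hVs
  have hxP : ∀ P : ↥(pcsFam f hwd), x P ∈ pcs f hwd (v P) := by
    intro P; rw [hv0 P]; exact hxm P
  refine rs_lemma hκ hhl v hvinj x V hVopen ?_ ?_
  · intro P
    have := hxP P
    rw [hVeq P] at this
    exact this.2
  · intro P Q hlt hmem
    have h1 : x Q ∈ resid f hwd (v Q) := pcs_subset_resid f hwd (v Q) (hxP Q)
    have h2 : x Q ∈ resid f hwd (v P) := resid_antitone f hwd hlt.le h1
    have h3 : x Q ∈ pcs f hwd (v P) := by
      rw [hVeq P]; exact ⟨h2, hmem⟩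
    exact h1 (v P) hlt h3

end Fam

lemma network_hl {X : Type u} [TopologicalSpace X] {𝒩 : Set (Set X)}
    (hN : ∀ (x : X) (U : Set X), IsOpen U → x ∈ U → ∃ n ∈ 𝒩, x ∈ n ∧ n ⊆ U)
    (Z : Set X) (𝒰 : Set (Set X)) (hop : ∀ U ∈ 𝒰, IsOpen U) (hcov : Z ⊆ ⋃₀ 𝒰) :
    ∃ 𝒱 ⊆ 𝒰, Z ⊆ ⋃₀ 𝒱 ∧ Cardinal.mk ↥𝒱 ≤ Cardinal.mk ↥𝒩 := by
  classical
  have hch : ∀ p : {n : ↥𝒩 // ∃ U ∈ 𝒰, n.1 ⊆ U}, ∃ U, U ∈ 𝒰 ∧ p.1.1 ⊆ U := by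
    intro p
    obtain ⟨U, h1, h2⟩ := p.2
    exact ⟨U, h1, h2⟩
  choose g hg1 hg2 using hch
  refine ⟨range g, range_subset_iff.mpr hg1, ?_,
    Cardinal.mk_range_le.trans (Cardinal.mk_subtype_le _)⟩
  intro z hz
  obtain ⟨U, hU, hzU⟩ := hcov hz
  obtain ⟨n, hn, hzn, hnU⟩ := hN z U (hop U hU) hzU
  exact ⟨g ⟨⟨n, hn⟩, U, hU, hnU⟩, mem_range_self _, hg2 _ hzn⟩

theorem cardinal_invariants_of_weaklyDiscontinuous_image
    {X Y : Type u} [TopologicalSpace X] [TopologicalSpace Y]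
    (f : X → Y) (hsurj : Function.Surjective f) (hwd : WeaklyDiscontinuous f) :
    networkWeight Y ≤ networkWeight X ∧
    herLindelofNumber Y ≤ herLindelofNumber X ∧
    herDensity Y ≤ herDensity X ⊔ herLindelofNumber X := by
    classical
  -- hereditary-Lindelöf property of X at level `herLindelofNumber X`
  have hLne : {κ : Cardinal.{u} | ∀ (Z : Set X) (𝒰 : Set (Set X)), (∀ U ∈ 𝒰, IsOpen U) →
      Z ⊆ ⋃₀ 𝒰 → ∃ 𝒱 ⊆ 𝒰, Z ⊆ ⋃₀ 𝒱 ∧ Cardinal.mk ↥𝒱 ≤ κ}.Nonempty :=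
    ⟨Cardinal.mk (Set X), fun Z 𝒰 _ hc => ⟨𝒰, Subset.rfl, hc, Cardinal.mk_subtype_le _⟩⟩
  have hLX : ∀ (Z : Set X) (𝒰 : Set (Set X)), (∀ U ∈ 𝒰, IsOpen U) → Z ⊆ ⋃₀ 𝒰 →
      ∃ 𝒱 ⊆ 𝒰, Z ⊆ ⋃₀ 𝒱 ∧ Cardinal.mk ↥𝒱 ≤ herLindelofNumber X := by
    intro Z 𝒰 ho hc
    obtain ⟨𝒱, h1, h2, h3⟩ := csInf_mem hLne Z 𝒰 ho hc
    exact ⟨𝒱, h1, h2, h3.trans le_sup_left⟩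
  have hℵL : Cardinal.aleph0 ≤ herLindelofNumber X := le_sup_right
  -- a minimal network of X
  have hNne : {c : Cardinal.{u} | ∃ N : Set (Set X), Cardinal.mk ↥N = c ∧
      ∀ (x : X) (U : Set X), IsOpen U → x ∈ U → ∃ n ∈ N, x ∈ n ∧ n ⊆ U}.Nonempty :=
    ⟨Cardinal.mk ↥(univ : Set (Set X)), univ, rfl, fun x U _ hx => ⟨U, mem_univ U, hx, Subset.rfl⟩⟩
  obtain ⟨𝒩, h𝒩c, h𝒩⟩ := csInf_mem hNne
  have h𝒩le : Cardinal.mk ↥𝒩 ≤ networkWeight X := by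
    rw [h𝒩c]; exact le_sup_left
  have hℵN : Cardinal.aleph0 ≤ networkWeight X := le_sup_right
  have hLN : ∀ (Z : Set X) (𝒰 : Set (Set X)), (∀ U ∈ 𝒰, IsOpen U) → Z ⊆ ⋃₀ 𝒰 →
      ∃ 𝒱 ⊆ 𝒰, Z ⊆ ⋃₀ 𝒱 ∧ Cardinal.mk ↥𝒱 ≤ networkWeight X := by
    intro Z 𝒰 ho hc
    obtain ⟨𝒱, h1, h2, h3⟩ := network_hl h𝒩 Z 𝒰 ho hc
    exact ⟨𝒱, h1, h2, h3.trans h𝒩le⟩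
  have hFamN : Cardinal.mk ↥(pcsFam f hwd) ≤ networkWeight X := pcsFam_card f hwd hℵN hLN
  have hFamL : Cardinal.mk ↥(pcsFam f hwd) ≤ herLindelofNumber X := pcsFam_card f hwd hℵL hLX
  have hcov : ∀ z : X, ∃ P ∈ pcsFam f hwd, z ∈ P := by
    intro z
    obtain ⟨o, ho⟩ := pcs_cover f hwd z
    exact ⟨pcs f hwd o, ⟨⟨z, ho⟩, o, rfl⟩, ho⟩
  have hcont : ∀ P ∈ pcsFam f hwd, ContinuousOn f P := by
    rintro P ⟨-, o, rfl⟩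
    exact pcs_continuousOn f hwd o
  refine ⟨?_, ?_, ?_⟩
  · -- network weight
    set 𝒩Y : Set (Set Y) := {S | ∃ n ∈ 𝒩, ∃ P ∈ pcsFam f hwd, S = f '' (n ∩ P)} with h𝒩Ydef
    have hcard : Cardinal.mk ↥𝒩Y ≤ networkWeight X := by
      have hsurj2 : Function.Surjective (fun q : ↥𝒩 × ↥(pcsFam f hwd) =>
          (⟨f '' (q.1.1 ∩ q.2.1), q.1.1, q.1.2, q.2.1, q.2.2, rfl⟩ : ↥𝒩Y)) := by
        rintro ⟨S, n, hn, P, hP, rfl⟩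
        exact ⟨(⟨n, hn⟩, ⟨P, hP⟩), rfl⟩
      have h5 : Cardinal.mk ↥𝒩Y ≤ Cardinal.mk (↥𝒩 × ↥(pcsFam f hwd)) :=
        Cardinal.mk_le_of_surjective hsurj2
      calc Cardinal.mk ↥𝒩Y ≤ Cardinal.mk ↥𝒩 * Cardinal.mk ↥(pcsFam f hwd) := h5
        _ ≤ networkWeight X * networkWeight X := mul_le_mul' h𝒩le hFamN
        _ = networkWeight X := Cardinal.mul_eq_self hℵN
    have hnet : ∀ (y : Y) (W : Set Y), IsOpen W → y ∈ W → ∃ S ∈ 𝒩Y, y ∈ S ∧ S ⊆ W := by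
      intro y W hW hyW
      obtain ⟨x, rfl⟩ := hsurj y
      obtain ⟨P, hP, hxP⟩ := hcov x
      have hWmem : f ⁻¹' W ∈ nhdsWithin x P := (hcont P hP) x hxP (hW.mem_nhds hyW)
      obtain ⟨V, hVo, hxV, hVsub⟩ := mem_nhdsWithin.mp hWmem
      obtain ⟨n, hn, hxn, hnV⟩ := h𝒩 x V hVo hxV
      refine ⟨f '' (n ∩ P), ⟨n, hn, P, hP, rfl⟩, ⟨x, ⟨hxn, hxP⟩, rfl⟩, ?_⟩
      rintro - ⟨z, ⟨hzn, hzP⟩, rfl⟩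
      exact hVsub ⟨hnV hzn, hzP⟩
    have hm : Cardinal.mk ↥𝒩Y ∈ {c : Cardinal.{u} | ∃ N : Set (Set Y), Cardinal.mk ↥N = c ∧
        ∀ (x : Y) (U : Set Y), IsOpen U → x ∈ U → ∃ n ∈ N, x ∈ n ∧ n ⊆ U} := ⟨𝒩Y, rfl, hnet⟩
    exact sup_le ((csInf_le' hm).trans hcard) hℵN
  · -- hereditary Lindelöf number
    have hmemY : ∀ (Z : Set Y) (𝒰 : Set (Set Y)), (∀ U ∈ 𝒰, IsOpen U) → Z ⊆ ⋃₀ 𝒰 →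
        ∃ 𝒱 ⊆ 𝒰, Z ⊆ ⋃₀ 𝒱 ∧ Cardinal.mk ↥𝒱 ≤ herLindelofNumber X := by
      intro Z 𝒰 hop hcv
      have hper : ∀ P : ↥(pcsFam f hwd), ∃ 𝒢 : Set (Set Y), 𝒢 ⊆ 𝒰 ∧
          Cardinal.mk ↥𝒢 ≤ herLindelofNumber X ∧
          ∀ z ∈ P.1 ∩ f ⁻¹' Z, ∃ U ∈ 𝒢, f z ∈ U := by
        intro P
        have hcP : ContinuousOn f P.1 := hcont P.1 P.2
        rw [continuousOn_iff'] at hcP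
        have hch : ∀ U : ↥𝒰, ∃ W, IsOpen W ∧ f ⁻¹' U.1 ∩ P.1 = W ∩ P.1 := by
          intro U
          obtain ⟨W, h1, h2⟩ := hcP U.1 (hop U.1 U.2)
          exact ⟨W, h1, h2⟩
        choose W hWo hWe using hch
        obtain ⟨𝒱, h𝒱sub, h𝒱cov, h𝒱card⟩ := hLX (P.1 ∩ f ⁻¹' Z) (range W)
          (by rintro - ⟨U, rfl⟩; exact hWo U)
          (by
            rintro z ⟨hzP, hzZ⟩
            obtain ⟨U, hU, hfzU⟩ := hcv hzZ
            refine ⟨W ⟨U, hU⟩, mem_range_self _, ?_⟩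
            have hz2 : z ∈ f ⁻¹' U ∩ P.1 := ⟨hfzU, hzP⟩
            rw [hWe ⟨U, hU⟩] at hz2
            exact hz2.1)
        have hch2 : ∀ w : ↥𝒱, ∃ U : ↥𝒰, W U = w.1 := fun w => h𝒱sub w.2
        choose uu huu using hch2
        refine ⟨range (fun w : ↥𝒱 => (uu w).1), ?_, Cardinal.mk_range_le.trans h𝒱card, ?_⟩
        · rintro - ⟨w, rfl⟩
          exact (uu w).2
        · intro z hz
          obtain ⟨W', hW'𝒱, hzW'⟩ := h𝒱cov hz
          have hzz : z ∈ W (uu ⟨W', hW'𝒱⟩) ∩ P.1 := by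
            rw [huu ⟨W', hW'𝒱⟩]
            exact ⟨hzW', hz.1⟩
          rw [← hWe _] at hzz
          exact ⟨(uu ⟨W', hW'𝒱⟩).1, mem_range_self _, hzz.1⟩
      choose 𝒢 h𝒢sub h𝒢card h𝒢cov using hper
      refine ⟨⋃ P : ↥(pcsFam f hwd), 𝒢 P, iUnion_subset h𝒢sub, ?_, ?_⟩
      · intro y hy
        obtain ⟨x, hx⟩ := hsurj y
        obtain ⟨P, hP, hxP⟩ := hcov x
        obtain ⟨U, hU𝒢, hfzU⟩ := h𝒢cov ⟨P, hP⟩ x ⟨hxP, by rw [mem_preimage, hx]; exact hy⟩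
        exact ⟨U, mem_iUnion.mpr ⟨⟨P, hP⟩, hU𝒢⟩, by rw [← hx]; exact hfzU⟩
      · calc Cardinal.mk ↥(⋃ P : ↥(pcsFam f hwd), 𝒢 P)
            ≤ Cardinal.mk ↥(pcsFam f hwd) * ⨆ P, Cardinal.mk ↥(𝒢 P) := Cardinal.mk_iUnion_le _
          _ ≤ herLindelofNumber X * herLindelofNumber X :=
            mul_le_mul' hFamL (csup_le_aux _ h𝒢card)
          _ = herLindelofNumber X := Cardinal.mul_eq_self hℵL
    have hm : herLindelofNumber X ∈ {κ : Cardinal.{u} | ∀ (Z : Set Y) (𝒰 : Set (Set Y)),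
        (∀ U ∈ 𝒰, IsOpen U) → Z ⊆ ⋃₀ 𝒰 → ∃ 𝒱 ⊆ 𝒰, Z ⊆ ⋃₀ 𝒱 ∧ Cardinal.mk ↥𝒱 ≤ κ} := hmemY
    exact sup_le (csInf_le' hm) hℵL
  · -- hereditary density
    set κ := herDensity X ⊔ herLindelofNumber X with hκdef
    have hℵκ : Cardinal.aleph0 ≤ κ := hℵL.trans le_sup_right
    have hDne : {c : Cardinal.{u} | ∀ Z : Set X, ∃ D ⊆ Z, Cardinal.mk ↥D ≤ c ∧
        Z ⊆ closure D}.Nonempty :=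
      ⟨Cardinal.mk X, fun Z => ⟨Z, Subset.rfl, Cardinal.mk_subtype_le _, subset_closure⟩⟩
    have hDX : ∀ Z : Set X, ∃ D ⊆ Z, Cardinal.mk ↥D ≤ κ ∧ Z ⊆ closure D := by
      intro Z
      obtain ⟨D, h1, h2, h3⟩ := csInf_mem hDne Z
      exact ⟨D, h1, h2.trans ((le_sup_left : _ ≤ herDensity X).trans le_sup_left), h3⟩
    have hFamκ : Cardinal.mk ↥(pcsFam f hwd) ≤ κ := hFamL.trans le_sup_right
    have hmemY : ∀ Z : Set Y, ∃ D ⊆ Z, Cardinal.mk ↥D ≤ κ ∧ Z ⊆ closure D := by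
      intro Z
      have hper : ∀ P : ↥(pcsFam f hwd), ∃ D ⊆ P.1 ∩ f ⁻¹' Z, Cardinal.mk ↥D ≤ κ ∧
          P.1 ∩ f ⁻¹' Z ⊆ closure D := fun P => hDX _
      choose D hD1 hD2 hD3 using hper
      refine ⟨⋃ P : ↥(pcsFam f hwd), f '' D P, ?_, ?_, ?_⟩
      · apply iUnion_subset
        intro P
        rintro - ⟨z, hz, rfl⟩
        exact (hD1 P hz).2
      · calc Cardinal.mk ↥(⋃ P : ↥(pcsFam f hwd), f '' D P)
            ≤ Cardinal.mk ↥(pcsFam f hwd) * ⨆ P, Cardinal.mk ↥(f '' D P) :=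
            Cardinal.mk_iUnion_le _
          _ ≤ κ * κ := mul_le_mul' hFamκ
            (csup_le_aux _ (fun P => Cardinal.mk_image_le.trans (hD2 P)))
          _ = κ := Cardinal.mul_eq_self hℵκ
      · intro y hy
        obtain ⟨x, hx⟩ := hsurj y
        obtain ⟨P, hP, hxP⟩ := hcov x
        have hxm : x ∈ P ∩ f ⁻¹' Z := ⟨hxP, by rw [mem_preimage, hx]; exact hy⟩
        have hclx : x ∈ closure (D ⟨P, hP⟩) := hD3 ⟨P, hP⟩ hxm
        have hcwa : ContinuousWithinAt f (D ⟨P, hP⟩) x :=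
          ((hcont P hP) x hxP).mono ((hD1 ⟨P, hP⟩).trans inter_subset_left)
        have himg := hcwa.mem_closure_image hclx
        rw [hx] at himg
        exact closure_mono
          (subset_iUnion (fun P : ↥(pcsFam f hwd) => f '' D P) ⟨P, hP⟩) himg
    have hm : κ ∈ {c : Cardinal.{u} | ∀ Z : Set Y, ∃ D ⊆ Z, Cardinal.mk ↥D ≤ c ∧
        Z ⊆ closure D} := hmemY
    exact sup_le (csInf_le' hm) hℵκ
end

section
/- Let X be a regular Hausdorff topological space and let Z ⊆ X be a scattered subspace, i.e., every nonempty subset C ⊆ Z contains a point that is isolated in C (in the subspace topology of C). Let Y = (X ∖ Z) ⊕ Z_d be the topological sum of the subspace X ∖ Z of X and the set Z endowed with the discrete topology. Then the natural bijection f : X → Y (which is the identity on underlying points) is a weak homeomorphism; moreover, its inverse f⁻¹ : Y → X is continuous. -/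
open Set Function Topology

universe u

/-- A copy of the subtype `↥Z` which will carry the discrete topology. -/
def DiscreteCopy {X : Type u} (Z : Set X) : Type u := ↥Z

instance {X : Type u} (Z : Set X) : TopologicalSpace (DiscreteCopy Z) := ⊥

/-- The canonical point of `DiscreteCopy Z` associated to `x ∈ Z`. -/
def DiscreteCopy.mk {X : Type u} {Z : Set X} (x : X) (hx : x ∈ Z) : DiscreteCopy Z :=
  ⟨x, hx⟩

theorem weakHomeomorphism_scattered_discretization
    {X : Type u} [TopologicalSpace X] [T2Space X] [RegularSpace X] (Z : Set X)
    (hZ : ∀ C : Set X, C ⊆ Z → C.Nonempty →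
      ∃ x ∈ C, ∃ V : Set X, IsOpen V ∧ V ∩ C = {x}) :
    ∃ f : X → (↥(Zᶜ) ⊕ DiscreteCopy Z),
      (∀ (x : X) (hx : x ∈ Z), f x = Sum.inr (DiscreteCopy.mk x hx)) ∧
      (∀ (x : X) (hx : x ∉ Z), f x = Sum.inl ⟨x, hx⟩) ∧
      Function.Bijective f ∧ WeaklyDiscontinuous f ∧
      ∃ g : (↥(Zᶜ) ⊕ DiscreteCopy Z) → X,
        Function.LeftInverse g f ∧ Function.RightInverse g f ∧
        Continuous g ∧ WeaklyDiscontinuous g := by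

  classical
  set f : X → (↥(Zᶜ) ⊕ DiscreteCopy Z) :=
    fun x => if h : x ∈ Z then Sum.inr (DiscreteCopy.mk x h) else Sum.inl ⟨x, h⟩ with hf
  set g : (↥(Zᶜ) ⊕ DiscreteCopy Z) → X :=
    Sum.elim (fun a => a.1) (fun b => (Subtype.val (p := fun x => x ∈ Z) b)) with hg
  have hfZ : ∀ (x : X) (hx : x ∈ Z), f x = Sum.inr (DiscreteCopy.mk x hx) := by
    intro x hx; simp [hf, hx]
  have hfZc : ∀ (x : X) (hx : x ∉ Z), f x = Sum.inl ⟨x, hx⟩ := by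
    intro x hx; simp [hf, hx]
  have hleft : Function.LeftInverse g f := by
    intro x
    by_cases hx : x ∈ Z
    · rw [hfZ x hx]; rfl
    · rw [hfZc x hx]; rfl
  have hright : Function.RightInverse g f := by
    rintro (⟨x, hx⟩ | ⟨x, hx⟩)
    · exact hfZc x hx
    · exact hfZ x hx
  have hgcont : Continuous g := by
    refine Continuous.sumElim continuous_subtype_val ?_
    exact continuous_bot
  -- f is continuous on Zᶜ
  have hcZc : ContinuousOn f Zᶜ := by
    rw [continuousOn_iff_continuous_restrict]
    have : Set.restrict Zᶜ f = Sum.inl := by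
      funext a
      have := a.2
      simp only [Set.restrict_apply, hf]
      exact dif_neg a.2
    rw [show Zᶜ.domRestrict f = Sum.inl from this]
    exact continuous_inl
  have hwf : WeaklyDiscontinuous f := by
    intro A hA
    by_cases hc : ∃ W : Set X, IsOpen W ∧ (A ∩ W).Nonempty ∧ A ∩ W ∩ Z = ∅
    · obtain ⟨W, hWo, hWne, hWZ⟩ := hc
      refine ⟨A ∩ W, inter_subset_left, hWne, ⟨W, hWo, rfl⟩, ?_⟩
      refine hcZc.mono ?_
      intro y hy hyZ
      have : y ∈ A ∩ W ∩ Z := ⟨hy, hyZ⟩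
      rw [hWZ] at this; exact this
    · push_neg at hc
      have hAZ : (A ∩ Z).Nonempty := by
        obtain ⟨y, hy⟩ := hc univ isOpen_univ (by simpa using hA)
        exact ⟨y, by simpa using hy⟩
      obtain ⟨x, hxAZ, V, hVo, hVZ⟩ := hZ (A ∩ Z) inter_subset_right hAZ
      have hxV : x ∈ V := by
        have : x ∈ V ∩ (A ∩ Z) := by rw [hVZ]; rfl
        exact this.1
      have hAV : A ∩ V = {x} := by
        apply Set.eq_singleton_iff_unique_mem.mpr
        refine ⟨⟨hxAZ.1, hxV⟩, ?_⟩
        intro y hy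
        by_cases hyZ : y ∈ Z
        · have : y ∈ V ∩ (A ∩ Z) := ⟨hy.2, hy.1, hyZ⟩
          rw [hVZ] at this; exact this
        · exfalso
          have hyx : y ≠ x := fun h => hyZ (h ▸ hxAZ.2)
          obtain ⟨Oy, Ox, hOyo, hOxo, hyOy, hxOx, hdisj⟩ := t2_separation hyx
          have hne : (A ∩ (Oy ∩ V)).Nonempty := ⟨y, hy.1, hyOy, hy.2⟩
          obtain ⟨z, ⟨⟨hzA, hzOy, hzV⟩, hzZ⟩⟩ := hc (Oy ∩ V) (hOyo.inter hVo) hne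
          have hzx : z ∈ V ∩ (A ∩ Z) := ⟨hzV, hzA, hzZ⟩
          rw [hVZ] at hzx
          rw [Set.mem_singleton_iff] at hzx
          subst hzx
          exact Set.disjoint_left.mp hdisj hzOy hxOx
      refine ⟨{x}, by rw [← hAV]; exact inter_subset_left, ⟨x, rfl⟩, ⟨V, hVo, hAV.symm⟩, ?_⟩
      intro y hy
      rcases hy with rfl
      exact (tendsto_pure_nhds f y).mono_left (by rw [nhdsWithin_singleton])
  have hwg : WeaklyDiscontinuous g := by
    intro A hA
    exact ⟨A, subset_rfl, hA, ⟨univ, isOpen_univ, by simp⟩, hgcont.continuousOn⟩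
  exact ⟨f, hfZ, hfZc, ⟨hleft.injective, hright.surjective⟩, hwf,
    g, hleft, hright, hgcont, hwg⟩
end

section
/- Let X and Y be topological spaces such that X is homeomorphic to a closed subspace of Y and Y is homeomorphic to a closed subspace of X. Then X and Y are weakly homeomorphic. -/
open Set Function Topology

/-- Auxiliary disjointness facts about interleaved decreasing chains. -/
lemma chain_disj {α : Type*} (P Q : ℕ → Set α) (hQP : ∀ n, Q n ⊆ P n)
    (hPQ : ∀ n, P (n + 1) ⊆ Q n) :
    (∀ x ∈ ⋃ n, Q n \ P (n + 1), x ∉ ⋃ n, P n \ Q n) ∧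
    (∀ x ∈ ⋂ n, P n, x ∉ ⋃ n, P n \ Q n) := by
  have hPa : Antitone P := antitone_nat_of_succ_le fun n => (hPQ n).trans (hQP n)
  have hQa : Antitone Q := antitone_nat_of_succ_le fun n => (hQP (n + 1)).trans (hPQ n)
  constructor
  · rintro x hx hx'
    rcases mem_iUnion.mp hx with ⟨n, hxQ, hxP⟩
    rcases mem_iUnion.mp hx' with ⟨m, hxPm, hxQm⟩
    rcases le_or_gt m n with hmn | hnm
    · exact hxQm (hQa hmn hxQ)
    · exact hxP (hPa hnm hxPm)
  · rintro x hx hx'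
    rcases mem_iUnion.mp hx' with ⟨m, hxPm, hxQm⟩
    exact hxQm (hPQ m (mem_iInter.mp hx (m + 1)))

/-- Weak discontinuity criterion via an interleaved decreasing chain of closed sets. -/
lemma wd_of_chain {X Y : Type*} [TopologicalSpace X] [TopologicalSpace Y]
    (P Q : ℕ → Set X) (hPc : ∀ n, IsClosed (P n)) (hQc : ∀ n, IsClosed (Q n))
    (hP0 : P 0 = univ) (hQP : ∀ n, Q n ⊆ P n) (hPQ : ∀ n, P (n + 1) ⊆ Q n)
    (h : X → Y)
    (h1 : ContinuousOn h (⋃ n, P n \ Q n))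
    (h2 : ContinuousOn h (⋃ n, Q n \ P (n + 1)))
    (h3 : ContinuousOn h (⋂ n, P n)) :
    WeaklyDiscontinuous h := by
  intro A hA
  by_cases c1 : ∃ n, A ⊆ P n ∧ ¬A ⊆ Q n
  · obtain ⟨n, hAP, hAQ⟩ := c1
    obtain ⟨x, hxA, hxQ⟩ := not_subset.mp hAQ
    refine ⟨A ∩ (Q n)ᶜ, inter_subset_left, ⟨x, hxA, hxQ⟩,
      ⟨(Q n)ᶜ, (hQc n).isOpen_compl, rfl⟩, h1.mono ?_⟩
    exact fun y ⟨hyA, hyQ⟩ => mem_iUnion.mpr ⟨n, hAP hyA, hyQ⟩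
  by_cases c2 : ∃ n, A ⊆ Q n ∧ ¬A ⊆ P (n + 1)
  · obtain ⟨n, hAQ, hAP⟩ := c2
    obtain ⟨x, hxA, hxP⟩ := not_subset.mp hAP
    refine ⟨A ∩ (P (n + 1))ᶜ, inter_subset_left, ⟨x, hxA, hxP⟩,
      ⟨(P (n + 1))ᶜ, (hPc (n + 1)).isOpen_compl, rfl⟩, h2.mono ?_⟩
    exact fun y ⟨hyA, hyP⟩ => mem_iUnion.mpr ⟨n, hAQ hyA, hyP⟩
  · push_neg at c1 c2
    have hall : ∀ n, A ⊆ P n := by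
      intro n
      induction n with
      | zero => rw [hP0]; exact subset_univ A
      | succ k ih => exact c2 k (c1 k ih)
    exact ⟨A, Subset.rfl, hA, ⟨univ, isOpen_univ, (inter_univ A).symm⟩,
      h3.mono (subset_iInter hall)⟩

theorem weaklyHomeomorphic_of_closed_embeddings
    {X : Type*} {Y : Type*} [TopologicalSpace X] [TopologicalSpace Y]
    (hXY : ∃ C : Set Y, IsClosed C ∧ Nonempty (X ≃ₜ ↥C))
    (hYX : ∃ D : Set X, IsClosed D ∧ Nonempty (Y ≃ₜ ↥D)) :
    WeaklyHomeomorphic X Y := by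
  classical
  obtain ⟨C, hCc, ⟨e⟩⟩ := hXY
  obtain ⟨D, hDc, ⟨d⟩⟩ := hYX
  by_cases hne : Nonempty X
  swap
  · -- X is empty, hence Y is empty
    have hXe : IsEmpty X := not_nonempty_iff.mp hne
    have hYe : IsEmpty Y := ⟨fun y => hXe.false (d y).1⟩
    exact ⟨fun x => isEmptyElim x, fun y => isEmptyElim y,
      fun x => isEmptyElim x, fun y => isEmptyElim y,
      fun A hA => isEmptyElim hA.choose, fun A hA => isEmptyElim hA.choose⟩
  · have hneY : Nonempty Y := ⟨(e (Classical.arbitrary X)).1⟩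
    set f : X → Y := fun x => (e x : Y) with hf
    set g : Y → X := fun y => (d y : X) with hg
    set φ : X → X := fun x => g (f x) with hφ
    set ψ : Y → Y := fun y => f (g y) with hψ
    have hfc : Continuous f := continuous_subtype_val.comp e.continuous
    have hgc : Continuous g := continuous_subtype_val.comp d.continuous
    have hfinj : Injective f := fun a b hab => e.injective (Subtype.ext hab)
    have hginj : Injective g := fun a b hab => d.injective (Subtype.ext hab)
    have hrf : ∀ x, f x ∈ C := fun x => (e x).2
    have hrg : ∀ y, g y ∈ D := fun y => (d y).2
    have hfm : IsClosedMap f := by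
      have h1 : IsClosedMap (Subtype.val : C → Y) :=
        hCc.isClosedEmbedding_subtypeVal.isClosedMap
      exact h1.comp e.isClosedMap
    have hgm : IsClosedMap g := by
      have h1 : IsClosedMap (Subtype.val : D → X) :=
        hDc.isClosedEmbedding_subtypeVal.isClosedMap
      exact h1.comp d.isClosedMap
    have hφm : IsClosedMap φ := hgm.comp hfm
    have hψm : IsClosedMap ψ := hfm.comp hgm
    have hφn : ∀ n, IsClosedMap (φ^[n]) := by
      intro n
      induction n with
      | zero => exact IsClosedMap.id
      | succ k ih => rw [Function.iterate_succ]; exact ih.comp hφm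
    have hψn : ∀ n, IsClosedMap (ψ^[n]) := by
      intro n
      induction n with
      | zero => exact IsClosedMap.id
      | succ k ih => rw [Function.iterate_succ]; exact ih.comp hψm
    set P : ℕ → Set X := fun n => φ^[n] '' univ with hP
    set Q : ℕ → Set X := fun n => φ^[n] '' D with hQ
    set P' : ℕ → Set Y := fun n => ψ^[n] '' univ with hP'
    set Q' : ℕ → Set Y := fun n => ψ^[n] '' C with hQ'
    have hPc : ∀ n, IsClosed (P n) := fun n => hφn n _ isClosed_univ
    have hQc : ∀ n, IsClosed (Q n) := fun n => hφn n _ hDc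
    have hP'c : ∀ n, IsClosed (P' n) := fun n => hψn n _ isClosed_univ
    have hQ'c : ∀ n, IsClosed (Q' n) := fun n => hψn n _ hCc
    have hP0 : P 0 = univ := by simp [hP]
    have hP'0 : P' 0 = univ := by simp [hP']
    have hQ0 : Q 0 = D := by simp [hQ]
    have hQ'0 : Q' 0 = C := by simp [hQ']
    have hQP : ∀ n, Q n ⊆ P n := fun n => image_mono (subset_univ D)
    have hQ'P' : ∀ n, Q' n ⊆ P' n := fun n => image_mono (subset_univ C)
    have hφuniv : φ '' univ ⊆ D := by rintro _ ⟨x, -, rfl⟩; exact hrg (f x)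
    have hψuniv : ψ '' univ ⊆ C := by rintro _ ⟨y, -, rfl⟩; exact hrf (g y)
    have hPQ : ∀ n, P (n + 1) ⊆ Q n := by
      intro n
      rw [hP, hQ]
      show φ^[n + 1] '' univ ⊆ φ^[n] '' D
      rw [Function.iterate_succ, image_comp]
      exact image_mono hφuniv
    have hP'Q' : ∀ n, P' (n + 1) ⊆ Q' n := by
      intro n
      show ψ^[n + 1] '' univ ⊆ ψ^[n] '' C
      rw [Function.iterate_succ, image_comp]
      exact image_mono hψuniv
    set S : Set X := ⋃ n, P n \ Q n with hS
    -- semiconjugacy f ∘ φ = ψ ∘ f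
    have hsc : Function.Semiconj f φ ψ := fun x => rfl
    have hcomm : ∀ n (s : Set X), f '' (φ^[n] '' s) = ψ^[n] '' (f '' s) := by
      intro n s
      have hfun : f ∘ φ^[n] = ψ^[n] ∘ f := funext (hsc.iterate_right n)
      rw [← image_comp, hfun, image_comp]
    have hfuniv : f '' univ = C := by
      apply Subset.antisymm
      · rintro _ ⟨x, -, rfl⟩; exact hrf x
      · intro y hy
        exact ⟨e.symm ⟨y, hy⟩, mem_univ _, by simp [hf]⟩
    have hfD : f '' D = ψ '' univ := by
      apply Subset.antisymm
      · rintro _ ⟨x, hx, rfl⟩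
        exact ⟨d.symm ⟨x, hx⟩, mem_univ _, by simp [hψ, hg]⟩
      · rintro _ ⟨y, -, rfl⟩
        exact ⟨g y, hrg y, rfl⟩
    have hfP : ∀ n, f '' P n = Q' n := by
      intro n; rw [hP, hQ', hcomm, hfuniv]
    have hfQ : ∀ n, f '' Q n = P' (n + 1) := by
      intro n
      show f '' (φ^[n] '' D) = ψ^[n + 1] '' univ
      rw [hcomm, hfD, ← image_comp, ← Function.iterate_succ]
    have hfS : f '' S = ⋃ n, Q' n \ P' (n + 1) := by
      rw [hS, image_iUnion]
      exact iUnion_congr fun n => by rw [image_diff hfinj, hfP, hfQ]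
    -- the image of each difference under φ stays in S
    have himg : ∀ n, φ '' (P n \ Q n) = P (n + 1) \ Q (n + 1) := by
      intro n
      have hφinj : Injective φ := fun a b hab => hfinj (hginj hab)
      rw [image_diff hφinj, hP, hQ]
      show φ '' (φ^[n] '' univ) \ φ '' (φ^[n] '' D)
          = φ^[n + 1] '' univ \ φ^[n + 1] '' D
      rw [← image_comp, ← image_comp, ← Function.iterate_succ']
    have hφS : ∀ x ∈ S, φ x ∈ S := by
      intro x hx
      rcases mem_iUnion.mp hx with ⟨n, hxn⟩
      exact mem_iUnion.mpr ⟨n + 1, (himg n) ▸ mem_image_of_mem φ hxn⟩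
    have hnotS : ∀ x, x ∉ S → x ∈ D := by
      intro x hx
      by_contra hxD
      exact hx (mem_iUnion.mpr ⟨0, by rw [hP0, hQ0]; exact ⟨mem_univ x, hxD⟩⟩)
    -- partial inverses
    set gi : X → Y := fun x => if hx : x ∈ D then d.symm ⟨x, hx⟩ else Classical.arbitrary Y
      with hgi
    set fi : Y → X := fun y => if hy : y ∈ C then e.symm ⟨y, hy⟩ else Classical.arbitrary X
      with hfi
    have hgig : ∀ y, gi (g y) = y := by
      intro y
      rw [hgi]
      simp only [hrg y, dif_pos]
      exact d.symm_apply_apply y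
    have hggi : ∀ x, x ∈ D → g (gi x) = x := by
      intro x hx
      rw [hgi]
      simp only [hx, dif_pos]
      show ((d (d.symm ⟨x, hx⟩)) : X) = x
      rw [d.apply_symm_apply]
    have hfif : ∀ x, fi (f x) = x := by
      intro x
      rw [hfi]
      simp only [hrf x, dif_pos]
      exact e.symm_apply_apply x
    have hgiD : ContinuousOn gi D := by
      rw [continuousOn_iff_continuous_restrict]
      have : D.domRestrict gi = fun x : D => d.symm x := by
        funext x
        rw [domRestrict_apply, hgi]
        simp only [x.2, dif_pos]
      rw [this]
      exact d.symm.continuous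
    have hfiC : ContinuousOn fi C := by
      rw [continuousOn_iff_continuous_restrict]
      have : C.domRestrict fi = fun y : C => e.symm y := by
        funext y
        rw [domRestrict_apply, hfi]
        simp only [y.2, dif_pos]
      rw [this]
      exact e.symm.continuous
    set h : X → Y := fun x => if x ∈ S then f x else gi x with hh
    set k : Y → X := fun y => if y ∈ f '' S then fi y else g y with hk
    have hhS : ∀ x ∈ S, h x = f x := fun x hx => by simp only [hh]; exact if_pos hx
    have hhS' : ∀ x, x ∉ S → h x = gi x := fun x hx => by simp only [hh]; exact if_neg hx
    have hkT : ∀ y ∈ f '' S, k y = fi y := fun y hy => by simp only [hk]; exact if_pos hy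
    have hkT' : ∀ y, y ∉ f '' S → k y = g y := fun y hy => by simp only [hk]; exact if_neg hy
    refine ⟨h, k, ?_, ?_, ?_, ?_⟩
    · -- LeftInverse k h
      intro x
      by_cases hx : x ∈ S
      · rw [hhS x hx, hkT _ (mem_image_of_mem f hx), hfif]
      · rw [hhS' x hx]
        have hxD := hnotS x hx
        have : gi x ∉ f '' S := by
          rintro ⟨s, hsS, hfs⟩
          apply hx
          have : x = φ s := by
            rw [← hggi x hxD, ← hfs]
          rw [this]
          exact hφS s hsS
        rw [hkT' _ this, hggi x hxD]
    · -- RightInverse k h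
      intro y
      by_cases hy : y ∈ f '' S
      · obtain ⟨s, hs, rfl⟩ := hy
        rw [hkT _ (mem_image_of_mem f hs), hfif, hhS s hs]
      · rw [hkT' y hy]
        have hgyS : g y ∉ S := by
          intro hgy
          rcases mem_iUnion.mp hgy with ⟨n, hn⟩
          cases n with
          | zero =>
            rw [hP0, hQ0] at hn
            exact hn.2 (hrg y)
          | succ m =>
            rw [← himg m] at hn
            obtain ⟨s, hsS, hfs⟩ := hn
            exact hy ⟨s, mem_iUnion.mpr ⟨m, hsS⟩, hginj hfs⟩
        rw [hhS' _ hgyS, hgig]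
    · -- WeaklyDiscontinuous h
      have hd := chain_disj P Q hQP hPQ
      have hQ0D : ∀ n, Q n ⊆ D := by
        intro n
        have := (antitone_nat_of_succ_le fun m => (hQP (m + 1)).trans (hPQ m) : Antitone Q)
        rw [← hQ0]
        exact this (Nat.zero_le n)
      refine wd_of_chain P Q hPc hQc hP0 hQP hPQ h ?_ ?_ ?_
      · exact hfc.continuousOn.congr fun x hx => hhS x hx
      · have hsub : (⋃ n, Q n \ P (n + 1)) ⊆ D := by
          rintro x hx
          rcases mem_iUnion.mp hx with ⟨n, hxn⟩
          exact hQ0D n hxn.1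
        exact (hgiD.mono hsub).congr fun x hx => hhS' x (hd.1 x hx)
      · have hsub : (⋂ n, P n) ⊆ D := by
          intro x hx
          exact hQ0D 0 (hPQ 0 (mem_iInter.mp hx 1))
        exact (hgiD.mono hsub).congr fun x hx => hhS' x (hd.2 x hx)
    · -- WeaklyDiscontinuous k
      have hd := chain_disj P' Q' hQ'P' hP'Q'
      refine wd_of_chain P' Q' hP'c hQ'c hP'0 hQ'P' hP'Q' k ?_ ?_ ?_
      · refine hgc.continuousOn.congr fun y hy => hkT' y ?_
        rw [hfS]
        intro hyT
        rcases mem_iUnion.mp hyT with ⟨n, hyn⟩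
        exact (hd.1 y (mem_iUnion.mpr ⟨n, hyn⟩)) hy
      · have hsub : (⋃ n, Q' n \ P' (n + 1)) ⊆ C := by
          rintro y hy
          rcases mem_iUnion.mp hy with ⟨n, hyn⟩
          have : Antitone Q' := antitone_nat_of_succ_le fun m => (hQ'P' (m + 1)).trans (hP'Q' m)
          rw [← hQ'0]
          exact this (Nat.zero_le n) hyn.1
        refine (hfiC.mono hsub).congr fun y hy => hkT y ?_
        rw [hfS]; exact hy
      · have hsub : (⋂ n, P' n) ⊆ C := by
          intro y hy
          rw [← hQ'0]
          exact hP'Q' 0 (mem_iInter.mp hy 1)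
        refine (hgc.continuousOn.mono hsub).congr fun y hy => hkT' y ?_
        rw [hfS]
        intro hyT
        rcases mem_iUnion.mp hyT with ⟨n, hyn⟩
        exact hyn.2 (mem_iInter.mp hy (n + 1))
end

section
/- Let h : X → Y be a bijection between topological spaces. Suppose {X_α : α ∈ A} is a cover of X by sets each of which is closed or finite such that h|X_α is continuous for every α ∈ A, and {Y_β : β ∈ B} is a cover of Y by sets each of which is closed or finite such that h⁻¹|Y_β is continuous for every β ∈ B. Then there exist a cover {X_i : i ∈ A × B} of X by sets each closed or finite and a cover {Y_i : i ∈ A × B} of Y by sets each closed or finite such that for every i ∈ A × B, h(X_i) = Y_i and the restriction h|X_i : X_i → Y_i is a homeomorphism (with respect to the subspace topologies). -/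
open Set Function Topology

theorem bijection_decomposes_into_homeomorphisms
    {X Y : Type*} [TopologicalSpace X] [TopologicalSpace Y]
    (h : X → Y) (g : Y → X)
    (hgl : Function.LeftInverse g h) (hgr : Function.RightInverse g h)
    {A B : Type*} (XA : A → Set X) (YB : B → Set Y)
    (hXAcf : ∀ a, IsClosed (XA a) ∨ (XA a).Finite)
    (hXAcover : (⋃ a, XA a) = Set.univ)
    (hXAcont : ∀ a, ContinuousOn h (XA a))
    (hYBcf : ∀ b, IsClosed (YB b) ∨ (YB b).Finite)
    (hYBcover : (⋃ b, YB b) = Set.univ)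
    (hYBcont : ∀ b, ContinuousOn g (YB b)) :
    ∃ (XI : A × B → Set X) (YI : A × B → Set Y),
      (∀ i, IsClosed (XI i) ∨ (XI i).Finite) ∧ (⋃ i, XI i) = Set.univ ∧
      (∀ i, IsClosed (YI i) ∨ (YI i).Finite) ∧ (⋃ i, YI i) = Set.univ ∧
      ∀ i, h '' XI i = YI i ∧
        ∃ e : ↥(XI i) ≃ₜ ↥(YI i), ∀ x : ↥(XI i), (e x : Y) = h x := by
  classical
  have hinj : Function.Injective h := hgl.injective
  have ginj : Function.Injective g := hgr.injective
  refine ⟨fun i => XA i.1 ∩ h ⁻¹' (YB i.2), fun i => YB i.2 ∩ g ⁻¹' (XA i.1), ?_, ?_, ?_, ?_, ?_⟩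
  · rintro ⟨a, b⟩
    rcases hXAcf a with hc | hf
    · rcases hYBcf b with hc' | hf'
      · exact Or.inl ((hXAcont a).preimage_isClosed_of_isClosed hc hc')
      · exact Or.inr ((hf'.preimage (hinj.injOn)).subset inter_subset_right)
    · exact Or.inr (hf.subset inter_subset_left)
  · apply eq_univ_of_forall
    intro x
    have hx : x ∈ ⋃ a, XA a := hXAcover ▸ mem_univ x
    have hy : h x ∈ ⋃ b, YB b := hYBcover ▸ mem_univ (h x)
    rcases mem_iUnion.1 hx with ⟨a, ha⟩
    rcases mem_iUnion.1 hy with ⟨b, hb⟩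
    exact mem_iUnion.2 ⟨(a, b), ha, hb⟩
  · rintro ⟨a, b⟩
    rcases hYBcf b with hc | hf
    · rcases hXAcf a with hc' | hf'
      · exact Or.inl ((hYBcont b).preimage_isClosed_of_isClosed hc hc')
      · exact Or.inr ((hf'.preimage (ginj.injOn)).subset inter_subset_right)
    · exact Or.inr (hf.subset inter_subset_left)
  · apply eq_univ_of_forall
    intro y
    have hy : y ∈ ⋃ b, YB b := hYBcover ▸ mem_univ y
    have hx : g y ∈ ⋃ a, XA a := hXAcover ▸ mem_univ (g y)
    rcases mem_iUnion.1 hy with ⟨b, hb⟩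
    rcases mem_iUnion.1 hx with ⟨a, ha⟩
    exact mem_iUnion.2 ⟨(a, b), hb, ha⟩
  · rintro ⟨a, b⟩
    have himg : h '' (XA a ∩ h ⁻¹' (YB b)) = YB b ∩ g ⁻¹' (XA a) := by
      ext y
      constructor
      · rintro ⟨x, ⟨hxa, hxb⟩, rfl⟩
        exact ⟨hxb, by simpa [hgl x] using hxa⟩
      · rintro ⟨hyb, hya⟩
        exact ⟨g y, ⟨hya, by simpa [hgr y] using hyb⟩, hgr y⟩
    refine ⟨himg, ?_⟩
    have hmapsto : MapsTo h (XA a ∩ h ⁻¹' (YB b)) (YB b ∩ g ⁻¹' (XA a)) := by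
      intro x hx; rw [← himg]; exact mem_image_of_mem h hx
    have gmapsto : MapsTo g (YB b ∩ g ⁻¹' (XA a)) (XA a ∩ h ⁻¹' (YB b)) := by
      rintro y ⟨hyb, hya⟩
      exact ⟨hya, by simpa [hgr y] using hyb⟩
    have hcont : Continuous (hmapsto.restrict) :=
      ((hXAcont a).mono inter_subset_left).mapsToRestrict _
    have gcont : Continuous (gmapsto.restrict) :=
      ((hYBcont b).mono inter_subset_left).mapsToRestrict _
    refine ⟨⟨⟨hmapsto.restrict, gmapsto.restrict, ?_, ?_⟩, hcont, gcont⟩, fun x => rfl⟩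
    · intro x; ext; exact hgl x
    · intro y; ext; exact hgr y
end

section
/- Let X and Y be weakly homeomorphic topological spaces, both Hausdorff and perfectly paracompact. If X is σ-compact, then Y is σ-compact. -/
open Set Function Topology

section Aux
variable {X Y : Type*} [TopologicalSpace X] [TopologicalSpace Y]

/-- A "piece": a locally closed set on which `f` is continuous. -/
def WHPiece (f : X → Y) (P : Set X) : Prop :=
  (∃ V F : Set X, IsOpen V ∧ IsClosed F ∧ P = V ∩ F) ∧ ContinuousOn f P

/-- A "good" set: an open set which is a countable union of pieces. -/
def WHGood (f : X → Y) (W : Set X) : Prop :=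
  IsOpen W ∧ ∃ P : ℕ → Set X, (⋃ n, P n) = W ∧ ∀ n, WHPiece f (P n)

lemma whPiece_empty (f : X → Y) : WHPiece f ∅ :=
  ⟨⟨∅, ∅, isOpen_empty, isClosed_empty, (empty_inter ∅).symm⟩, continuousOn_empty f⟩

lemma whGood_empty (f : X → Y) : WHGood f ∅ :=
  ⟨isOpen_empty, fun _ => ∅, by simp, fun _ => whPiece_empty f⟩

lemma whGood_iUnion {f : X → Y} {W : ℕ → Set X} (h : ∀ n, WHGood f (W n)) :
    WHGood f (⋃ n, W n) := by
  choose P hP hPc using fun n => (h n).2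
  let e : ℕ ≃ ℕ × ℕ := (Denumerable.eqv (ℕ × ℕ)).symm
  refine ⟨isOpen_iUnion fun n => (h n).1, fun k => P (e k).1 (e k).2, ?_, fun k => hPc _ _⟩
  have : (⋃ k, P (e k).1 (e k).2) = ⋃ p : ℕ × ℕ, P p.1 p.2 :=
    e.surjective.iUnion_comp (g := fun p : ℕ × ℕ => P p.1 p.2)
  rw [this, iUnion_prod']
  exact iUnion_congr hP

/-- Open Fσ sets in a σ-compact space are σ-compact. -/
lemma isSigmaCompact_of_fsigma [SigmaCompactSpace X] {G : Set X}
    (C : ℕ → Set X) (hC : ∀ n, IsClosed (C n)) (hG : G = ⋃ n, C n) :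
    IsSigmaCompact G := by
  subst hG
  exact isSigmaCompact_iUnion _ fun n =>
    (SigmaCompactSpace.isSigmaCompact_univ).of_isClosed_subset (hC n) (subset_univ _)

end Aux

theorem sigmaCompact_preserved_by_weakHomeomorphism
    {X Y : Type*} [TopologicalSpace X] [TopologicalSpace Y]
    [T2Space X] [T2Space Y] [ParacompactSpace X] [ParacompactSpace Y]
    (hFX : ∀ U : Set X, IsOpen U →
      ∃ C : ℕ → Set X, (∀ n, IsClosed (C n)) ∧ U = ⋃ n, C n)
    (hFY : ∀ U : Set Y, IsOpen U →
      ∃ C : ℕ → Set Y, (∀ n, IsClosed (C n)) ∧ U = ⋃ n, C n)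
    (hwh : WeaklyHomeomorphic X Y) [SigmaCompactSpace X] :
    SigmaCompactSpace Y := by
  obtain ⟨f, g, hgf, hfg, hf, hg⟩ := hwh
  -- Zorn's lemma on the family of good open sets.
  have hzorn : ∃ M, Maximal (fun W => WHGood f W) M := by
    apply zorn_subset
    intro c hc hchain
    rcases eq_empty_or_nonempty c with rfl | hcne
    · exact ⟨∅, whGood_empty f, by simp⟩
    · set G := ⋃₀ c with hGdef
      have hGopen : IsOpen G := isOpen_sUnion fun s hs => (hc hs).1
      obtain ⟨C, hCc, hCeq⟩ := hFX G hGopen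
      have hGL : IsLindelof G := (isSigmaCompact_of_fsigma C hCc hCeq).isLindelof
      have hcover : G ⊆ ⋃ s : c, (s : Set X) := by
        rintro x ⟨s, hs, hxs⟩
        exact mem_iUnion.2 ⟨⟨s, hs⟩, hxs⟩
      obtain ⟨r, hrc, hrcov⟩ := hGL.elim_countable_subcover (fun s : c => (s : Set X))
        (fun s => (hc s.2).1) hcover
      rcases eq_empty_or_nonempty r with rfl | hrne
      · refine ⟨∅, whGood_empty f, fun s hs => ?_⟩
        have : G ⊆ ∅ := by simpa using hrcov
        exact (subset_sUnion_of_mem hs).trans this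
      · obtain ⟨u, hu⟩ := hrc.exists_eq_range hrne
        have hGeq : G = ⋃ n, ((u n : c) : Set X) := by
          apply Subset.antisymm
          · intro x hx
            have := hrcov hx
            simp only [mem_iUnion] at this ⊢
            obtain ⟨i, hir, hxi⟩ := this
            rw [hu] at hir
            obtain ⟨n, rfl⟩ := hir
            exact ⟨n, hxi⟩
          · exact iUnion_subset fun n => subset_sUnion_of_mem (u n : c).2
        refine ⟨G, ?_, fun s hs => subset_sUnion_of_mem hs⟩
        rw [hGeq]
        exact whGood_iUnion fun n => hc (u n : c).2
  obtain ⟨M, hMgood, hMmax⟩ := hzorn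
  -- The maximal good set is everything.
  have hMuniv : M = univ := by
    by_contra hne
    have hAne : Mᶜ.Nonempty := by
      rw [nonempty_compl]; exact hne
    obtain ⟨U, hUA, hUne, ⟨V, hVopen, hUV⟩, hUcont⟩ := hf Mᶜ hAne
    have hM'good : WHGood f (M ∪ V) := by
      obtain ⟨hMopen, P, hPeq, hPc⟩ := id hMgood
      refine ⟨hMopen.union hVopen, fun n => Nat.rec U (fun k _ => P k) n, ?_, ?_⟩
      · have h1 : (⋃ n, (Nat.rec U (fun k _ => P k) n : Set X)) = U ∪ ⋃ n, P n := by
          apply Subset.antisymm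
          · refine iUnion_subset fun n => ?_
            cases n with
            | zero => exact subset_union_left
            | succ k => exact (subset_iUnion P k).trans subset_union_right
          · refine union_subset (subset_iUnion (fun n => (Nat.rec U (fun k _ => P k) n : Set X)) 0)
              (iUnion_subset fun k =>
                subset_iUnion (fun n => (Nat.rec U (fun k _ => P k) n : Set X)) (k+1))
        rw [h1, hPeq, hUV, union_comm, union_inter_distrib_left, union_compl_self, univ_inter]
      · intro n
        cases n with
        | zero =>
          exact ⟨⟨V, Mᶜ, hVopen, hMopen.isClosed_compl, hUV.trans (inter_comm _ _)⟩, hUcont⟩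
        | succ k => exact hPc k
    have hMM' : M ⊆ M ∪ V := subset_union_left
    have : M ∪ V ⊆ M := hMmax hM'good hMM'
    obtain ⟨x, hxU⟩ := hUne
    have hxM : x ∈ M := this (Or.inr (by rw [hUV] at hxU; exact hxU.2))
    exact (hUV ▸ hxU).1 hxM
  -- Conclude: Y is a countable union of σ-compact images.
  obtain ⟨-, P, hPeq, hPc⟩ := id hMgood
  rw [hMuniv] at hPeq
  have hPsigma : ∀ n, IsSigmaCompact (P n) := by
    intro n
    obtain ⟨⟨V, F, hV, hF, hPVF⟩, -⟩ := hPc n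
    obtain ⟨C, hCc, hCeq⟩ := hFX V hV
    obtain ⟨K, hKc, hKeq⟩ := isSigmaCompact_of_fsigma C hCc hCeq
    rw [hPVF, ← hKeq, iUnion_inter]
    exact isSigmaCompact_iUnion _ fun k => ((hKc k).inter_right hF).isSigmaCompact
  have himg : ∀ n, IsSigmaCompact (f '' P n) := fun n =>
    (hPsigma n).image_of_continuousOn (hPc n).2
  have huniv : (univ : Set Y) = ⋃ n, f '' P n := by
    rw [← image_iUnion, hPeq, image_univ, hfg.surjective.range_eq]
  exact isSigmaCompact_univ_iff.mp (huniv ▸ isSigmaCompact_iUnion _ himg)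
end

section
/- Let X and Y be weakly homeomorphic topological spaces, both Hausdorff and perfectly paracompact. If X is σ-Polish, then Y is σ-Polish. -/
open Set Function Topology

/-- A space is σ-Polish if it is a countable union of closed subsets each of which
is Polish in the subspace topology. -/
def IsSigmaPolish (X : Type*) [TopologicalSpace X] : Prop :=
  ∃ C : ℕ → Set X, (∀ n, IsClosed (C n)) ∧ (⋃ n, C n) = Set.univ ∧
    ∀ n, PolishSpace ↥(C n)


universe v

section CLin
variable {α : Type*} {β : Type*} [TopologicalSpace α] [TopologicalSpace β]

/-- Every open cover (as a set of open sets) of `B` has a countable subcover. -/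
def CLinU (B : Set α) : Prop :=
  ∀ 𝒰 : Set (Set α), (∀ u ∈ 𝒰, IsOpen u) → B ⊆ ⋃₀ 𝒰 →
    ∃ 𝒯 ⊆ 𝒰, 𝒯.Countable ∧ B ⊆ ⋃₀ 𝒯

lemma CLinU.index {B : Set α} (h : CLinU B) {ι : Type v} (U : ι → Set α)
    (hU : ∀ i, IsOpen (U i)) (hBU : B ⊆ ⋃ i, U i) :
    ∃ T : Set ι, T.Countable ∧ B ⊆ ⋃ i ∈ T, U i := by
  obtain ⟨𝒯, h𝒯U, h𝒯c, hB𝒯⟩ := h (Set.range U) (by rintro u ⟨i, rfl⟩; exact hU i)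
    (by rwa [Set.sUnion_range])
  have hex : ∀ u : ↥𝒯, ∃ i, U i = u.1 := fun u => h𝒯U u.2
  choose idx hidx using hex
  haveI : Countable ↥𝒯 := h𝒯c.to_subtype
  refine ⟨Set.range idx, Set.countable_range idx, fun x hx => ?_⟩
  obtain ⟨u, hu𝒯, hxu⟩ := hB𝒯 hx
  exact Set.mem_biUnion ⟨⟨u, hu𝒯⟩, rfl⟩ (by rw [hidx ⟨u, hu𝒯⟩]; exact hxu)

lemma clinU_of_subset_secondCountable {s B : Set α} [SecondCountableTopology ↥s]
    (hBs : B ⊆ s) : CLinU B := by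
  intro 𝒰 h𝒰 hB
  set p : Set α → Set ↥s := fun u => ((↑) : ↥s → α) ⁻¹' u with hp
  obtain ⟨𝒯', h𝒯'c, h𝒯'sub, h𝒯'eq⟩ := TopologicalSpace.isOpen_sUnion_countable (p '' 𝒰)
    (by rintro u' ⟨u, hu, rfl⟩; exact (h𝒰 u hu).preimage continuous_subtype_val)
  have hex : ∀ t : ↥𝒯', ∃ u, u ∈ 𝒰 ∧ p u = t.1 := fun t => h𝒯'sub t.2
  choose q hq𝒰 hqeq using hex
  haveI : Countable ↥𝒯' := h𝒯'c.to_subtype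
  refine ⟨Set.range q, ?_, Set.countable_range q, fun x hx => ?_⟩
  · rintro u ⟨t, rfl⟩; exact hq𝒰 t
  · obtain ⟨u, hu, hxu⟩ := hB hx
    have hxs : x ∈ s := hBs hx
    have hmem : (⟨x, hxs⟩ : ↥s) ∈ ⋃₀ 𝒯' := by
      rw [h𝒯'eq]; exact ⟨p u, Set.mem_image_of_mem p hu, hxu⟩
    obtain ⟨t, ht, hxt⟩ := hmem
    refine ⟨q ⟨t, ht⟩, ⟨⟨t, ht⟩, rfl⟩, ?_⟩
    have hxt' : (⟨x, hxs⟩ : ↥s) ∈ p (q ⟨t, ht⟩) := by rw [hqeq ⟨t, ht⟩]; exact hxt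
    exact hxt'

lemma clinU_iUnion {B : ℕ → Set α} (h : ∀ n, CLinU (B n)) : CLinU (⋃ n, B n) := by
  intro 𝒰 h𝒰 hB
  choose 𝒯 hsub hc hcov using fun n => h n 𝒰 h𝒰 ((Set.subset_iUnion B n).trans hB)
  exact ⟨⋃ n, 𝒯 n, Set.iUnion_subset hsub, Set.countable_iUnion hc,
    Set.iUnion_subset fun n => (hcov n).trans (Set.sUnion_mono (Set.subset_iUnion 𝒯 n))⟩

lemma CLinU.image {f : α → β} {s : Set α} (hf : ContinuousOn f s) (hs : CLinU s) :
    CLinU (f '' s) := by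
  intro 𝒰 h𝒰 hcov
  have hex : ∀ u ∈ 𝒰, ∃ w, IsOpen w ∧ f ⁻¹' u ∩ s = w ∩ s := fun u hu =>
    continuousOn_iff'.1 hf u (h𝒰 u hu)
  choose! w hwopen hweq using hex
  obtain ⟨𝒯, h𝒯sub, h𝒯c, h𝒯cov⟩ := hs (w '' 𝒰)
    (by rintro v ⟨u, hu, rfl⟩; exact hwopen u hu)
    (by
      intro x hx
      obtain ⟨u, hu, hxu⟩ := hcov ⟨x, hx, rfl⟩
      have : x ∈ w u ∩ s := by rw [← hweq u hu]; exact ⟨hxu, hx⟩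
      exact ⟨w u, Set.mem_image_of_mem w hu, this.1⟩)
  have hex2 : ∀ t : ↥𝒯, ∃ u, u ∈ 𝒰 ∧ w u = t.1 := fun t => h𝒯sub t.2
  choose q hq𝒰 hqeq using hex2
  haveI : Countable ↥𝒯 := h𝒯c.to_subtype
  refine ⟨Set.range q, ?_, Set.countable_range q, ?_⟩
  · rintro u ⟨t, rfl⟩; exact hq𝒰 t
  · rintro y ⟨x, hxs, rfl⟩
    obtain ⟨t, ht, hxt⟩ := h𝒯cov hxs
    have hqt := hqeq ⟨t, ht⟩
    have : x ∈ f ⁻¹' (q ⟨t, ht⟩) ∩ s := by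
      rw [hweq (q ⟨t, ht⟩) (hq𝒰 ⟨t, ht⟩), hqt]; exact ⟨hxt, hxs⟩
    exact ⟨q ⟨t, ht⟩, ⟨⟨t, ht⟩, rfl⟩, this.1⟩

end CLin

section Decomp
attribute [local instance] Classical.propDecidable

universe u
variable {W : Type u} {Z : Type*} [TopologicalSpace W] [TopologicalSpace Z]

noncomputable def pickU (g : W → Z) (hg : WeaklyDiscontinuous g) (B : Set W) : Set W :=
  if h : B.Nonempty then (hg B h).choose else ∅

noncomputable def pickV (g : W → Z) (hg : WeaklyDiscontinuous g) (B : Set W) : Set W :=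
  if h : B.Nonempty then (hg B h).choose_spec.2.2.1.choose else ∅

variable {g : W → Z} (hg : WeaklyDiscontinuous g)

lemma pickU_subset (B : Set W) : pickU g hg B ⊆ B := by
  unfold pickU; split
  · exact (hg B ‹_›).choose_spec.1
  · exact Set.empty_subset B

lemma pickU_nonempty {B : Set W} (h : B.Nonempty) : (pickU g hg B).Nonempty := by
  unfold pickU; rw [dif_pos h]; exact (hg B h).choose_spec.2.1

lemma pickV_isOpen (B : Set W) : IsOpen (pickV g hg B) := by
  unfold pickV; split
  · exact (hg B ‹_›).choose_spec.2.2.1.choose_spec.1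
  · exact isOpen_empty

lemma pickU_eq (B : Set W) : pickU g hg B = B ∩ pickV g hg B := by
  unfold pickU pickV; split
  · exact (hg B ‹_›).choose_spec.2.2.1.choose_spec.2
  · rw [Set.not_nonempty_iff_eq_empty.1 ‹¬ B.Nonempty›]; simp

lemma pickU_cont (B : Set W) : ContinuousOn g (pickU g hg B) := by
  unfold pickU; split
  · exact (hg B ‹_›).choose_spec.2.2.2
  · exact continuousOn_empty g

noncomputable def rem (g : W → Z) (hg : WeaklyDiscontinuous g) (A : Set W) :
    Ordinal.{u} → Set W := fun o =>
  A \ ⋃ o' : {o' : Ordinal.{u} // o' < o}, pickU g hg (rem g hg A o'.1)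
termination_by o => o
decreasing_by exact o'.2

lemma rem_def (A : Set W) (o : Ordinal.{u}) :
    rem g hg A o = A \ ⋃ o' : {o' : Ordinal.{u} // o' < o}, pickU g hg (rem g hg A o'.1) := by
  rw [rem]

lemma rem_subset (A : Set W) (o : Ordinal.{u}) : rem g hg A o ⊆ A := by
  rw [rem_def]; exact Set.diff_subset

lemma rem_antitone (A : Set W) {o o' : Ordinal.{u}} (h : o ≤ o') :
    rem g hg A o' ⊆ rem g hg A o := by
  rw [rem_def, rem_def]
  refine Set.diff_subset_diff_right (Set.iUnion_subset fun i => ?_)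
  exact Set.subset_iUnion_of_subset ⟨i.1, lt_of_lt_of_le i.2 h⟩ subset_rfl

lemma rem_eq_diff_V (A : Set W) (o : Ordinal.{u}) :
    rem g hg A o = A \ ⋃ o' : {o' : Ordinal.{u} // o' < o}, pickV g hg (rem g hg A o'.1) := by
  apply Set.Subset.antisymm
  · intro x hx
    refine ⟨rem_subset hg A o hx, ?_⟩
    rintro ⟨_, ⟨o', rfl⟩, hxV⟩
    simp only [Set.mem_range] at hxV
    -- x ∈ pickV (rem A o'), o' < o : derive contradiction
    have hlt : o'.1 < o := o'.2
    have hsucc : Order.succ o'.1 ≤ o := Order.succ_le_of_lt hlt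
    have hx1 : x ∈ rem g hg A (Order.succ o'.1) := rem_antitone hg A hsucc hx
    rw [rem_def] at hx1
    have hx2 : x ∉ pickU g hg (rem g hg A o'.1) := fun hc =>
      hx1.2 (Set.mem_iUnion.2 ⟨⟨o'.1, Order.lt_succ o'.1⟩, hc⟩)
    have hx3 : x ∈ rem g hg A o'.1 := rem_antitone hg A hlt.le hx
    exact hx2 (by rw [pickU_eq]; exact ⟨hx3, hxV⟩)
  · rw [rem_def]
    refine Set.diff_subset_diff_right (Set.iUnion_subset fun i => ?_)
    refine Set.subset_iUnion_of_subset i ?_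
    rw [pickU_eq]
    exact Set.inter_subset_right

lemma rem_empty_exists (hL : ∀ B : Set W, CLinU B) (A : Set W) :
    ∃ o : Ordinal.{u}, o < (Cardinal.aleph 1).ord ∧ rem g hg A o = ∅ := by
  by_contra hcon
  push_neg at hcon
  set ω₁ : Ordinal.{u} := (Cardinal.aleph 1).ord with hω₁
  have hlim : Order.IsSuccLimit ω₁ := Cardinal.isSuccLimit_ord Cardinal.aleph0_lt_aleph_one.le
  have hne : ∀ o : Ordinal.{u}, o < ω₁ → (rem g hg A o).Nonempty := fun o ho => hcon o ho
  have hx : ∀ o : ↥(Set.Iio ω₁), ∃ x, x ∈ pickU g hg (rem g hg A o.1) :=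
    fun o => pickU_nonempty hg (hne o.1 o.2)
  choose xo hxo using hx
  obtain ⟨T, hTc, hTcov⟩ := (hL (Set.range xo)).index
    (fun o : ↥(Set.Iio ω₁) => pickV g hg (rem g hg A o.1))
    (fun o => pickV_isOpen hg _)
    (by
      rintro _ ⟨o, rfl⟩
      have h1 := hxo o
      rw [pickU_eq] at h1
      exact Set.mem_iUnion.2 ⟨o, h1.2⟩)
  have hTne : T.Nonempty := by
    rcases Set.eq_empty_or_nonempty T with h | h
    · exfalso
      have h0 : (⟨0, hlim.pos⟩ : ↥(Set.Iio ω₁)) ∈ (Set.univ : Set ↥(Set.Iio ω₁)) := trivial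
      have := hTcov ⟨⟨0, hlim.pos⟩, rfl⟩
      rw [h] at this
      simp at this
    · exact h
  obtain ⟨e, he⟩ := hTc.exists_eq_range hTne
  set β : Ordinal.{u} := ⨆ n : ℕ, (e n).1 with hβ
  have hβlt : β < ω₁ := by
    refine Ordinal.iSup_lt_ord_lift ?_ fun n => (e n).2
    rw [Cardinal.isRegular_aleph_one.cof_eq, Cardinal.mk_nat, Cardinal.lift_aleph0]
    exact Cardinal.aleph0_lt_aleph_one
  have hsucc : Order.succ β < ω₁ := hlim.succ_lt hβlt
  set os : ↥(Set.Iio ω₁) := ⟨Order.succ β, hsucc⟩ with hos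
  have hx1 : xo os ∈ rem g hg A (Order.succ β) := pickU_subset hg _ (hxo os)
  obtain ⟨o, hoT, hxV⟩ : ∃ o ∈ T, xo os ∈ pickV g hg (rem g hg A o.1) := by
    have := hTcov ⟨os, rfl⟩
    simpa using this
  obtain ⟨n, rfl⟩ : ∃ n, e n = o := by rw [he] at hoT; exact hoT
  have holt : (e n).1 < Order.succ β :=
    lt_of_le_of_lt (Ordinal.le_iSup (fun n : ℕ => (e n).1) n) (Order.lt_succ β)
  rw [rem_eq_diff_V] at hx1
  exact hx1.2 (Set.mem_iUnion.2 ⟨⟨(e n).1, holt⟩, hxV⟩)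

include hg in
lemma decomp (hL : ∀ B : Set W, CLinU B) (A : Set W) :
    ∃ P : ℕ → Set W, (∀ n, ∃ F V : Set W, IsClosed F ∧ IsOpen V ∧ P n = A ∩ F ∩ V) ∧
      A = ⋃ n, P n ∧ ∀ n, ContinuousOn g (P n) := by
  obtain ⟨o₀, ho₀lt, ho₀e⟩ := rem_empty_exists hg hL A
  have hAcov : A ⊆ ⋃ o' : {o' : Ordinal.{u} // o' < o₀}, pickU g hg (rem g hg A o'.1) := by
    rw [rem_def] at ho₀e
    exact Set.diff_eq_empty.1 ho₀e
  have hcnt : Countable ↥(Set.Iio o₀) := by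
    have h1 : Countable o₀.ToType := by
      rw [← Cardinal.mk_le_aleph0_iff, Cardinal.mk_toType, ← Order.lt_succ_iff,
        Cardinal.succ_aleph0]
      exact Cardinal.lt_ord.1 ho₀lt
    exact Countable.of_equiv _ (Ordinal.ToType.mk (o := o₀)).toEquiv.symm
  rcases Set.eq_empty_or_nonempty (Set.Iio o₀) with hIe | hIne
  · -- o₀ = 0, so A = ∅
    have hA : A = ∅ := by
      refine Set.eq_empty_of_subset_empty (hAcov.trans ?_)
      refine Set.iUnion_subset fun o' => absurd (Set.mem_Iio.2 o'.2) ?_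
      rw [hIe]; exact Set.notMem_empty o'.1
    refine ⟨fun _ => ∅, fun n => ⟨∅, ∅, isClosed_empty, isOpen_empty, by simp⟩, ?_,
      fun n => continuousOn_empty g⟩
    simp [hA]
  · have hIc : (Set.Iio o₀).Countable := Set.countable_coe_iff.1 hcnt
    obtain ⟨σ, hσ⟩ := hIc.exists_eq_range hIne
    refine ⟨fun n => pickU g hg (rem g hg A (σ n)), fun n => ?_, ?_, fun n => pickU_cont hg _⟩
    · refine ⟨(⋃ o' : {o' : Ordinal.{u} // o' < σ n}, pickV g hg (rem g hg A o'.1))ᶜ,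
        pickV g hg (rem g hg A (σ n)), ?_, pickV_isOpen hg _, ?_⟩
      · exact (isOpen_iUnion fun o' => pickV_isOpen hg _).isClosed_compl
      · show pickU g hg (rem g hg A (σ n)) = _
        rw [pickU_eq, rem_eq_diff_V, Set.diff_eq]
    · apply Set.Subset.antisymm
      · intro x hx
        obtain ⟨_, ⟨o', rfl⟩, hxo'⟩ := hAcov hx
        have : o'.1 ∈ Set.range σ := by rw [← hσ]; exact o'.2
        obtain ⟨n, hn⟩ := this
        exact Set.mem_iUnion.2 ⟨n, by rw [hn]; exact hxo'⟩
      · exact Set.iUnion_subset fun n =>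
          (pickU_subset hg _).trans (rem_subset hg A _)

end Decomp
section Main

variable {α : Type*} [TopologicalSpace α]

lemma polish_piece {t P : Set α} (ht : PolishSpace ↥t) (hPt : P ⊆ t) (hP : IsClosed P) :
    PolishSpace ↥P := by
  haveI := ht
  have hemb : Topology.IsClosedEmbedding (Set.inclusion hPt) :=
    ⟨Topology.IsEmbedding.inclusion hPt, by
      rw [Set.range_inclusion]
      exact hP.preimage continuous_subtype_val⟩
  exact hemb.polishSpace

variable {X : Type*} {Y : Type*} [TopologicalSpace X] [TopologicalSpace Y]

lemma clinU_all_of_sigmaPolish (hX : IsSigmaPolish X) (B : Set X) : CLinU B := by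
  obtain ⟨C, hCc, hCu, hCp⟩ := hX
  have hB : B = ⋃ n, B ∩ C n := by rw [← Set.inter_iUnion, hCu, Set.inter_univ]
  rw [hB]
  refine clinU_iUnion fun n => ?_
  haveI := hCp n
  exact clinU_of_subset_secondCountable Set.inter_subset_right

lemma clinU_all_target {f : X → Y} (hfg : Function.Surjective f)
    (hwf : WeaklyDiscontinuous f) (hLX : ∀ B : Set X, CLinU B) (B : Set Y) : CLinU B := by
  obtain ⟨P, hPform, hPcov, hPcont⟩ := decomp hwf hLX (f ⁻¹' B)
  have hB : B = ⋃ n, f '' P n := by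
    rw [← Set.image_iUnion, ← hPcov, Set.image_preimage_eq B hfg]
  rw [hB]
  exact clinU_iUnion fun n => CLinU.image (hPcont n) (hLX (P n))

end Main

theorem sigmaPolish_preserved_by_weakHomeomorphism
    {X Y : Type*} [TopologicalSpace X] [TopologicalSpace Y]
    [T2Space X] [T2Space Y] [ParacompactSpace X] [ParacompactSpace Y]
    (hFX : ∀ U : Set X, IsOpen U →
      ∃ C : ℕ → Set X, (∀ n, IsClosed (C n)) ∧ U = ⋃ n, C n)
    (hFY : ∀ U : Set Y, IsOpen U →
      ∃ C : ℕ → Set Y, (∀ n, IsClosed (C n)) ∧ U = ⋃ n, C n)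
    (hwh : WeaklyHomeomorphic X Y) (hX : IsSigmaPolish X) :
    IsSigmaPolish Y := by
  classical
  obtain ⟨f, g, hgf, hfg, hwf, hwg⟩ := hwh
  obtain ⟨XC, hXCc, hXCu, hXCp⟩ := hX
  have hLX : ∀ B : Set X, CLinU B := clinU_all_of_sigmaPolish ⟨XC, hXCc, hXCu, hXCp⟩
  have hLY : ∀ B : Set Y, CLinU B := clinU_all_target hfg.surjective hwf hLX
  -- countable closed cover of Y on whose members g is continuous
  obtain ⟨Q, hQform, hQcov, hQcont⟩ := decomp hwg hLY Set.univ
  have hQ' : ∀ n, ∃ K : ℕ → Set Y, (∀ k, IsClosed (K k)) ∧ Q n = ⋃ k, K k := by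
    intro n
    obtain ⟨F, V, hF, hV, hQn⟩ := hQform n
    obtain ⟨G, hGc, hGU⟩ := hFY V hV
    exact ⟨fun k => F ∩ G k, fun k => hF.inter (hGc k),
      by rw [hQn, Set.univ_inter, hGU, Set.inter_iUnion]⟩
  choose K hKc hKU using hQ'
  have hKcont : ∀ n k, ContinuousOn g (K n k) := fun n k =>
    (hQcont n).mono (by rw [hKU n]; exact Set.subset_iUnion _ k)
  have hKcov : ⋃ p : ℕ × ℕ, K p.1 p.2 = Set.univ := by
    apply Set.eq_univ_of_univ_subset
    intro y _
    have : y ∈ ⋃ n, Q n := by rw [← hQcov]; trivial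
    obtain ⟨_, ⟨n, rfl⟩, hy⟩ := this
    have hy : y ∈ Q n := hy
    rw [hKU n] at hy
    obtain ⟨_, ⟨k, rfl⟩, hy⟩ := hy
    exact Set.mem_iUnion.2 ⟨(n, k), hy⟩
  -- countable closed cover of X on whose members f is continuous
  obtain ⟨Pf, hPform, hPcov, hPcont⟩ := decomp hwf hLX Set.univ
  have hP' : ∀ n, ∃ L : ℕ → Set X, (∀ k, IsClosed (L k)) ∧ Pf n = ⋃ k, L k := by
    intro n
    obtain ⟨F, V, hF, hV, hPn⟩ := hPform n
    obtain ⟨G, hGc, hGU⟩ := hFX V hV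
    exact ⟨fun k => F ∩ G k, fun k => hF.inter (hGc k),
      by rw [hPn, Set.univ_inter, hGU, Set.inter_iUnion]⟩
  choose L hLc hLU using hP'
  have hLcont : ∀ i j, ContinuousOn f (L i j) := fun i j =>
    (hPcont i).mono (by rw [hLU i]; exact Set.subset_iUnion _ j)
  have hLcov : ⋃ p : ℕ × ℕ, L p.1 p.2 = Set.univ := by
    apply Set.eq_univ_of_univ_subset
    intro x _
    have : x ∈ ⋃ n, Pf n := by rw [← hPcov]; trivial
    obtain ⟨_, ⟨i, rfl⟩, hx⟩ := this
    have hx : x ∈ Pf i := hx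
    rw [hLU i] at hx
    obtain ⟨_, ⟨j, rfl⟩, hx⟩ := hx
    exact Set.mem_iUnion.2 ⟨(i, j), hx⟩
  -- the pieces
  set D : (ℕ × ℕ) × (ℕ × ℕ) × ℕ → Set Y := fun q =>
    K q.1.1 q.1.2 ∩ g ⁻¹' (L q.2.1.1 q.2.1.2 ∩ XC q.2.2) with hD
  have hDclosed : ∀ q, IsClosed (D q) := by
    rintro ⟨⟨n, k⟩, ⟨i, j⟩, m⟩
    exact (hKcont n k).preimage_isClosed_of_isClosed (hKc n k)
      ((hLc i j).inter (hXCc m))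
  have hDcov : ⋃ q, D q = Set.univ := by
    apply Set.eq_univ_of_univ_subset
    intro y _
    have h1 : y ∈ ⋃ p : ℕ × ℕ, K p.1 p.2 := by rw [hKcov]; trivial
    obtain ⟨_, ⟨⟨n, k⟩, rfl⟩, hyK⟩ := h1
    have h2 : g y ∈ ⋃ p : ℕ × ℕ, L p.1 p.2 := by rw [hLcov]; trivial
    obtain ⟨_, ⟨⟨i, j⟩, rfl⟩, hgL⟩ := h2
    have h3 : g y ∈ ⋃ m, XC m := by rw [hXCu]; trivial
    obtain ⟨_, ⟨m, rfl⟩, hgX⟩ := h3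
    exact Set.mem_iUnion.2 ⟨⟨(n, k), (i, j), m⟩, hyK, hgL, hgX⟩
  have hDpolish : ∀ q, PolishSpace ↥(D q) := by
    rintro ⟨⟨n, k⟩, ⟨i, j⟩, m⟩
    set Cs : Set Y := K n k ∩ g ⁻¹' (L i j ∩ XC m) with hCs
    set Zs : Set X := L i j ∩ f ⁻¹' (K n k) ∩ XC m with hZs
    have hZclosed : IsClosed Zs :=
      ((hLcont i j).preimage_isClosed_of_isClosed (hLc i j) (hKc n k)).inter (hXCc m)
    have hZpolish : PolishSpace ↥Zs := polish_piece (hXCp m) Set.inter_subset_right hZclosed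
    have hgCs : ContinuousOn g Cs := (hKcont n k).mono Set.inter_subset_left
    have hfZs : ContinuousOn f Zs :=
      (hLcont i j).mono (Set.inter_subset_left.trans Set.inter_subset_left)
    have toMem : ∀ y : ↥Cs, g y.1 ∈ Zs := by
      rintro ⟨y, hyK, hyg⟩
      exact ⟨⟨hyg.1, by rw [Set.mem_preimage, hfg y]; exact hyK⟩, hyg.2⟩
    have invMem : ∀ x : ↥Zs, f x.1 ∈ Cs := by
      rintro ⟨x, ⟨hxL, hxf⟩, hxm⟩
      exact ⟨hxf, by rw [Set.mem_preimage, hgf x]; exact ⟨hxL, hxm⟩⟩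
    let e : ↥Cs ≃ₜ ↥Zs :=
      { toFun := fun y => ⟨g y.1, toMem y⟩
        invFun := fun x => ⟨f x.1, invMem x⟩
        left_inv := fun y => Subtype.ext (hfg y.1)
        right_inv := fun x => Subtype.ext (hgf x.1)
        continuous_toFun := (hgCs.restrict).subtype_mk _
        continuous_invFun := (hfZs.restrict).subtype_mk _ }
    haveI := hZpolish
    exact e.isClosedEmbedding.polishSpace
  -- reindex by ℕ
  let eq : ℕ ≃ ((ℕ × ℕ) × (ℕ × ℕ) × ℕ) := (Denumerable.eqv ((ℕ × ℕ) × (ℕ × ℕ) × ℕ)).symm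
  refine ⟨fun q => D (eq q), fun q => hDclosed _, ?_, fun q => hDpolish _⟩
  apply Set.eq_univ_of_univ_subset
  intro y _
  have : y ∈ ⋃ q, D q := by rw [hDcov]; trivial
  obtain ⟨_, ⟨p, rfl⟩, hy⟩ := this
  exact Set.mem_iUnion.2 ⟨eq.symm p, by rwa [Equiv.apply_symm_apply]⟩
end

section
/- Let h : X → Y be a weak homeomorphism between topological spaces. Then every nonempty closed subset A ⊆ X contains a nonempty subset U that is open in the subspace topology of A, such that the image h(U) is open in its closure in Y, and the restriction h|U : U → h(U) is a homeomorphism with respect to the subspace topologies. -/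
open Set Function Topology

theorem weakHomeomorphism_local_homeomorphism
    {X Y : Type*} [TopologicalSpace X] [TopologicalSpace Y]
    (h : X → Y) (g : Y → X)
    (hgl : Function.LeftInverse g h) (hgr : Function.RightInverse g h)
    (hh : WeaklyDiscontinuous h) (hg : WeaklyDiscontinuous g) :
    ∀ A : Set X, IsClosed A → A.Nonempty →
      ∃ U : Set X, U ⊆ A ∧ U.Nonempty ∧ (∃ V : Set X, IsOpen V ∧ U = A ∩ V) ∧
        (∃ W : Set Y, IsOpen W ∧ h '' U = closure (h '' U) ∩ W) ∧
        ∃ e : ↥U ≃ₜ ↥(h '' U), ∀ x : ↥U, (e x : Y) = h x := by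
  intro A hAcl hAne
  -- Step 1: apply weak discontinuity of h to A
  obtain ⟨U₁, hU₁A, hU₁ne, ⟨V₁, hV₁, hU₁eq⟩, hcontU₁⟩ := hh A hAne
  -- Step 2: apply weak discontinuity of g to B := closure (h '' U₁)
  set B : Set Y := closure (h '' U₁) with hBdef
  have hBne : B.Nonempty := (hU₁ne.image h).closure
  obtain ⟨W, hWB, hWne, ⟨V₂, hV₂, hWeq⟩, hcontW⟩ := hg B hBne
  have hBcl : IsClosed B := isClosed_closure
  -- S is dense in W
  set S : Set Y := h '' U₁ ∩ V₂ with hSdef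
  have hSW : S ⊆ W := by
    rintro y ⟨hy1, hy2⟩
    rw [hWeq]
    exact ⟨subset_closure hy1, hy2⟩
  have hWclS : W ⊆ closure S := by
    intro y hy
    rw [hWeq] at hy
    have : y ∈ V₂ ∩ closure (h '' U₁) := ⟨hy.2, hy.1⟩
    have := hV₂.inter_closure this
    rwa [hSdef, inter_comm]
  -- g maps W into A
  have hgSA : g '' S ⊆ A := by
    rintro _ ⟨y, ⟨⟨x, hxU₁, rfl⟩, _⟩, rfl⟩
    rw [hgl]
    exact hU₁A hxU₁
  have hgWA : ∀ y ∈ W, g y ∈ A := by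
    intro y hy
    have hcwa : ContinuousWithinAt g S y := (hcontW y hy).mono hSW
    have := hcwa.mem_closure_image (hWclS hy)
    exact closure_minimal hgSA hAcl this
  -- relative openness of g⁻¹(V₁) in W
  obtain ⟨V₅, hV₅, hV₅eq⟩ := (continuousOn_iff'.mp hcontW) V₁ hV₁
  -- the final set U
  set U : Set X := U₁ ∩ h ⁻¹' (V₂ ∩ V₅) with hUdef
  have hUU₁ : U ⊆ U₁ := inter_subset_left
  have hUA : U ⊆ A := hUU₁.trans hU₁A
  -- key identity: h '' U = B ∩ (V₂ ∩ V₅)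
  have himU : h '' U = B ∩ (V₂ ∩ V₅) := by
    apply Subset.antisymm
    · rintro _ ⟨x, ⟨hxU₁, hxpre⟩, rfl⟩
      exact ⟨subset_closure ⟨x, hxU₁, rfl⟩, hxpre⟩
    · rintro y ⟨hyB, hyV₂, hyV₅⟩
      have hyW : y ∈ W := by rw [hWeq]; exact ⟨hyB, hyV₂⟩
      have hyV₁ : y ∈ g ⁻¹' V₁ := by
        have : y ∈ V₅ ∩ W := ⟨hyV₅, hyW⟩
        rw [← hV₅eq] at this
        exact this.1
      have hgyU₁ : g y ∈ U₁ := by rw [hU₁eq]; exact ⟨hgWA y hyW, hyV₁⟩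
      refine ⟨g y, ⟨hgyU₁, ?_⟩, hgr y⟩
      show h (g y) ∈ V₂ ∩ V₅
      rw [hgr y]
      exact ⟨hyV₂, hyV₅⟩
  -- nonemptiness of U
  have hSne : S.Nonempty := by
    obtain ⟨y₀, hy₀⟩ := hWne
    exact closure_nonempty_iff.mp ⟨y₀, hWclS hy₀⟩
  have hUne : U.Nonempty := by
    obtain ⟨y, ⟨⟨x, hxU₁, rfl⟩, hyV₂⟩⟩ := hSne
    have hxW : h x ∈ W := hSW ⟨⟨x, hxU₁, rfl⟩, hyV₂⟩
    have hxV₁ : g (h x) ∈ V₁ := by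
      rw [hgl]
      rw [hU₁eq] at hxU₁
      exact hxU₁.2
    have : h x ∈ V₅ ∩ W := by rw [← hV₅eq]; exact ⟨hxV₁, hxW⟩
    exact ⟨x, hxU₁, hyV₂, this.1⟩
  -- relative openness of U in A
  obtain ⟨V₆, hV₆, hV₆eq⟩ := (continuousOn_iff'.mp hcontU₁) (V₂ ∩ V₅) (hV₂.inter hV₅)
  have hUrelopen : ∃ V : Set X, IsOpen V ∧ U = A ∩ V := by
    refine ⟨V₁ ∩ V₆, hV₁.inter hV₆, ?_⟩
    have : U = h ⁻¹' (V₂ ∩ V₅) ∩ U₁ := by rw [hUdef, inter_comm]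
    rw [this, hV₆eq, hU₁eq]
    ext x
    constructor
    · rintro ⟨hx6, hxA, hx1⟩; exact ⟨hxA, hx1, hx6⟩
    · rintro ⟨hxA, hx1, hx6⟩; exact ⟨hx6, hxA, hx1⟩
  -- h '' U is open in its closure
  have hopenincl : ∃ W' : Set Y, IsOpen W' ∧ h '' U = closure (h '' U) ∩ W' := by
    refine ⟨V₂ ∩ V₅, hV₂.inter hV₅, Subset.antisymm ?_ ?_⟩
    · intro y hy
      refine ⟨subset_closure hy, ?_⟩
      rw [himU] at hy
      exact hy.2
    · have hclB : closure (h '' U) ⊆ B := by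
        apply closure_minimal _ hBcl
        rw [himU]
        exact inter_subset_left
      intro y ⟨hy1, hy2⟩
      rw [himU]
      exact ⟨hclB hy1, hy2⟩
  -- the homeomorphism
  have hcontU : ContinuousOn h U := hcontU₁.mono hUU₁
  have himUW : h '' U ⊆ W := by
    rw [himU, hWeq]
    rintro y ⟨hy1, hy2, _⟩
    exact ⟨hy1, hy2⟩
  have hcontim : ContinuousOn g (h '' U) := hcontW.mono himUW
  have hginvU : ∀ y ∈ h '' U, g y ∈ U := by
    rintro _ ⟨x, hx, rfl⟩
    rw [hgl]
    exact hx
  refine ⟨U, hUA, hUne, hUrelopen, hopenincl, ?_⟩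
  refine ⟨{ toFun := fun x => ⟨h x, mem_image_of_mem h x.2⟩
            invFun := fun y => ⟨g y, hginvU y y.2⟩
            left_inv := fun x => Subtype.ext (hgl x)
            right_inv := fun y => Subtype.ext (hgr y)
            continuous_toFun := ?_
            continuous_invFun := ?_ }, fun x => rfl⟩
  · exact (continuousOn_iff_continuous_restrict.mp hcontU).subtype_mk _
  · exact (continuousOn_iff_continuous_restrict.mp hcontim).subtype_mk _
end

section
/- Let h : X → Y be a weak homeomorphism between topological spaces. Then X is hereditarily Baire if and only if Y is hereditarily Baire. -/
open Set Function Topology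

section Aux

variable {Z : Type*} [TopologicalSpace Z]

/-- `S` is nowhere dense relative to the subspace `A` (expressed ambiently). -/
def NwdIn (A S : Set Z) : Prop :=
  ∀ V : Set Z, IsOpen V → A ∩ V ⊆ closure S → A ∩ V = ∅

/-- `A` is meager in itself (expressed ambiently). -/
def MgrIn (A : Set Z) : Prop :=
  ∃ N : ℕ → Set Z, (∀ n, NwdIn A (N n)) ∧ A ⊆ ⋃ n, N n

/-- `A` is locally closed. -/
def LocClosed (A : Set Z) : Prop :=
  ∃ C V : Set Z, IsClosed C ∧ IsOpen V ∧ A = C ∩ V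

lemma MgrIn.inter_open {A : Set Z} (hA : MgrIn A) {V : Set Z} (hV : IsOpen V) :
    MgrIn (A ∩ V) := by
  obtain ⟨N, hN, hcov⟩ := hA
  refine ⟨N, fun n V' hV' hsub => ?_, fun x hx => hcov hx.1⟩
  rw [inter_assoc] at hsub ⊢
  exact hN n (V ∩ V') (hV.inter hV') hsub

lemma NwdIn.of_closure {A S : Set Z} (h : NwdIn A S) : NwdIn (closure A) S := by
  intro V hV hsub
  have hAV : A ∩ V = ∅ :=
    h V hV (fun x hx => hsub ⟨subset_closure hx.1, hx.2⟩)
  rw [eq_empty_iff_forall_notMem]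
  rintro x ⟨hxc, hxV⟩
  obtain ⟨y, hyV, hyA⟩ := mem_closure_iff.mp hxc V hV hxV
  exact eq_empty_iff_forall_notMem.mp hAV y ⟨hyA, hyV⟩

lemma mgrIn_closure {A : Set Z} (hA : MgrIn A) (hLC : LocClosed A) :
    MgrIn (closure A) := by
  obtain ⟨N, hN, hcov⟩ := hA
  obtain ⟨C, V, hC, hV, hAeq⟩ := hLC
  refine ⟨fun n => Nat.casesOn n (closure A \ A) N, fun n => ?_, fun x hx => ?_⟩
  · cases n with
    | zero =>
      -- closure A \ A = closure A \ V, which is closed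
      have hAcl : A = closure A ∩ V := by
        apply Subset.antisymm
        · exact fun x hx => ⟨subset_closure hx, by rw [hAeq] at hx; exact hx.2⟩
        · intro x hx
          rw [hAeq]
          exact ⟨(closure_minimal (by rw [hAeq]; exact inter_subset_left) hC) hx.1, hx.2⟩
      have hdiff : closure A \ A = closure A \ V := by
        ext x
        constructor
        · rintro ⟨hx1, hx2⟩
          exact ⟨hx1, fun hxV => hx2 (by rw [hAcl]; exact ⟨hx1, hxV⟩)⟩
        · rintro ⟨hx1, hx2⟩
          exact ⟨hx1, fun hxA => hx2 (by rw [hAcl] at hxA; exact hxA.2)⟩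
      have hclosed : IsClosed (closure A \ V) := isClosed_closure.sdiff hV
      intro V' hV' hsub
      rw [eq_empty_iff_forall_notMem]
      rintro x ⟨hxc, hxV'⟩
      obtain ⟨y, hyV', hyA⟩ := mem_closure_iff.mp hxc V' hV' hxV'
      have : y ∈ closure (closure A \ A) := hsub ⟨subset_closure hyA, hyV'⟩
      rw [hdiff, hclosed.closure_eq] at this
      exact this.2 (by rw [hAcl] at hyA; exact hyA.2)
    | succ m =>
      exact (hN m).of_closure
  · by_cases hxA : x ∈ A
    · obtain ⟨s, ⟨m, rfl⟩, hm⟩ := hcov hxA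
      exact mem_iUnion.mpr ⟨m + 1, hm⟩
    · exact mem_iUnion.mpr ⟨0, hx, hxA⟩

end Aux

/-- Meagerness-in-itself transfers backward along a partial homeomorphism. -/
lemma mgr_transfer {X Y : Type*} [TopologicalSpace X] [TopologicalSpace Y]
    {h : X → Y} {g : Y → X} (hgl : Function.LeftInverse g h) {A : Set X}
    (hcont : ContinuousOn h A) (hgcont : ContinuousOn g (h '' A))
    (hm : MgrIn (h '' A)) : MgrIn A := by
  obtain ⟨N, hN, hcov⟩ := hm
  refine ⟨fun n => A ∩ h ⁻¹' (N n), fun n => ?_, fun a ha => ?_⟩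
  · intro V hV hsub
    rw [eq_empty_iff_forall_notMem]
    rintro a ⟨haA, haV⟩
    -- use continuity of g at h a to find an open set V₂
    have hb : h a ∈ h '' A := mem_image_of_mem h haA
    have hcwa : ContinuousWithinAt g (h '' A) (h a) := hgcont _ hb
    have hVnb : V ∈ nhds (g (h a)) := by rw [hgl a]; exact hV.mem_nhds haV
    have : g ⁻¹' V ∈ nhdsWithin (h a) (h '' A) := hcwa hVnb
    obtain ⟨V₂, hV₂, hbV₂, hV₂sub⟩ := mem_nhdsWithin.mp this
    have hkey : h '' A ∩ V₂ ⊆ closure (N n) := by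
      rintro y ⟨⟨x, hxA, rfl⟩, hyV₂⟩
      have hgx : g (h x) ∈ V := hV₂sub ⟨hyV₂, mem_image_of_mem h hxA⟩
      rw [hgl x] at hgx
      have hxcl : x ∈ closure (A ∩ h ⁻¹' (N n)) := hsub ⟨hxA, hgx⟩
      have hcwa2 : ContinuousWithinAt h (A ∩ h ⁻¹' (N n)) x :=
        (hcont x hxA).mono inter_subset_left
      have : h x ∈ closure (h '' (A ∩ h ⁻¹' (N n))) := hcwa2.mem_closure_image hxcl
      refine closure_mono ?_ this
      rintro _ ⟨z, hz, rfl⟩; exact hz.2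
    exact eq_empty_iff_forall_notMem.mp (hN n V₂ hV₂ hkey) (h a) ⟨hb, hbV₂⟩
  · obtain ⟨s, ⟨m, rfl⟩, hm'⟩ := hcov (mem_image_of_mem h ha)
    exact mem_iUnion.mpr ⟨m, ha, hm'⟩

/-- The key transfer step: a nonempty locally closed meager-in-itself subset of `Y`
yields one in `X`. -/
lemma main_step {X Y : Type*} [TopologicalSpace X] [TopologicalSpace Y]
    (h : X → Y) (g : Y → X)
    (hgl : Function.LeftInverse g h) (hgr : Function.RightInverse g h)
    (hh : WeaklyDiscontinuous h) (hg : WeaklyDiscontinuous g)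
    {A : Set Y} (hne : A.Nonempty) (hLC : LocClosed A) (hmg : MgrIn A) :
    ∃ A' : Set X, A'.Nonempty ∧ LocClosed A' ∧ MgrIn A' := by
  obtain ⟨C, VC, hC, hVC, rfl⟩ := hLC
  -- Step 1: relatively open piece W of A on which g is continuous
  obtain ⟨W, hWA, hWne, ⟨V₁, hV₁, hWeq⟩, hgW⟩ := hg (C ∩ VC) hne
  have hWmg : MgrIn W := by rw [hWeq]; exact hmg.inter_open hV₁
  set O := VC ∩ V₁ with hO
  have hOopen : IsOpen O := hVC.inter hV₁
  have hWCO : W = C ∩ O := by rw [hWeq, hO, inter_assoc]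
  have hclWC : closure W ⊆ C := closure_minimal (by rw [hWCO]; exact inter_subset_left) hC
  -- Step 2: B = g '' W and a relatively open piece U of closure B on which h is continuous
  set B := g '' W with hB
  have hBne : B.Nonempty := hWne.image g
  obtain ⟨U, hUF, hUne, ⟨V, hV, hUeq⟩, hhU⟩ := hh (closure B) hBne.closure
  have hBVU : B ∩ V ⊆ U := by
    rw [hUeq]; exact fun x hx => ⟨subset_closure hx.1, hx.2⟩
  have hUsub : U ⊆ closure (B ∩ V) := by
    intro x hx
    rw [hUeq] at hx
    rw [mem_closure_iff]
    intro o ho hxo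
    obtain ⟨y, ⟨hyo, hyV⟩, hyB⟩ := mem_closure_iff.mp hx.1 (o ∩ V) (ho.inter hV) ⟨hxo, hx.2⟩
    exact ⟨y, hyo, hyB, hyV⟩
  have himg : h '' (B ∩ V) ⊆ W := by
    rintro _ ⟨x, ⟨⟨w, hwW, rfl⟩, _⟩, rfl⟩
    rw [hgr w]; exact hwW
  have hUclW : ∀ x ∈ U, h x ∈ closure W := by
    intro x hx
    have hcwa : ContinuousWithinAt h (B ∩ V) x := (hhU x hx).mono hBVU
    exact closure_mono himg (hcwa.mem_closure_image (hUsub hx))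
  -- Step 3: U' = U ∩ h⁻¹ O
  set U' := U ∩ h ⁻¹' O with hU'
  have hBVU' : B ∩ V ⊆ U' := by
    rintro x ⟨⟨w, hwW, rfl⟩, hxV⟩
    refine ⟨hBVU ⟨⟨w, hwW, rfl⟩, hxV⟩, ?_⟩
    show h (g w) ∈ O
    rw [hgr w]
    rw [hWCO] at hwW; exact hwW.2
  have hU'ne : U'.Nonempty := by
    obtain ⟨x, hxU⟩ := hUne
    rw [hUeq] at hxU
    obtain ⟨y, hyV, hyB⟩ := mem_closure_iff.mp hxU.1 V hV hxU.2
    exact ⟨y, hBVU' ⟨hyB, hyV⟩⟩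
  have hU'B : U' ⊆ B := by
    rintro x ⟨hxU, hxO⟩
    have hxW : h x ∈ W := by rw [hWCO]; exact ⟨hclWC (hUclW x hxU), hxO⟩
    have : g (h x) ∈ B := mem_image_of_mem g hxW
    rwa [hgl x] at this
  -- U' is relatively open in U
  obtain ⟨V₄, hV₄, hV₄eq⟩ := (continuousOn_iff'.mp hhU) O hOopen
  have hU'eq : U' = closure B ∩ (V ∩ V₄) := by
    have h1 : U' = V₄ ∩ U := by rw [hU', inter_comm U, hV₄eq]
    rw [h1, hUeq]
    ext x
    simp only [mem_inter_iff]
    tauto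
  have hU'LC : LocClosed U' := ⟨closure B, V ∩ V₄, isClosed_closure, hV.inter hV₄, hU'eq⟩
  have hU'Beq : U' = B ∩ (V ∩ V₄) := by
    apply Subset.antisymm
    · exact fun x hx => ⟨hU'B hx, (hU'eq ▸ hx).2⟩
    · intro x hx
      rw [hU'eq]; exact ⟨subset_closure hx.1, hx.2⟩
  -- the image h '' U' is relatively open in W
  obtain ⟨V₅, hV₅, hV₅eq⟩ := (continuousOn_iff'.mp hgW) (V ∩ V₄) (hV.inter hV₄)
  have hhU'img : h '' U' = W ∩ V₅ := by
    have h1 : h '' U' = g ⁻¹' (V ∩ V₄) ∩ W := by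
      apply Subset.antisymm
      · rintro _ ⟨x, hxU', rfl⟩
        have hxB : x ∈ B := hU'B hxU'
        obtain ⟨w, hwW, rfl⟩ := hxB
        rw [hgr w]
        refine ⟨?_, hwW⟩
        show g w ∈ V ∩ V₄
        exact (hU'Beq ▸ hxU').2
      · rintro y ⟨hyV, hyW⟩
        have : g y ∈ U' := by rw [hU'Beq]; exact ⟨mem_image_of_mem g hyW, hyV⟩
        exact ⟨g y, this, hgr y⟩
    rw [h1, hV₅eq, inter_comm]
  have hU'img_mgr : MgrIn (h '' U') := by rw [hhU'img]; exact hWmg.inter_open hV₅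
  have hU'W : h '' U' ⊆ W := by rw [hhU'img]; exact inter_subset_left
  have hU'mgr : MgrIn U' :=
    mgr_transfer hgl (hhU.mono (by rw [hU']; exact inter_subset_left))
      (hgW.mono hU'W) hU'img_mgr
  exact ⟨U', hU'ne, hU'LC, hU'mgr⟩

/-- Characterization: every closed subspace is Baire iff there is no nonempty
locally closed subset meager in itself. -/
lemma closed_baire_iff {Z : Type*} [TopologicalSpace Z] :
    (∀ C : Set Z, IsClosed C → BaireSpace ↥C) ↔
    ¬ ∃ A : Set Z, A.Nonempty ∧ LocClosed A ∧ MgrIn A := by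
  constructor
  · rintro hyp ⟨A, hne, hLC, hmg⟩
    have hE : MgrIn (closure A) := mgrIn_closure hmg hLC
    obtain ⟨N, hN, hcov⟩ := hE
    have : BaireSpace ↥(closure A) := hyp _ isClosed_closure
    have hNE : Nonempty ↥(closure A) := ⟨⟨hne.choose, subset_closure hne.choose_spec⟩⟩
    set G : ℕ → Set ↥(closure A) := fun n => (Subtype.val ⁻¹' closure (N n))ᶜ with hG
    have hGo : ∀ n, IsOpen (G n) :=
      fun n => (isClosed_closure.preimage continuous_subtype_val).isOpen_compl
    have hGd : ∀ n, Dense (G n) := by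
      intro n
      rw [dense_iff_inter_open]
      rintro U hU ⟨⟨x, hxE⟩, hxU⟩
      obtain ⟨Vamb, hVamb, rfl⟩ := isOpen_induced_iff.mp hU
      by_contra hempty
      rw [not_nonempty_iff_eq_empty] at hempty
      have hsub : closure A ∩ Vamb ⊆ closure (N n) := by
        rintro y ⟨hyE, hyV⟩
        by_contra hyN
        have : (⟨y, hyE⟩ : ↥(closure A)) ∈ (Subtype.val ⁻¹' Vamb) ∩ G n := ⟨hyV, hyN⟩
        rw [hempty] at this
        exact notMem_empty _ this
      exact eq_empty_iff_forall_notMem.mp (hN n Vamb hVamb hsub) x ⟨hxE, hxU⟩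
    have hdense : Dense (⋂ n, G n) := BaireSpace.baire_property G hGo hGd
    obtain ⟨⟨y, hyE⟩, hy⟩ := hdense.nonempty
    obtain ⟨s, ⟨m, rfl⟩, hm⟩ := hcov hyE
    exact (mem_iInter.mp hy m) (subset_closure hm)
  · intro hyp C hC
    constructor
    intro f hfo hfd
    rw [dense_iff_inter_open]
    rintro U hU ⟨⟨x, hxC⟩, hxU⟩
    obtain ⟨Vamb, hVamb, rfl⟩ := isOpen_induced_iff.mp hU
    by_contra hempty
    rw [not_nonempty_iff_eq_empty] at hempty
    -- ambient open sets for the f n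
    have hW : ∀ n, ∃ W : Set Z, IsOpen W ∧ Subtype.val ⁻¹' W = f n :=
      fun n => isOpen_induced_iff.mp (hfo n)
    choose W hWo hWeq using hW
    apply hyp
    refine ⟨C ∩ Vamb, ⟨x, hxC, hxU⟩, ⟨C, Vamb, hC, hVamb, rfl⟩,
      fun n => C \ W n, fun n => ?_, ?_⟩
    · -- NwdIn (C ∩ Vamb) (C \ W n)
      intro V' hV' hsub
      rw [eq_empty_iff_forall_notMem]
      rintro a ⟨⟨haC, haV⟩, haV'⟩
      -- density of f n gives a point y ∈ C ∩ Vamb ∩ V' ∩ W n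
      have := dense_iff_inter_open.mp (hfd n) (Subtype.val ⁻¹' (Vamb ∩ V'))
        (isOpen_induced_iff.mpr ⟨_, hVamb.inter hV', rfl⟩) ⟨⟨a, haC⟩, haV, haV'⟩
      obtain ⟨⟨y, hyC⟩, ⟨hyV, hyV'⟩, hyf⟩ := this
      have hyW : y ∈ W n := by rw [← hWeq n] at hyf; exact hyf
      have hycl : y ∈ closure (C \ W n) := hsub ⟨⟨hyC, hyV⟩, hyV'⟩
      obtain ⟨z, hzW, hzN⟩ := mem_closure_iff.mp hycl (W n) (hWo n) hyW
      exact hzN.2 hzW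
    · -- cover
      intro a ⟨haC, haV⟩
      by_contra hno
      rw [mem_iUnion] at hno
      push_neg at hno
      have : (⟨a, haC⟩ : ↥C) ∈ Subtype.val ⁻¹' Vamb ∩ ⋂ n, f n := by
        refine ⟨haV, mem_iInter.mpr fun n => ?_⟩
        rw [← hWeq n]
        by_contra hc
        exact hno n ⟨haC, hc⟩
      rw [hempty] at this
      exact notMem_empty _ this

theorem hereditarilyBaire_preserved_by_weakHomeomorphism
    {X Y : Type*} [TopologicalSpace X] [TopologicalSpace Y]
    (h : X → Y) (g : Y → X)
    (hgl : Function.LeftInverse g h) (hgr : Function.RightInverse g h)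
    (hh : WeaklyDiscontinuous h) (hg : WeaklyDiscontinuous g) :
    (∀ C : Set X, IsClosed C → BaireSpace ↥C) ↔
    (∀ C : Set Y, IsClosed C → BaireSpace ↥C) := by
  constructor
  · intro hX
    rw [closed_baire_iff]
    rintro ⟨A, hne, hLC, hmg⟩
    exact closed_baire_iff.mp hX (main_step h g hgl hgr hh hg hne hLC hmg)
  · intro hY
    rw [closed_baire_iff]
    rintro ⟨A, hne, hLC, hmg⟩
    exact closed_baire_iff.mp hY (main_step g h hgr hgl hg hh hne hLC hmg)
end

section
/- Let X be a metrizable topological space. Then X is Polish (separable and completely metrizable) if and only if X is weakly homeomorphic to a Polish space. -/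
open Set Function Topology

universe u

section WeakHomeoAux

open TopologicalSpace Filter

universe v

lemma wh_closure_remainder {Z : Type*} [TopologicalSpace Z] (C : Set Z)
    (V : Ordinal.{v} → Set Z)
    (h : ∀ o, ∃ W, IsOpen W ∧ V o = (C \ ⋃ o' < o, V o') ∩ W) (o : Ordinal.{v}) :
    closure (C \ ⋃ o' < o, V o') ∩ C ⊆ C \ ⋃ o' < o, V o' := by
  rintro x ⟨hxcl, hxC⟩
  refine ⟨hxC, ?_⟩
  intro hx
  simp only [mem_iUnion] at hx
  obtain ⟨o', ho', hxV⟩ := hx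
  obtain ⟨W, hW, hVeq⟩ := h o'
  have hxW : x ∈ W := by rw [hVeq] at hxV; exact hxV.2
  obtain ⟨z, hzW, hz⟩ := mem_closure_iff.1 hxcl W hW hxW
  -- z ∈ (C \ ⋃ o'' < o, V o'') and z ∈ W; since o' < o, z avoids V o' but z ∈ Γ o' ∩ W = V o'
  have hzΓo' : z ∈ C \ ⋃ o'' < o', V o'' := by
    refine ⟨hz.1, fun hmem => hz.2 ?_⟩
    simp only [mem_iUnion] at hmem ⊢
    obtain ⟨i, hi, hzi⟩ := hmem
    exact ⟨i, hi.trans ho', hzi⟩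
  have hzV : z ∈ V o' := by rw [hVeq]; exact ⟨hzΓo', hzW⟩
  exact hz.2 (mem_iUnion.2 ⟨o', mem_iUnion.2 ⟨ho', hzV⟩⟩)

lemma wh_exists_decomp {Z : Type u} [TopologicalSpace Z] [SecondCountableTopology Z]
    (P : Set Z → Prop)
    (hstep : ∀ A : Set Z, A.Nonempty →
      ∃ V, V ⊆ A ∧ V.Nonempty ∧ (∃ W, IsOpen W ∧ V = A ∩ W) ∧ P V) :
    ∃ (l : Ordinal.{u}) (V : Ordinal.{u} → Set Z),
      (Set.Iio l).Countable ∧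
      (∀ o, ¬ o < l → V o = ∅) ∧
      (∀ o < l, P (V o)) ∧
      (∀ o, ∃ W, IsOpen W ∧ V o = (univ \ ⋃ o' < o, V o') ∩ W) ∧
      (⋃ o < l, V o) = univ := by
  classical
  -- choice function
  let χ : Set Z → Set Z := fun A => if h : A.Nonempty then (hstep A h).choose else ∅
  have hχ : ∀ A (h : A.Nonempty), χ A ⊆ A ∧ (χ A).Nonempty ∧
      (∃ W, IsOpen W ∧ χ A = A ∩ W) ∧ P (χ A) := by
    intro A h
    simp only [χ, dif_pos h]
    exact (hstep A h).choose_spec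
  have hχ0 : ∀ A, ¬ A.Nonempty → χ A = ∅ := fun A h => by simp only [χ, dif_neg h]
  -- transfinite recursion
  let B : Ordinal.{u} → Set Z :=
    Ordinal.lt_wf.fix (fun o ih => univ \ ⋃ o' : Set.Iio o, χ (ih o'.1 o'.2))
  have hB : ∀ o, B o = univ \ ⋃ o' : Set.Iio o, χ (B o'.1) := fun o =>
    Ordinal.lt_wf.fix_eq _ o
  set V : Ordinal.{u} → Set Z := fun o => χ (B o) with hV
  have hB' : ∀ o, B o = univ \ ⋃ o' < o, V o' := by
    intro o
    rw [hB o]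
    congr 1
    ext x
    simp only [mem_iUnion, Subtype.exists, Set.mem_Iio, exists_prop]
    exact Iff.rfl
  have hmono : ∀ {o₁ o₂ : Ordinal.{u}}, o₁ ≤ o₂ → B o₂ ⊆ B o₁ := by
    intro o₁ o₂ h
    rw [hB' o₁, hB' o₂]
    apply diff_subset_diff_right
    exact iUnion_mono fun o' => iUnion_mono' fun h' => ⟨h'.trans_le h, subset_rfl⟩
  have hVsub : ∀ o, V o ⊆ B o := by
    intro o
    by_cases h : (B o).Nonempty
    · exact (hχ _ h).1
    · rw [hV]; simp only [hχ0 _ h]; exact empty_subset _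
  have hdisj : ∀ {o' o : Ordinal.{u}}, o' < o → ∀ {x}, x ∈ B o → x ∉ V o' := by
    intro o' o h x hxB hxV
    rw [hB' o] at hxB
    exact hxB.2 (mem_iUnion.2 ⟨o', mem_iUnion.2 ⟨h, hxV⟩⟩)
  have hVopen : ∀ o, ∃ W, IsOpen W ∧ V o = B o ∩ W := by
    intro o
    by_cases h : (B o).Nonempty
    · exact (hχ _ h).2.2.1
    · exact ⟨∅, isOpen_empty, by rw [hV]; simp [hχ0 _ h]⟩
  -- basic sets witnessing each nonempty step
  have key : ∀ o : Ordinal.{u}, (B o).Nonempty →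
      ∃ b ∈ countableBasis Z, (b ∩ B o).Nonempty ∧ b ∩ B o ⊆ V o := by
    intro o h
    obtain ⟨W, hW, hVeq⟩ := hVopen o
    obtain ⟨x, hx⟩ := (hχ _ h).2.1
    have hx2 : x ∈ V o := hx
    have hxW : x ∈ W := by rw [hVeq] at hx2; exact hx2.2
    obtain ⟨b, hb, hxb, hbW⟩ := (isBasis_countableBasis Z).exists_subset_of_mem_open hxW hW
    refine ⟨b, hb, ⟨x, hxb, hVsub o hx2⟩, ?_⟩
    rw [hVeq]
    exact fun y hy => ⟨hy.2, hbW hy.1⟩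
  have keyinj : ∀ {o₁ o₂ : Ordinal.{u}} {b : Set Z}, o₁ < o₂ →
      (b ∩ B o₂).Nonempty → b ∩ B o₁ ⊆ V o₁ → False := by
    intro o₁ o₂ b h hne hsub
    obtain ⟨x, hxb, hxB⟩ := hne
    have h1 : x ∈ V o₁ := hsub ⟨hxb, hmono h.le hxB⟩
    have h2 : x ∈ B (o₁ + 1) := hmono (by
      rw [Ordinal.add_one_eq_succ]; exact Order.succ_le_of_lt h) hxB
    exact hdisj (o := o₁ + 1) (o' := o₁)
      (by rw [Ordinal.add_one_eq_succ]; exact Order.lt_succ _) h2 h1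
  -- termination
  have hstop : ∃ o : Ordinal.{u}, B o = ∅ := by
    by_contra hcon
    push_neg at hcon
    have hne : ∀ o : Ordinal.{u}, (B o).Nonempty := hcon
    choose b hbmem hbne hbsub using fun o => key o (hne o)
    have hinj : Function.Injective (fun o : Ordinal.{u} => (⟨b o, hbmem o⟩ : countableBasis Z)) := by
      intro o₁ o₂ h
      have hbeq : b o₁ = b o₂ := congrArg Subtype.val h
      by_contra hne'
      rcases lt_or_gt_of_ne hne' with h' | h'
      · exact keyinj h' (hbeq ▸ hbne o₂) (hbsub o₁)
      · exact keyinj h' (hbeq.symm ▸ hbne o₁) (hbsub o₂)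
    haveI : Countable (countableBasis Z) := (countable_countableBasis Z).to_subtype
    exact not_small_ordinal.{u} (small_of_injective hinj)
  let l : Ordinal.{u} := Ordinal.lt_wf.min {o | B o = ∅} hstop
  have hl_empty : B l = ∅ := Ordinal.lt_wf.min_mem {o | B o = ∅} hstop
  have hl_ne : ∀ o < l, (B o).Nonempty := by
    intro o ho
    by_contra h
    have : B o = ∅ := not_nonempty_iff_eq_empty.1 h
    exact Ordinal.lt_wf.not_lt_min {o | B o = ∅} this ho
  refine ⟨l, V, ?_, ?_, ?_, ?_, ?_⟩
  · -- countability
    choose b hbmem hbne hbsub using fun (o : Set.Iio l) => key o.1 (hl_ne o.1 o.2)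
    have hinj : Function.Injective
        (fun o : Set.Iio l => (⟨b o, hbmem o⟩ : countableBasis Z)) := by
      intro o₁ o₂ h
      have hbeq : b o₁ = b o₂ := congrArg Subtype.val h
      by_contra hne'
      have hne'' : o₁.1 ≠ o₂.1 := fun hh => hne' (Subtype.ext hh)
      rcases lt_or_gt_of_ne hne'' with h' | h'
      · exact keyinj h' (hbeq ▸ hbne o₂) (hbsub o₁)
      · exact keyinj h' (hbeq.symm ▸ hbne o₁) (hbsub o₂)
    haveI : Countable (countableBasis Z) := (countable_countableBasis Z).to_subtype
    haveI : Countable (Set.Iio l) := hinj.countable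
    exact Set.countable_coe_iff.1 this
  · intro o ho
    have : B o = ∅ := subset_empty_iff.1 (hl_empty ▸ hmono (not_lt.1 ho))
    rw [hV]
    exact hχ0 _ (by rw [this]; exact not_nonempty_empty)
  · exact fun o ho => (hχ _ (hl_ne o ho)).2.2.2
  · intro o
    obtain ⟨W, hW, hVeq⟩ := hVopen o
    exact ⟨W, hW, by rw [hVeq, hB' o]⟩
  · have := hB' l
    rw [hl_empty, eq_comm, diff_eq_empty] at this
    exact univ_subset_iff.1 this

lemma wh_isGδ_polishSpace {α : Type*} [TopologicalSpace α] [PolishSpace α] {s : Set α}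
    (hs : IsGδ s) : PolishSpace s := by
  obtain ⟨T, hTo, hTc, rfl⟩ := hs
  rcases eq_empty_or_nonempty T with rfl | hTne
  · rw [sInter_empty]
    infer_instance
  obtain ⟨u, rfl⟩ := hTc.exists_eq_range hTne
  have hu : ∀ n, IsOpen (u n) := fun n => hTo _ (mem_range_self n)
  haveI : ∀ n, PolishSpace (u n) := fun n => (hu n).polishSpace
  rw [sInter_range]
  set s : Set α := ⋂ n, u n with hs
  let φ : s → ∀ n, u n := fun x n => ⟨x.1, mem_iInter.1 x.2 n⟩
  have hcont : Continuous φ := continuous_pi fun n => (continuous_subtype_val).subtype_mk _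
  have hproj : Continuous (fun z : ∀ n, u n => (z 0 : α)) := (continuous_apply 0).subtype_val
  have hcomp : (fun z : ∀ n, u n => (z 0 : α)) ∘ φ = (Subtype.val : s → α) := rfl
  have hind : IsInducing φ := .of_comp hcont hproj (hcomp ▸ IsInducing.subtypeVal)
  have hinj : Function.Injective φ := fun a b h =>
    Subtype.ext (congrArg (fun z : ∀ n, u n => (z 0 : α)) h)
  have hrange : range φ = ⋂ n, {z : ∀ n, u n | (z n : α) = (z 0 : α)} := by
    ext z
    simp only [mem_range, mem_iInter, mem_setOf_eq]
    constructor
    · rintro ⟨x, rfl⟩ n; rfl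
    · intro h
      have hx : (z 0 : α) ∈ s := mem_iInter.2 fun n => h n ▸ (z n).2
      exact ⟨⟨(z 0 : α), hx⟩, funext fun n => Subtype.ext (h n).symm⟩
  have hclosed : IsClosed (range φ) := by
    rw [hrange]
    exact isClosed_iInter fun n =>
      isClosed_eq ((continuous_apply n).subtype_val) ((continuous_apply 0).subtype_val)
  exact (IsClosedEmbedding.mk ⟨hind, hinj⟩ hclosed).polishSpace

lemma wh_isGδ_range_of_embedding {M : Type*} [MetricSpace M] {Q : Type*} [TopologicalSpace Q]
    [PolishSpace Q] {φ : Q → M} (hφ : IsEmbedding φ) : IsGδ (range φ) := by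
  letI := upgradeIsCompletelyMetrizable Q
  set T : ℕ → Set M := fun n => {x : M | ∃ O : Set M, IsOpen O ∧ x ∈ O ∧
    ∀ a b : Q, φ a ∈ O → φ b ∈ O → dist a b < 1 / (n + 1)} with hT
  have hTopen : ∀ n, IsOpen (T n) := by
    intro n
    rw [isOpen_iff_mem_nhds]
    rintro x ⟨O, hO, hxO, hOd⟩
    exact Filter.mem_of_superset (hO.mem_nhds hxO) (fun y hy => ⟨O, hO, hy, hOd⟩)
  have hmain : range φ = closure (range φ) ∩ ⋂ n, T n := by
    apply Subset.antisymm
    · rintro _ ⟨q, rfl⟩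
      refine ⟨subset_closure (mem_range_self q), mem_iInter.2 fun n => ?_⟩
      have hball : Metric.ball q (1 / (n + 1) / 2) ∈ nhds q :=
        Metric.ball_mem_nhds q (by positivity)
      rw [hφ.isInducing.nhds_eq_comap, Filter.mem_comap] at hball
      obtain ⟨U, hU, hUsub⟩ := hball
      obtain ⟨O, hOU, hO, hxO⟩ := mem_nhds_iff.1 hU
      refine ⟨O, hO, hxO, fun a b ha hb => ?_⟩
      have ha' : dist a q < 1 / (n + 1) / 2 := hUsub (hOU ha)
      have hb' : dist b q < 1 / (n + 1) / 2 := hUsub (hOU hb)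
      calc dist a b ≤ dist a q + dist q b := dist_triangle _ _ _
        _ < 1 / (n + 1) / 2 + 1 / (n + 1) / 2 := by
            rw [dist_comm q b]; exact add_lt_add ha' hb'
        _ = 1 / (n + 1) := add_halves _
    · rintro x ⟨hxcl, hxT⟩
      have hO : ∀ n : ℕ, ∃ O : Set M, IsOpen O ∧ x ∈ O ∧
          ∀ a b : Q, φ a ∈ O → φ b ∈ O → dist a b < 1 / (n + 1) := fun n => mem_iInter.1 hxT n
      choose O hOopen hxO hOd using hO
      set U : ℕ → Set M := fun n => (⋂ k : Fin (n + 1), O k) ∩ Metric.ball x (1 / (n + 1))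
        with hU
      have hUopen : ∀ n, IsOpen (U n) :=
        fun n => (isOpen_iInter_of_finite fun k : Fin (n + 1) => hOopen k).inter Metric.isOpen_ball
      have hxU : ∀ n, x ∈ U n :=
        fun n => ⟨mem_iInter.2 fun k => hxO k, Metric.mem_ball_self (by positivity)⟩
      have hq : ∀ n : ℕ, ∃ q : Q, φ q ∈ U n := by
        intro n
        obtain ⟨y, hyU, q, rfl⟩ := mem_closure_iff.1 hxcl (U n) (hUopen n) (hxU n)
        exact ⟨q, hyU⟩
      choose q hq using hq
      have hqO : ∀ {k n : ℕ}, k ≤ n → φ (q n) ∈ O k := by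
        intro k n hkn
        exact mem_iInter.1 (hq n).1 ⟨k, Nat.lt_succ_of_le hkn⟩
      have hcauchy : CauchySeq q := by
        rw [Metric.cauchySeq_iff']
        intro ε hε
        obtain ⟨N, hN⟩ := exists_nat_one_div_lt hε
        refine ⟨N, fun n hn => lt_trans ?_ hN⟩
        exact hOd N _ _ (hqO hn) (hqO le_rfl)
      obtain ⟨p, hp⟩ := cauchySeq_tendsto_of_complete hcauchy
      have h1 : Filter.Tendsto (fun n => φ (q n)) Filter.atTop (nhds (φ p)) :=
        ((hφ.continuous.tendsto p).comp hp)
      have h2 : Filter.Tendsto (fun n => φ (q n)) Filter.atTop (nhds x) := by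
        rw [Metric.tendsto_atTop]
        intro ε hε
        obtain ⟨N, hN⟩ := exists_nat_one_div_lt hε
        refine ⟨N, fun n hn => ?_⟩
        have : φ (q n) ∈ Metric.ball x (1 / (n + 1)) := (hq n).2
        rw [Metric.mem_ball] at this
        refine lt_of_lt_of_le this (le_trans ?_ hN.le)
        apply one_div_le_one_div_of_le (by positivity)
        exact_mod_cast add_le_add_left (Nat.cast_le.2 hn) 1
      have : x = φ p := tendsto_nhds_unique h2 h1
      exact this ▸ mem_range_self p
  rw [hmain]
  exact (isClosed_closure.isGδ).inter (IsGδ.iInter_of_isOpen hTopen)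

lemma wh_isGδ_scattered {M : Type*} [MetricSpace M] (l : Ordinal.{v})
    (hl : (Set.Iio l).Countable) (V : Ordinal.{v} → Set M)
    (hopen : ∀ o, ∃ W, IsOpen W ∧ V o = ((⋃ o' < l, V o') \ ⋃ o' < o, V o') ∩ W)
    (hGδ : ∀ o < l, IsGδ (V o)) :
    IsGδ (⋃ o < l, V o) := by
  set C : Set M := ⋃ o' < l, V o' with hC
  set Γ : Ordinal.{v} → Set M := fun o => C \ ⋃ o' < o, V o' with hΓ
  have hΓanti : ∀ {o₁ o₂ : Ordinal.{v}}, o₁ ≤ o₂ → Γ o₂ ⊆ Γ o₁ := by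
    intro o₁ o₂ h
    exact diff_subset_diff_right
      (iUnion_mono fun o' => iUnion_mono' fun h' => ⟨h'.trans_le h, subset_rfl⟩)
  have hVΓ : ∀ o, V o ⊆ Γ o := by
    intro o
    obtain ⟨W, _, hVeq⟩ := hopen o
    rw [hVeq]
    exact inter_subset_left
  have hΓV : ∀ {o' o : Ordinal.{v}}, o' < o → ∀ {x}, x ∈ Γ o → x ∉ V o' := by
    intro o' o h x hx hxV
    exact hx.2 (mem_iUnion.2 ⟨o', mem_iUnion.2 ⟨h, hxV⟩⟩)
  have hΓ0 : Γ 0 = C := by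
    rw [hΓ]
    simp [not_lt_zero]
  have hΓsucc : ∀ o, Γ (o + 1) = Γ o \ V o := by
    intro o
    rw [hΓ]
    simp only
    rw [diff_diff]
    congr 1
    ext x
    simp only [mem_iUnion, mem_union, exists_prop]
    constructor
    · rintro ⟨o', ho', hx⟩
      rw [Ordinal.add_one_eq_succ, Order.lt_succ_iff] at ho'
      rcases ho'.lt_or_eq with h' | rfl
      · exact Or.inl ⟨o', h', hx⟩
      · exact Or.inr hx
    · rintro (⟨o', ho', hx⟩ | hx)
      · exact ⟨o', ho'.trans (by rw [Ordinal.add_one_eq_succ]; exact Order.lt_succ o), hx⟩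
      · exact ⟨o, by rw [Ordinal.add_one_eq_succ]; exact Order.lt_succ o, hx⟩
  have hΓl : Γ l = ∅ := by
    rw [hΓ]
    simp only [← hC, diff_self]
  set F : Ordinal.{v} → Set M := fun o => closure (Γ o) with hF
  have hcl : ∀ o, F o ∩ C ⊆ Γ o := fun o => wh_closure_remainder C V hopen o
  have hCF : ∀ o, C ∩ F o = Γ o := by
    intro o
    apply Subset.antisymm
    · intro x hx
      exact hcl o ⟨hx.2, hx.1⟩
    · intro x hx
      exact ⟨hx.1, subset_closure hx⟩
  have hFanti : ∀ {o₁ o₂ : Ordinal.{v}}, o₁ ≤ o₂ → F o₂ ⊆ F o₁ :=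
    fun h => closure_mono (hΓanti h)
  have hVF : ∀ o, V o ∩ F (o + 1) = ∅ := by
    intro o
    obtain ⟨W, hW, hVeq⟩ := hopen o
    have h1 : W ∩ Γ (o + 1) = ∅ := by
      rw [eq_empty_iff_forall_notMem]
      rintro x ⟨hxW, hxΓ⟩
      have hxΓo : x ∈ Γ o := hΓanti (by
        rw [Ordinal.add_one_eq_succ]; exact (Order.lt_succ o).le) hxΓ
      have : x ∈ V o := by rw [hVeq]; exact ⟨hxΓo, hxW⟩
      exact hΓV (by rw [Ordinal.add_one_eq_succ]; exact Order.lt_succ o) hxΓ this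
    have h2 : W ∩ F (o + 1) = ∅ := by
      rw [← subset_empty_iff]
      calc W ∩ F (o + 1) ⊆ closure (W ∩ Γ (o + 1)) := hW.inter_closure
        _ = ∅ := by rw [h1, closure_empty]
    rw [← subset_empty_iff, ← h2]
    intro x hx
    exact ⟨by have := hx.1; rw [hVeq] at this; exact this.2, hx.2⟩
  set H : Ordinal.{v} → Set M := fun o => (F o)ᶜ ∪ (F (o + 1) ∪ V o) with hH
  set K : Ordinal.{v} → Set M :=
    fun o => (⋂ o' < o, F o')ᶜ ∪ closure (⋂ o' < o, Γ o') with hK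
  have main : C = (F 0 ∩ ⋂ o ∈ Set.Iio l, H o) ∩ ⋂ o ∈ Set.Iic l, K o := by
    apply Subset.antisymm
    · intro x hx
      refine ⟨⟨by rw [← hΓ0] at hx; exact subset_closure hx, ?_⟩, ?_⟩
      · refine mem_iInter₂.2 fun o _ => ?_
        by_cases hxF : x ∈ F o
        · have hxΓ : x ∈ Γ o := hCF o ▸ ⟨hx, hxF⟩
          by_cases hxV : x ∈ V o
          · exact Or.inr (Or.inr hxV)
          · exact Or.inr (Or.inl (subset_closure (by rw [hΓsucc o]; exact ⟨hxΓ, hxV⟩)))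
        · exact Or.inl hxF
      · refine mem_iInter₂.2 fun o _ => ?_
        by_cases hxF : x ∈ ⋂ o' < o, F o'
        · refine Or.inr (subset_closure (mem_iInter₂.2 fun o' ho' => ?_))
          exact hCF o' ▸ ⟨hx, mem_iInter₂.1 hxF o' ho'⟩
        · exact Or.inl hxF
    · rintro x ⟨⟨hxF0, hxH⟩, hxK⟩
      by_contra hxC
      have hSl : x ∉ F l := by
        rw [hF]
        simp only [hΓl, closure_empty]
        exact notMem_empty x
      set S : Set Ordinal.{v} := {o | x ∉ F o} with hS
      have hSne : S.Nonempty := ⟨l, hSl⟩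
      set α := Ordinal.lt_wf.min S hSne with hα
      have hxα : x ∉ F α := Ordinal.lt_wf.min_mem S hSne
      have hβ : ∀ β < α, x ∈ F β := by
        intro β hβα
        by_contra hcon
        exact Ordinal.lt_wf.not_lt_min S hcon hβα
      have hαl : α ≤ l := not_lt.1 (Ordinal.lt_wf.not_lt_min S hSl)
      rcases Ordinal.zero_or_succ_or_isSuccLimit α with h0 | ⟨β, hβeq⟩ | hlim
      · rw [h0] at hxα
        exact hxα hxF0
      · have hβα : β < α := hβeq ▸ Order.lt_succ β
        have hβl : β < l := lt_of_lt_of_le hβα hαl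
        rcases mem_iInter₂.1 hxH β hβl with h | h | h
        · exact h (hβ β hβα)
        · rw [Ordinal.add_one_eq_succ, hβeq] at h
          exact hxα h
        · exact hxC (hC ▸ mem_iUnion₂.2 ⟨β, hβl, h⟩)
      · rcases mem_iInter₂.1 hxK α hαl with h | h
        · exact h (mem_iInter₂.2 fun β hβα => hβ β hβα)
        · have hΓlim : (⋂ o' < α, Γ o') = Γ α := by
            apply Subset.antisymm
            · intro y hy
              refine ⟨(mem_iInter₂.1 hy 0 (pos_iff_ne_zero.2 hlim.ne_bot)).1, ?_⟩
              intro hmem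
              obtain ⟨o', ho', hyV⟩ := mem_iUnion₂.1 hmem
              have : y ∈ Γ (Order.succ o') := mem_iInter₂.1 hy _ (hlim.succ_lt ho')
              exact hΓV (Order.lt_succ o') this hyV
            · intro y hy
              exact mem_iInter₂.2 fun o' ho' => hΓanti ho'.le hy
          rw [hΓlim] at h
          exact hxα h
  rw [main]
  have hIic : (Set.Iic l).Countable := by
    rw [← Set.Iio_insert]
    exact hl.insert l
  refine IsGδ.inter (IsGδ.inter isClosed_closure.isGδ ?_) ?_
  · refine IsGδ.biInter hl fun o ho => ?_
    exact IsGδ.union (isClosed_closure.isOpen_compl.isGδ)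
      (IsGδ.union isClosed_closure.isGδ (hGδ o ho))
  · refine IsGδ.biInter hIic fun o _ => ?_
    refine IsGδ.union ?_ isClosed_closure.isGδ
    exact (IsOpen.isGδ (by
      exact (isClosed_iInter fun o' => isClosed_iInter fun _ => isClosed_closure).isOpen_compl))

end WeakHomeoAux

open TopologicalSpace Filter in
theorem polish_iff_weaklyHomeomorphic_to_polish
    {X : Type u} [TopologicalSpace X] [TopologicalSpace.MetrizableSpace X] :
    PolishSpace X ↔
      ∃ (Y : Type u) (tY : TopologicalSpace Y), PolishSpace Y ∧ WeaklyHomeomorphic X Y := by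
  constructor
  · intro hX
    refine ⟨X, ‹_›, hX, id, id, fun _ => rfl, fun _ => rfl, ?_, ?_⟩ <;>
    · intro A hA
      exact ⟨A, subset_rfl, hA, ⟨univ, isOpen_univ, (inter_univ A).symm⟩, continuousOn_id⟩
  · rintro ⟨Y, tY, hY, f, g, hgf, hfg, hf, hg⟩
    -- basic facts about f and g
    have hginj : Function.Injective g := hfg.injective
    have hfinj : Function.Injective f := hgf.injective
    have hgsurj : Function.Surjective g := hgf.surjective
    have hfsurj : Function.Surjective f := hfg.surjective
    have hgimg : ∀ S : Set Y, g '' S = f ⁻¹' S := by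
      intro S
      ext x
      constructor
      · rintro ⟨y, hy, rfl⟩
        rwa [mem_preimage, hfg y]
      · intro hx
        exact ⟨f x, hx, hgf x⟩
    -- Step 1: decomposition of Y
    have stepY : ∀ B : Set Y, B.Nonempty →
        ∃ V, V ⊆ B ∧ V.Nonempty ∧ (∃ W, IsOpen W ∧ V = B ∩ W) ∧
          (ContinuousOn g V ∧ ContinuousOn f (g '' V)) := by
      intro B hB
      obtain ⟨V₁, hV₁B, hV₁ne, ⟨W₁, hW₁, hV₁eq⟩, hgV₁⟩ := hg B hB
      obtain ⟨U, hUsub, hUne, ⟨O, hO, hUeq⟩, hfU⟩ := hf (g '' V₁) (hV₁ne.image g)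
      obtain ⟨O', hO', hO'eq⟩ := (continuousOn_iff'.1 hgV₁) O hO
      refine ⟨V₁ ∩ g ⁻¹' O, inter_subset_left.trans hV₁B, ?_, ?_, hgV₁.mono inter_subset_left, ?_⟩
      · obtain ⟨u, hu⟩ := hUne
        rw [hUeq] at hu
        obtain ⟨⟨y₀, hy₀, rfl⟩, huO⟩ := hu
        exact ⟨y₀, hy₀, by rwa [mem_preimage]⟩
      · refine ⟨W₁ ∩ O', hW₁.inter hO', ?_⟩
        have h1 : V₁ ∩ g ⁻¹' O = V₁ ∩ O' := by
          rw [inter_comm, hO'eq, inter_comm]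
        rw [h1, hV₁eq, inter_assoc]
      · have h2 : g '' (V₁ ∩ g ⁻¹' O) = U := by
          rw [Set.image_inter_preimage, ← hUeq]
        rwa [h2]
    haveI : SecondCountableTopology Y := hY.toSecondCountableTopology
    obtain ⟨l, Vy, hlc, hVy0, hPy, hVyopen, hVycover⟩ := wh_exists_decomp
      (fun V => ContinuousOn g V ∧ ContinuousOn f (g '' V)) stepY
    -- the Y-side remainders are closed
    have hByclosed : ∀ o, IsClosed (univ \ ⋃ o' < o, Vy o') := by
      intro o
      apply isClosed_of_closure_subset
      intro x hx
      exact wh_closure_remainder univ Vy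
        (fun o' => hVyopen o') o ⟨hx, mem_univ x⟩
    -- Step 2: X is separable, hence second countable
    haveI hXsep : SeparableSpace X := by
      have h1 : ∀ o (ho : o < l), IsSeparable (g '' Vy o) := by
        intro o ho
        have := (hPy o ho).1
        have hcont := continuousOn_iff_continuous_restrict.1 this
        have := isSeparable_range hcont
        rwa [Set.range_restrict] at this
      have h2 : univ ⊆ ⋃ o ∈ Set.Iio l, g '' Vy o := by
        intro x _
        have : f x ∈ ⋃ o < l, Vy o := by rw [hVycover]; exact mem_univ _
        obtain ⟨o, ho, hfo⟩ := mem_iUnion₂.1 this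
        exact mem_iUnion₂.2 ⟨o, ho, ⟨f x, hfo, hgf x⟩⟩
      haveI : Countable (Set.Iio l) := hlc.to_subtype
      have h3 : IsSeparable (⋃ o ∈ Set.Iio l, g '' Vy o) := by
        rw [biUnion_eq_iUnion]
        exact IsSeparable.iUnion fun o => h1 o.1 o.2
      exact isSeparable_univ_iff.1 (h3.mono h2)
    haveI hXsc : SecondCountableTopology X := by
      letI : MetricSpace X := TopologicalSpace.metrizableSpaceMetric X
      exact UniformSpace.secondCountable_of_separable X
    -- Step 3: decomposition of X
    obtain ⟨m, Ux, hmc, hUx0, hPx, hUxopen, hUxcover⟩ :=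
      wh_exists_decomp (fun U => ContinuousOn f U) hf
    have hAxclosed : ∀ o, IsClosed (univ \ ⋃ o' < o, Ux o') := by
      intro o
      apply isClosed_of_closure_subset
      intro x hx
      exact wh_closure_remainder univ Ux (fun o' => hUxopen o') o ⟨hx, mem_univ x⟩
    -- Step 4: ambient Polish space
    letI mX : MetricSpace X := TopologicalSpace.metrizableSpaceMetric X
    set M := UniformSpace.Completion X with hM
    set e : X → M := ((↑) : X → M) with he'
    have he : IsEmbedding e := UniformSpace.Completion.coe_isometry.isEmbedding
    haveI : SeparableSpace M :=
      UniformSpace.Completion.denseRange_coe.separableSpace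
        (UniformSpace.Completion.continuous_coe X)
    haveI hMp : PolishSpace M := inferInstance
    letI := upgradeIsCompletelyMetrizable Y
    -- Step 5: each image e '' Ux α is Gδ in M
    have keyGδ : ∀ α, α < m → IsGδ (e '' Ux α) := by
      intro α hα
      set V2 : Ordinal.{u} → Set M := fun β => e '' (Ux α ∩ f ⁻¹' Vy β) with hV2
      have hcover2 : (⋃ β < l, V2 β) = e '' Ux α := by
        apply Subset.antisymm
        · refine iUnion₂_subset fun β hβ => ?_
          exact image_mono inter_subset_left
        · rintro _ ⟨x, hx, rfl⟩
          have : f x ∈ ⋃ β < l, Vy β := by rw [hVycover]; exact mem_univ _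
          obtain ⟨β, hβ, h⟩ := mem_iUnion₂.1 this
          exact mem_iUnion₂.2 ⟨β, hβ, mem_image_of_mem e ⟨hx, h⟩⟩
      have hrem : ∀ β, (e '' Ux α) \ (⋃ β' < β, V2 β') =
          e '' (Ux α ∩ f ⁻¹' (univ \ ⋃ β' < β, Vy β')) := by
        intro β
        have h1 : (⋃ β' < β, V2 β') = e '' (⋃ β' < β, Ux α ∩ f ⁻¹' Vy β') := by
          rw [Set.image_iUnion₂]
        rw [h1, ← Set.image_diff he.injective]
        have hXeq : (Ux α \ ⋃ β' < β, Ux α ∩ f ⁻¹' Vy β')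
            = Ux α ∩ f ⁻¹' (univ \ ⋃ β' < β, Vy β') := by
          ext x
          constructor
          · rintro ⟨hxU, hnot⟩
            refine ⟨hxU, mem_univ _, fun hmem => ?_⟩
            obtain ⟨β', hβ', hV⟩ := mem_iUnion₂.1 hmem
            exact hnot (mem_iUnion₂.2 ⟨β', hβ', hxU, hV⟩)
          · rintro ⟨hxU, hpre⟩
            refine ⟨hxU, fun hmem => ?_⟩
            obtain ⟨β', hβ', hx2⟩ := mem_iUnion₂.1 hmem
            exact hpre.2 (mem_iUnion₂.2 ⟨β', hβ', hx2.2⟩)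
        rw [hXeq]
      have hopen2 : ∀ β, ∃ W, IsOpen W ∧
          V2 β = ((⋃ β' < l, V2 β') \ ⋃ β' < β, V2 β') ∩ W := by
        intro β
        obtain ⟨Wy, hWy, hVyeq⟩ := hVyopen β
        obtain ⟨OX, hOX, hOXeq⟩ := (continuousOn_iff'.1 (hPx α hα)) Wy hWy
        obtain ⟨WM, hWM, hWMeq⟩ := (he.isInducing.isOpen_iff).1 hOX
        refine ⟨WM, hWM, ?_⟩
        rw [hcover2, hrem β, ← Set.image_inter_preimage, hWMeq]
        have hXeq : (Ux α ∩ f ⁻¹' Vy β)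
            = (Ux α ∩ f ⁻¹' (univ \ ⋃ β' < β, Vy β')) ∩ OX := by
          ext x
          constructor
          · rintro ⟨hxU, hxV⟩
            have hxV' : f x ∈ (univ \ ⋃ o' < β, Vy o') ∩ Wy := by rw [← hVyeq]; exact hxV
            have hx3 : x ∈ OX ∩ Ux α := by rw [← hOXeq]; exact ⟨hxV'.2, hxU⟩
            exact ⟨⟨hxU, hxV'.1⟩, hx3.1⟩
          · rintro ⟨⟨hxU, hxB⟩, hxO⟩
            have hx3 : x ∈ f ⁻¹' Wy ∩ Ux α := by rw [hOXeq]; exact ⟨hxO, hxU⟩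
            refine ⟨hxU, ?_⟩
            have : f x ∈ (univ \ ⋃ o' < β, Vy o') ∩ Wy := ⟨hxB, hx3.1⟩
            rw [← hVyeq] at this
            exact this
        show e '' (Ux α ∩ f ⁻¹' Vy β)
          = e '' ((Ux α ∩ f ⁻¹' (univ \ ⋃ β' < β, Vy β')) ∩ OX)
        rw [hXeq]
      have hGδ2 : ∀ β, β < l → IsGδ (V2 β) := by
        intro β hβ
        obtain ⟨Wy, hWy, hVyeq⟩ := hVyopen β
        obtain ⟨OXα, hOXα, hUxeq⟩ := hUxopen α
        have hgV := (hPy β hβ).1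
        have hfgV := (hPy β hβ).2
        obtain ⟨O₂, hO₂, hO₂eq⟩ := (continuousOn_iff'.1 hgV) _ (hAxclosed α).isOpen_compl
        obtain ⟨O₃, hO₃, hO₃eq⟩ := (continuousOn_iff'.1 hgV) OXα hOXα
        set S : Set Y := Vy β ∩ g ⁻¹' (Ux α) with hSdef
        have hSeq : S = ((univ \ ⋃ o' < β, Vy o') ∩ O₂ᶜ) ∩ (Wy ∩ O₃) := by
          ext y
          simp only [hSdef, mem_inter_iff, mem_preimage, mem_compl_iff]
          constructor
          · rintro ⟨hyV, hyU⟩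
            have hyBW : y ∈ (univ \ ⋃ o' < β, Vy o') ∩ Wy := by rw [← hVyeq]; exact hyV
            have hgyA : g y ∈ Ux α := hyU
            rw [hUxeq] at hgyA
            refine ⟨⟨hyBW.1, fun hyO₂ => ?_⟩, hyBW.2, ?_⟩
            · have : y ∈ g ⁻¹' (univ \ ⋃ o' < α, Ux o')ᶜ ∩ Vy β := by
                rw [hO₂eq]; exact ⟨hyO₂, hyV⟩
              exact this.1 hgyA.1
            · have hx4 : y ∈ O₃ ∩ Vy β := by rw [← hO₃eq]; exact ⟨hgyA.2, hyV⟩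
              exact hx4.1
          · rintro ⟨⟨hyB, hynO₂⟩, hyW, hyO₃⟩
            have hyV : y ∈ Vy β := by rw [hVyeq]; exact ⟨hyB, hyW⟩
            have hgyO : g y ∈ OXα := by
              have : y ∈ g ⁻¹' OXα ∩ Vy β := by rw [hO₃eq]; exact ⟨hyO₃, hyV⟩
              exact this.1
            have hgyA : g y ∈ univ \ ⋃ o' < α, Ux o' := by
              by_contra hcon
              have : y ∈ g ⁻¹' (univ \ ⋃ o' < α, Ux o')ᶜ ∩ Vy β := ⟨hcon, hyV⟩
              rw [hO₂eq] at this
              exact hynO₂ this.1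
            exact ⟨hyV, by rw [hUxeq]; exact ⟨hgyA, hgyO⟩⟩
        have hSGδ : IsGδ S := by
          rw [hSeq]
          exact (((hByclosed β).inter hO₂.isClosed_compl).isGδ).inter ((hWy.inter hO₃).isGδ)
        haveI : PolishSpace (↥S) := wh_isGδ_polishSpace hSGδ
        set T : Set X := g '' Vy β with hT
        have hgScont : ContinuousOn g S := hgV.mono inter_subset_left
        have hψcont : Continuous (S.restrict g) := continuousOn_iff_continuous_restrict.1 hgScont
        set ψ : ↥S → ↥T := fun q => ⟨g q.1, ⟨q.1, q.2.1, rfl⟩⟩ with hψ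
        have hψcont' : Continuous ψ := hψcont.subtype_mk _
        have hχcont : Continuous (T.restrict f) := continuousOn_iff_continuous_restrict.1 hfgV
        have hcomp : (T.restrict f) ∘ ψ = (Subtype.val : ↥S → Y) := funext fun q => hfg q.1
        have hψind : IsInducing ψ := .of_comp hψcont' hχcont (hcomp ▸ IsInducing.subtypeVal)
        have hψinj : Function.Injective ψ := fun a b hab =>
          Subtype.ext (hginj (congrArg Subtype.val hab))
        have hφemb : IsEmbedding (fun q : ↥S => e (g q.1)) :=
          (he.comp IsEmbedding.subtypeVal).comp ⟨hψind, hψinj⟩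
        have hrange : range (fun q : ↥S => e (g q.1)) = V2 β := by
          have h1 : range (fun q : ↥S => e (g q.1)) = (fun y => e (g y)) '' S :=
            (Set.image_eq_range (fun y => e (g y)) S).symm
          have h2 : (fun y => e (g y)) '' S = e '' (g '' S) := by
            rw [Set.image_image]
          have h3 : g '' S = Ux α ∩ f ⁻¹' Vy β := by
            rw [hSdef, Set.image_inter_preimage, hgimg, inter_comm]
          rw [h1, h2, h3, hV2]
        rw [← hrange]
        exact wh_isGδ_range_of_embedding hφemb
      have := wh_isGδ_scattered l hlc V2 hopen2 hGδ2
      rwa [hcover2] at this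
    -- Step 6: the range of e is Gδ in M
    have hRangeGδ : IsGδ (range e) := by
      set V3 : Ordinal.{u} → Set M := fun o => e '' Ux o with hV3
      have hcover3 : (⋃ o < m, V3 o) = range e := by
        rw [hV3, ← Set.image_iUnion₂, hUxcover, Set.image_univ]
      have hopen3 : ∀ o, ∃ W, IsOpen W ∧
          V3 o = ((⋃ o' < m, V3 o') \ ⋃ o' < o, V3 o') ∩ W := by
        intro o
        obtain ⟨OX, hOX, hUxeq⟩ := hUxopen o
        obtain ⟨WM, hWM, hWMeq⟩ := (he.isInducing.isOpen_iff).1 hOX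
        refine ⟨WM, hWM, ?_⟩
        rw [hcover3, hV3]
        have h1 : range e \ (⋃ o' < o, e '' Ux o') = e '' (univ \ ⋃ o' < o, Ux o') := by
          rw [← Set.image_iUnion₂, ← Set.image_univ (f := e), ← Set.image_diff he.injective]
        rw [h1, ← Set.image_inter_preimage, hWMeq, ← hUxeq]
      have := wh_isGδ_scattered m hmc V3 hopen3 (fun o ho => keyGδ o ho)
      rwa [hcover3] at this
    -- Step 7: conclude
    haveI : PolishSpace (↥(range e)) := wh_isGδ_polishSpace hRangeGδ
    set e2 : X → ↥(range e) := fun x => ⟨e x, mem_range_self x⟩ with he2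
    have hce : IsClosedEmbedding e2 := by
      have hcont : Continuous e2 := he.continuous.subtype_mk _
      have hind : IsInducing e2 := .of_comp hcont continuous_subtype_val he.isInducing
      have hinj : Function.Injective e2 := fun a b hab =>
        he.injective (congrArg Subtype.val hab)
      have hsurj : range e2 = univ := by
        apply eq_univ_of_forall
        rintro ⟨y, x, hx⟩
        exact ⟨x, Subtype.ext hx⟩
      exact ⟨⟨hind, hinj⟩, hsurj ▸ isClosed_univ⟩
    exact hce.polishSpace
end
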